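/- arXiv:2102.08276 — 4 statements merged into one kernel-verified Lean document; each statement's English description precedes it below -/
import Mathlib

section
/- Let (X,d) be a DDR finite metric space with orthonormal polynomials Φ_0,…,Φ_N (N = N(X)) for ⟨·,·⟩_X, and D ⊆ X nonempty with frequencies f_k and dual frequencies f̂_i = Σ_{k=0}^n Φ_i(k) f_k. For t ∈ [1..N], D is a t-design (i.e., E(a_D^i) = E(a_X^i) for i = 1,…,t, where a_D is the distance random variable on uniformly random pairs of D) if and only if f̂_i = 0 for i = 1,…,t. -/
open Polynomial

/-- `D ⊆ X` is a `t`-design iff its dual frequencies `f̂_1, …, f̂_t` all vanish. -/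
theorem design_iff_dual_frequencies_vanish {X : Type*} [Fintype X] [Nonempty X]
    (d : X → X → ℕ) (n : ℕ)
    (hsymm : ∀ x y, d x y = d y x)
    (hzero : ∀ x y, d x y = 0 ↔ x = y)
    (htri : ∀ x y z, d x y ≤ d x z + d z y)
    (hdiam : ∀ x y, d x y ≤ n)
    (v : ℕ → ℕ)
    (hDDR : ∀ x i, (Finset.univ.filter fun y => d x y = i).card = v i)
    (N : ℕ) (hN : N ≤ n)
    (Φ : ℕ → Polynomial ℝ)
    (hdeg : ∀ i ≤ N, (Φ i).degree = i)
    (horth : ∀ i ≤ N, ∀ j ≤ N,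
      (1 / (Fintype.card X : ℝ)) * ∑ k ∈ Finset.range (n + 1),
        (v k : ℝ) * (Φ i).eval (k : ℝ) * (Φ j).eval (k : ℝ) = if i = j then 1 else 0)
    (D : Finset X) (hD : D.Nonempty)
    (f : ℕ → ℝ)
    (hf : ∀ k, f k = ((D ×ˢ D).filter fun p => d p.1 p.2 = k).card / (D.card : ℝ) ^ 2)
    (fhat : ℕ → ℝ)
    (hfhat : ∀ i, fhat i = ∑ k ∈ Finset.range (n + 1), (Φ i).eval (k : ℝ) * f k)
    (t : ℕ) (ht1 : 1 ≤ t) (htN : t ≤ N) :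
    ((∀ i, 1 ≤ i → i ≤ t →
        ∑ j ∈ Finset.range (n + 1), f j * (j : ℝ) ^ i
          = ∑ j ∈ Finset.range (n + 1), ((v j : ℝ) / Fintype.card X) * (j : ℝ) ^ i)
      ↔ (∀ i, 1 ≤ i → i ≤ t → fhat i = 0)) := by
  classical
  set c : ℝ := (Fintype.card X : ℝ) with hc
  have hc0 : (0 : ℝ) < c := by
    simpa [hc] using (Nat.cast_pos.mpr (Fintype.card_pos (α := X)) : (0 : ℝ) < Fintype.card X)
  obtain ⟨x0⟩ := ‹Nonempty X›
  -- sum of v k is |X|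
  have hvsum : ∑ k ∈ Finset.range (n + 1), (v k : ℝ) = c := by
    have h := Finset.card_eq_sum_card_fiberwise
      (f := fun y => d x0 y) (s := (Finset.univ : Finset X)) (t := Finset.range (n + 1))
      (fun y _ => Finset.mem_range.mpr (Nat.lt_succ_of_le (hdiam x0 y)))
    simp only [hDDR x0] at h
    rw [Finset.card_univ] at h
    rw [hc, h]; push_cast; ring
  -- sum of f k is 1
  have hDcard : (0 : ℝ) < (D.card : ℝ) := by exact_mod_cast Finset.card_pos.mpr hD
  have hfsum : ∑ k ∈ Finset.range (n + 1), f k = 1 := by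
    have h := Finset.card_eq_sum_card_fiberwise
      (f := fun p : X × X => d p.1 p.2) (s := D ×ˢ D) (t := Finset.range (n + 1))
      (fun p _ => Finset.mem_range.mpr (Nat.lt_succ_of_le (hdiam p.1 p.2)))
    rw [Finset.card_product] at h
    have h2 : ((D.card : ℝ)) ^ 2 = ∑ k ∈ Finset.range (n + 1),
        (((D ×ˢ D).filter fun p => d p.1 p.2 = k).card : ℝ) := by
      rw [sq]; exact_mod_cast h
    simp only [hf]
    rw [← Finset.sum_div, ← h2, div_self (by positivity)]
  -- the signed measure g
  set g : ℕ → ℝ := fun k => f k - (v k : ℝ) / c with hg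
  have hg0 : ∑ k ∈ Finset.range (n + 1), g k = 0 := by
    simp only [hg, Finset.sum_sub_distrib, ← Finset.sum_div, hvsum, hfsum]
    rw [div_self (ne_of_gt hc0)]
    ring
  -- Φ 0 is a nonzero constant
  set a : ℝ := (Φ 0).coeff 0 with ha
  have hΦ0C : Φ 0 = C a := Polynomial.eq_C_of_degree_le_zero
    (le_of_eq (by simpa using hdeg 0 (Nat.zero_le N)))
  have ha0 : a ≠ 0 := by
    intro h
    have := horth 0 (Nat.zero_le N) 0 (Nat.zero_le N)
    simp [hΦ0C, h] at this
  -- orthogonality with Φ 0 gives ∑ v k Φ i k = 0 for i ≥ 1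
  have horthi0 : ∀ i, 1 ≤ i → i ≤ N →
      ∑ k ∈ Finset.range (n + 1), (v k : ℝ) * (Φ i).eval (k : ℝ) = 0 := by
    intro i h1 hiN
    have h := horth i hiN 0 (Nat.zero_le N)
    rw [if_neg (by omega)] at h
    simp only [hΦ0C, Polynomial.eval_C] at h
    have h' : (∑ k ∈ Finset.range (n + 1), (v k : ℝ) * (Φ i).eval (k : ℝ)) * a = 0 := by
      have := mul_eq_zero.mp h
      rcases this with h | h
      · exfalso; have : (1 : ℝ) / c ≠ 0 := by positivity
        exact this h
      · rw [Finset.sum_mul]; exact h ▸ (Finset.sum_congr rfl fun k _ => by ring)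
    exact (mul_eq_zero.mp h').resolve_right ha0
  -- fhat i in terms of g
  have hfhatg : ∀ i, 1 ≤ i → i ≤ N →
      fhat i = ∑ k ∈ Finset.range (n + 1), g k * (Φ i).eval (k : ℝ) := by
    intro i h1 hiN
    rw [hfhat i]
    have : ∑ k ∈ Finset.range (n + 1), g k * (Φ i).eval (k : ℝ)
        = ∑ k ∈ Finset.range (n + 1), (Φ i).eval (k : ℝ) * f k
          - (1 / c) * ∑ k ∈ Finset.range (n + 1), (v k : ℝ) * (Φ i).eval (k : ℝ) := by
      rw [Finset.mul_sum, ← Finset.sum_sub_distrib]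
      exact Finset.sum_congr rfl fun k _ => by simp only [hg]; ring
    rw [this, horthi0 i h1 hiN, mul_zero, sub_zero]
  -- the moments
  set S : ℕ → ℝ := fun m => ∑ k ∈ Finset.range (n + 1), g k * (k : ℝ) ^ m with hS
  have hS0 : S 0 = 0 := by simpa [hS] using hg0
  -- evaluation against g of a polynomial all of whose relevant moments vanish
  have hL : ∀ p : Polynomial ℝ, (∀ m, m ≤ p.natDegree → S m = 0) →
      ∑ k ∈ Finset.range (n + 1), g k * p.eval (k : ℝ) = 0 := by
    intro p hp
    have : ∑ k ∈ Finset.range (n + 1), g k * p.eval (k : ℝ)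
        = ∑ m ∈ Finset.range (p.natDegree + 1), p.coeff m * S m := by
      simp only [Polynomial.eval_eq_sum_range, Finset.mul_sum, hS]
      rw [Finset.sum_comm]
      exact Finset.sum_congr rfl fun m _ => Finset.sum_congr rfl fun k _ => by ring
    rw [this]
    exact Finset.sum_eq_zero fun m hm => by
      rw [hp m (Nat.lt_succ_iff.mp (Finset.mem_range.mp hm)), mul_zero]
  -- moment condition ↔ S i = 0
  have hSiff : ∀ m,
      (∑ j ∈ Finset.range (n + 1), f j * (j : ℝ) ^ m
        = ∑ j ∈ Finset.range (n + 1), ((v j : ℝ) / c) * (j : ℝ) ^ m) ↔ S m = 0 := by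
    intro m
    have : S m = ∑ j ∈ Finset.range (n + 1), f j * (j : ℝ) ^ m
        - ∑ j ∈ Finset.range (n + 1), ((v j : ℝ) / c) * (j : ℝ) ^ m := by
      rw [← Finset.sum_sub_distrib]
      exact Finset.sum_congr rfl fun k _ => by simp only [hg]; ring
    rw [this, sub_eq_zero]
  constructor
  · intro hmom i h1 hit
    have hnd : (Φ i).natDegree = i :=
      Polynomial.natDegree_eq_of_degree_eq_some (hdeg i (le_trans hit htN))
    rw [hfhatg i h1 (le_trans hit htN)]
    refine hL (Φ i) fun m hm => ?_
    rcases Nat.eq_zero_or_pos m with h0 | h1'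
    · exact h0 ▸ hS0
    · exact (hSiff m).mp (hmom m h1' (le_trans (hnd ▸ hm) hit))
  · intro hhat
    have hSall : ∀ i, i ≤ t → S i = 0 := by
      intro i
      induction i using Nat.strong_induction_on with
      | _ i ih =>
        intro hit
        rcases Nat.eq_zero_or_pos i with h0 | h1
        · exact h0 ▸ hS0
        · have hiN : i ≤ N := le_trans hit htN
          have hΦne : Φ i ≠ 0 := by
            intro h
            have := hdeg i hiN
            rw [h, Polynomial.degree_zero] at this
            exact absurd this (by simp)
          set ci : ℝ := (Φ i).leadingCoeff with hci
          have hcine : ci ≠ 0 := Polynomial.leadingCoeff_ne_zero.mpr hΦne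
          set r : Polynomial ℝ := Φ i - C ci * Polynomial.X ^ i with hr
          have hrdeg : r.degree < (i : WithBot ℕ) := by
            rw [hr]
            have hd1 : (Φ i).degree = (C ci * Polynomial.X ^ i).degree := by
              rw [Polynomial.degree_C_mul_X_pow i hcine, hdeg i hiN]
            have hlc : (Φ i).leadingCoeff = (C ci * Polynomial.X ^ i).leadingCoeff := by
              rw [Polynomial.leadingCoeff_C_mul_X_pow]
            calc (Φ i - C ci * Polynomial.X ^ i).degree < (Φ i).degree :=
                  Polynomial.degree_sub_lt hd1 hΦne hlc
              _ = (i : WithBot ℕ) := hdeg i hiN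
          have hrnat : r.natDegree < i := by
            rcases eq_or_ne r 0 with h | h
            · rw [h, Polynomial.natDegree_zero]; exact h1
            · exact (Polynomial.natDegree_lt_iff_degree_lt h).mpr (by exact_mod_cast hrdeg)
          have hLr : ∑ k ∈ Finset.range (n + 1), g k * r.eval (k : ℝ) = 0 :=
            hL r fun m hm => ih m (lt_of_le_of_lt hm hrnat)
              (le_trans (le_of_lt (lt_of_le_of_lt hm hrnat)) hit)
          have hfe : fhat i = ci * S i + ∑ k ∈ Finset.range (n + 1), g k * r.eval (k : ℝ) := by
            rw [hfhatg i h1 hiN, hS]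
            simp only [Finset.mul_sum, ← Finset.sum_add_distrib]
            refine Finset.sum_congr rfl fun k _ => ?_
            have : (Φ i).eval (k : ℝ) = ci * (k : ℝ) ^ i + r.eval (k : ℝ) := by
              simp [hr]
            rw [this]; ring
          have h0 : fhat i = 0 := hhat i h1 hit
          rw [h0, hLr, add_zero] at hfe
          exact (mul_eq_zero.mp hfe.symm).resolve_left hcine
    intro i h1 hit
    exact (hSiff i).mpr (hSall i hit)
end

section
/- Let D be a t-design in a DDR finite metric space (X,d) with t ≤ N(X), κ = ⌊t/2⌋, and let λ(x) = (Σ_{i=0}^κ Φ_i(x)²)⁻¹ be the Christoffel function for the orthonormal polynomials Φ_i w.r.t. ⟨·,·⟩_X. Then for all x, |F_D(x) − F_X(x)| ≤ λ(x), where F_D(x) = Σ_{i ≤ x} f_i is the cumulative distribution function of distances in D. -/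
open Polynomial Finset

noncomputable section MSproof

/-- Rolle for polynomials. -/
lemma MS_poly_rolle (p : Polynomial ℝ) {a b : ℝ} (hab : a < b)
    (h : p.eval a = p.eval b) :
    ∃ c, a < c ∧ c < b ∧ (derivative p).eval c = 0 := by
  obtain ⟨c, hc, hc0⟩ := exists_deriv_eq_zero hab
    ((p.continuous).continuousOn (s := Set.Icc a b)) h
  exact ⟨c, hc.1, hc.2, by rwa [Polynomial.deriv] at hc0⟩

/-- Mean value for polynomials. -/
lemma MS_poly_mvt (p : Polynomial ℝ) {a b : ℝ} (hab : a < b) :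
    ∃ c, a < c ∧ c < b ∧ (derivative p).eval c = (p.eval b - p.eval a) / (b - a) := by
  obtain ⟨c, hc, hc0⟩ := exists_deriv_eq_slope (fun y => p.eval y) hab
    ((p.continuous).continuousOn)
    (fun y _ => (p.differentiable y).differentiableWithinAt)
  exact ⟨c, hc.1, hc.2, by rwa [Polynomial.deriv] at hc0⟩

private lemma MS_split {Z : Finset ℝ} {y : ℝ} (hy : ∀ z ∈ Z, z ≠ y) :
    ∏ z ∈ Z, (y - z) =
      (∏ z ∈ Z.filter (fun z => y < z), (y - z)) *
      ∏ z ∈ Z.filter (fun z => z < y), (y - z) := by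
  classical
  have hsplit : Z = Z.filter (fun z => y < z) ∪ Z.filter (fun z => z < y) := by
    ext z; simp only [mem_union, mem_filter]
    constructor
    · intro hz
      rcases lt_trichotomy y z with h1 | h1 | h1
      · exact Or.inl ⟨hz, h1⟩
      · exact absurd h1.symm (hy z hz)
      · exact Or.inr ⟨hz, h1⟩
    · rintro (⟨hz, _⟩ | ⟨hz, _⟩) <;> exact hz
  have hdisj : Disjoint (Z.filter (fun z => y < z)) (Z.filter (fun z => z < y)) := by
    rw [Finset.disjoint_left]
    intro z h1 h2
    rw [mem_filter] at h1 h2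
    exact absurd (h1.2.trans h2.2) (lt_irrefl y)
  conv_lhs => rw [hsplit]
  exact Finset.prod_union hdisj

private lemma MS_upper_sign {Z : Finset ℝ} {y : ℝ} :
    ∏ z ∈ Z.filter (fun z => y < z), (y - z)
      = (-1 : ℝ) ^ (Z.filter (fun z => y < z)).card
        * ∏ z ∈ Z.filter (fun z => y < z), (z - y) := by
  rw [← Finset.prod_const, ← Finset.prod_mul_distrib]
  exact Finset.prod_congr rfl (fun z _ => by ring)

lemma MS_prod_pos_of_even {Z : Finset ℝ} {y : ℝ} (hy : ∀ z ∈ Z, z ≠ y)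
    (h : Even (Z.filter (fun z => y < z)).card) : 0 < ∏ z ∈ Z, (y - z) := by
  classical
  rw [MS_split hy]
  have h1 : 0 < ∏ z ∈ Z.filter (fun z => z < y), (y - z) :=
    Finset.prod_pos (fun z hz => sub_pos.mpr (mem_filter.mp hz).2)
  have h2 : 0 < ∏ z ∈ Z.filter (fun z => y < z), (y - z) := by
    rw [MS_upper_sign, h.neg_one_pow, one_mul]
    exact Finset.prod_pos (fun z hz => sub_pos.mpr (mem_filter.mp hz).2)
  exact mul_pos h2 h1

lemma MS_prod_neg_of_odd {Z : Finset ℝ} {y : ℝ} (hy : ∀ z ∈ Z, z ≠ y)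
    (h : Odd (Z.filter (fun z => y < z)).card) : ∏ z ∈ Z, (y - z) < 0 := by
  classical
  rw [MS_split hy]
  have h1 : 0 < ∏ z ∈ Z.filter (fun z => z < y), (y - z) :=
    Finset.prod_pos (fun z hz => sub_pos.mpr (mem_filter.mp hz).2)
  have h2 : ∏ z ∈ Z.filter (fun z => y < z), (y - z) < 0 := by
    rw [MS_upper_sign, h.neg_one_pow, neg_one_mul, neg_neg_iff_pos.symm.symm]
    have := Finset.prod_pos (s := Z.filter (fun z => y < z))
      (f := fun z => z - y) (fun z hz => sub_pos.mpr (mem_filter.mp hz).2)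
    linarith
  exact mul_neg_of_neg_of_pos h2 h1

/-- Factorization of a polynomial with the maximal number of distinct real roots. -/
lemma MS_factor {p : Polynomial ℝ} {Z : Finset ℝ} (hp : p ≠ 0)
    (hroots : ∀ z ∈ Z, p.eval z = 0) (hdeg : p.natDegree ≤ Z.card) :
    ∃ c : ℝ, c ≠ 0 ∧ p = C c * ∏ z ∈ Z, (X - C z) := by
  classical
  have hdvd : (∏ z ∈ Z, (X - C z)) ∣ p := by
    have hle : Z.val ≤ p.roots := by
      rw [Multiset.le_iff_count]
      intro z
      by_cases hz : z ∈ Z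
      · have h1 : Multiset.count z Z.val = 1 :=
          Multiset.count_eq_one_of_mem Z.nodup (by exact hz)
        rw [h1, Polynomial.count_roots]
        exact (Polynomial.rootMultiplicity_pos hp).mpr (hroots z hz)
      · have h0 : Multiset.count z Z.val = 0 := by
          rw [Multiset.count_eq_zero]
          exact fun hc => hz hc
        rw [h0]; exact Nat.zero_le _
    calc (∏ z ∈ Z, (X - C z)) = (Z.val.map (fun z => X - C z)).prod := by
          rw [Finset.prod_eq_multiset_prod]
      _ ∣ (p.roots.map (fun z => X - C z)).prod :=
          Multiset.prod_dvd_prod_of_le (Multiset.map_le_map hle)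
      _ ∣ p := prod_multiset_X_sub_C_dvd p
  obtain ⟨q, hq⟩ := hdvd
  have hprodmonic : (∏ z ∈ Z, (X - C z)).Monic :=
    monic_prod_of_monic _ _ (fun z _ => monic_X_sub_C z)
  have hq0 : q ≠ 0 := by
    intro h; rw [h, mul_zero] at hq; exact hp hq
  have hdegprod : (∏ z ∈ Z, (X - C z)).natDegree = Z.card := by
    rw [Polynomial.natDegree_prod _ _ (fun z _ => X_sub_C_ne_zero z)]
    simp [Polynomial.natDegree_X_sub_C]
  have hqdeg : q.natDegree = 0 := by
    have := Polynomial.natDegree_mul hprodmonic.ne_zero hq0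
    rw [← hq, hdegprod] at this
    omega
  have hqC : q = C (q.coeff 0) := Polynomial.eq_C_of_natDegree_le_zero (le_of_eq hqdeg)
  refine ⟨q.coeff 0, ?_, ?_⟩
  · intro h
    rw [hqC, h, map_zero] at hq0; exact hq0 rfl
  · conv_lhs => rw [hq, hqC]
    ring


lemma MS_strictMonoOn (p : Polynomial ℝ) {a b : ℝ}
    (h : ∀ w, a < w → w < b → 0 < (derivative p).eval w) :
    StrictMonoOn (fun y => p.eval y) (Set.Icc a b) := by
  apply strictMonoOn_of_deriv_pos (convex_Icc a b) (p.continuous.continuousOn)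
  intro w hw
  rw [interior_Icc] at hw
  rw [Polynomial.deriv]
  exact h w hw.1 hw.2

lemma MS_strictAntiOn (p : Polynomial ℝ) {a b : ℝ}
    (h : ∀ w, a < w → w < b → (derivative p).eval w < 0) :
    StrictAntiOn (fun y => p.eval y) (Set.Icc a b) := by
  apply strictAntiOn_of_deriv_neg (convex_Icc a b) (p.continuous.continuousOn)
  intro w hw
  rw [interior_Icc] at hw
  rw [Polynomial.deriv]
  exact h w hw.1 hw.2

/-- counting a filter over an injective image -/
lemma MS_count_image {k : ℕ} (φ : Fin k → ℝ) (hφ : Function.Injective φ)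
    (P : ℝ → Prop) [DecidablePred P] :
    (((Finset.univ : Finset (Fin k)).image φ).filter P).card
      = ((Finset.univ : Finset (Fin k)).filter (fun i => P (φ i))).card := by
  rw [Finset.filter_image]
  exact Finset.card_image_of_injective _ hφ

lemma MS_card_ici {k : ℕ} (j : Fin k) :
    ((Finset.univ : Finset (Fin k)).filter (fun i => j ≤ i)).card = k - (j : ℕ) := by
  have : (Finset.univ : Finset (Fin k)).filter (fun i => j ≤ i) = Finset.Ici j := by
    ext i; simp
  rw [this, Fin.card_Ici]

lemma MS_card_ioi {k : ℕ} (j : Fin k) :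
    ((Finset.univ : Finset (Fin k)).filter (fun i => j < i)).card = k - 1 - (j : ℕ) := by
  have : (Finset.univ : Finset (Fin k)).filter (fun i => j < i) = Finset.Ioi j := by
    ext i; simp
  rw [this, Fin.card_Ioi]

lemma MS_card_all {k : ℕ} (P : Fin k → Prop) [DecidablePred P] (h : ∀ i, P i) :
    ((Finset.univ : Finset (Fin k)).filter P).card = k := by
  rw [Finset.filter_true_of_mem (fun i _ => h i)]
  simp

lemma MS_card_none {k : ℕ} (P : Fin k → Prop) [DecidablePred P] (h : ∀ i, ¬ P i) :
    ((Finset.univ : Finset (Fin k)).filter P).card = 0 := by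
  rw [Finset.filter_false_of_mem (fun i _ => h i)]
  simp

set_option maxHeartbeats 2000000 in
/-- The Markov–Stieltjes majorant polynomial. -/
lemma MS_majorant (x : ℝ) (LA B : Finset ℝ)
    (hLA : ∀ a ∈ LA, a < x) (hB : ∀ b ∈ B, x < b) :
    ∃ R : Polynomial ℝ, R.natDegree ≤ 2 * (LA.card + B.card) ∧
      (∀ y : ℝ, y ≤ x → 1 ≤ R.eval y) ∧
      (∀ y : ℝ, 0 ≤ R.eval y) ∧
      (∀ a ∈ LA, R.eval a = 1) ∧ R.eval x = 1 ∧ (∀ b ∈ B, R.eval b = 0) := by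
  classical
  rcases B.eq_empty_or_nonempty with hBe | hBne
  · refine ⟨1, by simp, by simp, by simp, by simp, by simp, ?_⟩
    subst hBe; simp
  obtain ⟨u'', hu''⟩ : ∃ k, B.card = k + 1 :=
    ⟨B.card - 1, (Nat.succ_pred_eq_of_pos (Finset.card_pos.mpr hBne)).symm⟩
  set m' := LA.card with hm'
  -- the polynomials
  set A : Polynomial ℝ := ∏ a ∈ LA, (X - C a) with hA
  set V : Polynomial ℝ := ∏ b ∈ B, (X - C b) with hV
  set W₁ : Polynomial ℝ := (X - C x) * A ^ 2 with hW₁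
  set W₂ : Polynomial ℝ := V ^ 2 with hW₂
  have hcop : IsCoprime W₁ W₂ := by
    have base : ∀ a b : ℝ, a ≠ b → IsCoprime (X - C a : Polynomial ℝ) (X - C b) :=
      fun a b hab => Polynomial.isCoprime_X_sub_C_of_isUnit_sub
        ((sub_ne_zero_of_ne hab).isUnit)
    have h1 : ∀ b' ∈ B, IsCoprime W₁ (X - C b') := by
      intro b' hb'
      apply IsCoprime.mul_left
      · exact base x b' (ne_of_lt (hB b' hb'))
      · exact (IsCoprime.prod_left
          (fun a ha => base a b' (ne_of_lt ((hLA a ha).trans (hB b' hb'))))).pow_left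
    exact ((IsCoprime.prod_right h1).pow_right)
  obtain ⟨P, Q, hPQ⟩ := hcop
  have hAm : A.Monic := monic_prod_of_monic _ _ (fun a _ => monic_X_sub_C a)
  have hVm : V.Monic := monic_prod_of_monic _ _ (fun b _ => monic_X_sub_C b)
  have hW₁m : W₁.Monic := (monic_X_sub_C x).mul (hAm.pow 2)
  set S : Polynomial ℝ := Q %ₘ W₁ with hS
  set T : Polynomial ℝ := P + (Q /ₘ W₁) * W₂ with hT
  have hmod : S + W₁ * (Q /ₘ W₁) = Q := modByMonic_add_div Q W₁
  have key : W₂ * S + W₁ * T = 1 := by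
    linear_combination hPQ + W₂ * hmod
  set R : Polynomial ℝ := W₂ * S with hR
  set Ψ : Polynomial ℝ := W₁ * T with hΨ
  have hΨR : Ψ = 1 - R := by rw [hΨ, hR]; linear_combination key
  -- degrees
  have hAdeg : A.natDegree = m' := by
    rw [hA, Polynomial.natDegree_prod _ _ (fun a _ => X_sub_C_ne_zero a)]
    simp [Polynomial.natDegree_X_sub_C, hm']
  have hVdeg : V.natDegree = u'' + 1 := by
    rw [hV, Polynomial.natDegree_prod _ _ (fun b _ => X_sub_C_ne_zero b)]
    simp only [Polynomial.natDegree_X_sub_C]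
    rw [Finset.sum_const, smul_eq_mul, mul_one, hu'']
  have hW₁deg : W₁.natDegree = 2 * m' + 1 := by
    rw [hW₁, Polynomial.natDegree_mul (X_sub_C_ne_zero x) (pow_ne_zero 2 hAm.ne_zero),
      Polynomial.natDegree_X_sub_C, Polynomial.natDegree_pow, hAdeg]
    ring
  have hSdeg : S.natDegree ≤ 2 * m' := by
    by_cases h0 : S = 0
    · simp [h0]
    · have h1 := Polynomial.degree_modByMonic_lt Q hW₁m
      rw [← hS] at h1
      rw [Polynomial.degree_eq_natDegree hW₁m.ne_zero, hW₁deg] at h1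
      have h2 : S.natDegree < 2 * m' + 1 :=
        (Polynomial.natDegree_lt_iff_degree_lt h0).mpr (by exact_mod_cast h1)
      omega
  have hRdeg : R.natDegree ≤ 2 * (m' + (u'' + 1)) := by
    refine le_trans (Polynomial.natDegree_mul_le) ?_
    have : W₂.natDegree = 2 * (u'' + 1) := by
      rw [hW₂, Polynomial.natDegree_pow, hVdeg]
    omega
  have hΨdeg : Ψ.natDegree ≤ 2 * m' + 2 * u'' + 2 := by
    rw [hΨR]
    refine le_trans (Polynomial.natDegree_sub_le _ _) ?_
    simp only [Polynomial.natDegree_one]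
    omega
  have hdΨdeg : (derivative Ψ).natDegree ≤ 2 * m' + 2 * u'' + 1 :=
    le_trans (Polynomial.natDegree_derivative_le Ψ) (by omega)
  -- evaluation facts
  have hAev : ∀ a ∈ LA, A.eval a = 0 := by
    intro a ha
    rw [hA, Polynomial.eval_prod]
    exact Finset.prod_eq_zero ha (by simp)
  have hVev : ∀ b ∈ B, V.eval b = 0 := by
    intro b hb
    rw [hV, Polynomial.eval_prod]
    exact Finset.prod_eq_zero hb (by simp)
  have hΨx : Ψ.eval x = 0 := by rw [hΨ, Polynomial.eval_mul, hW₁]; simp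
  have hΨa : ∀ a ∈ LA, Ψ.eval a = 0 := by
    intro a ha
    rw [hΨ, Polynomial.eval_mul, hW₁, Polynomial.eval_mul, Polynomial.eval_pow, hAev a ha]
    ring
  have hΨLX : ∀ z ∈ insert x LA, Ψ.eval z = 0 := by
    intro z hz
    rcases Finset.mem_insert.mp hz with h | h
    · subst h; exact hΨx
    · exact hΨa z h
  have hRb : ∀ b ∈ B, R.eval b = 0 := by
    intro b hb
    rw [hR, Polynomial.eval_mul, hW₂, Polynomial.eval_pow, hVev b hb]
    ring
  have hΨb : ∀ b ∈ B, Ψ.eval b = 1 := by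
    intro b hb
    rw [hΨR, Polynomial.eval_sub, Polynomial.eval_one, hRb b hb]
    ring
  -- derivative evaluations at the nodes
  have hdΨa : ∀ a ∈ LA, (derivative Ψ).eval a = 0 := by
    intro a ha
    rw [hΨ, derivative_mul, hW₁, derivative_mul, Polynomial.derivative_pow]
    simp [hAev a ha]
  have hdΨb : ∀ b ∈ B, (derivative Ψ).eval b = 0 := by
    intro b hb
    have hd : derivative Ψ = - derivative R := by
      rw [hΨR]; simp
    rw [hd, Polynomial.eval_neg, hR, derivative_mul, hW₂, Polynomial.derivative_pow]
    simp [hVev b hb]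
  -- order structure on the lower nodes
  set LX := insert x LA with hLX
  have hxLA : x ∉ LA := fun h => lt_irrefl x (hLA x h)
  have hLXcard : LX.card = m' + 1 := by rw [hLX, Finset.card_insert_of_notMem hxLA]
  set l : Fin (m' + 1) → ℝ := fun i => LX.orderEmbOfFin hLXcard i with hl
  have hlmono : StrictMono l := (LX.orderEmbOfFin hLXcard).strictMono
  have hlmem : ∀ i, l i ∈ LX := fun i => Finset.orderEmbOfFin_mem _ _ _
  have hlle : ∀ i, l i ≤ x := by
    intro i
    rcases Finset.mem_insert.mp (hlmem i) with h | h
    · exact le_of_eq h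
    · exact le_of_lt (hLA _ h)
  have hlsurj : ∀ z ∈ LX, ∃ i, l i = z := by
    intro z hz
    have h1 : z ∈ Set.range (LX.orderEmbOfFin hLXcard) := by
      rw [Finset.range_orderEmbOfFin]
      exact_mod_cast hz
    obtain ⟨i, hi⟩ := h1
    exact ⟨i, hi⟩
  have hLXim : LX = Finset.univ.image l := by
    apply Finset.eq_of_subset_of_card_le
    · intro z hz
      obtain ⟨i, hi⟩ := hlsurj z hz
      exact Finset.mem_image.mpr ⟨i, Finset.mem_univ i, hi⟩
    · refine le_trans Finset.card_image_le ?_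
      simp [hLXcard]
  have hllast : l (Fin.last m') = x := by
    obtain ⟨i, hi⟩ := hlsurj x (Finset.mem_insert_self x LA)
    have h1 : l i ≤ l (Fin.last m') := hlmono.monotone (Fin.le_last i)
    exact le_antisymm (hlle _) (hi ▸ h1)
  -- order structure on the upper nodes
  have hBcard : B.card = u'' + 1 := hu''
  set bb : Fin (u'' + 1) → ℝ := fun i => B.orderEmbOfFin hBcard i with hbb
  have hbmono : StrictMono bb := (B.orderEmbOfFin hBcard).strictMono
  have hbmem : ∀ i, bb i ∈ B := fun i => Finset.orderEmbOfFin_mem _ _ _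
  have hbgt : ∀ i, x < bb i := fun i => hB _ (hbmem i)
  have hbsurj : ∀ z ∈ B, ∃ i, bb i = z := by
    intro z hz
    have h1 : z ∈ Set.range (B.orderEmbOfFin hBcard) := by
      rw [Finset.range_orderEmbOfFin]
      exact_mod_cast hz
    obtain ⟨i, hi⟩ := h1
    exact ⟨i, hi⟩
  have hBim : B = Finset.univ.image bb := by
    apply Finset.eq_of_subset_of_card_le
    · intro z hz
      obtain ⟨i, hi⟩ := hbsurj z hz
      exact Finset.mem_image.mpr ⟨i, Finset.mem_univ i, hi⟩
    · refine le_trans Finset.card_image_le ?_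
      simp [hBcard]
  -- Rolle points
  have hgapl : ∀ i : Fin m', ∃ c, l i.castSucc < c ∧ c < l i.succ ∧
      (derivative Ψ).eval c = 0 := by
    intro i
    exact MS_poly_rolle Ψ (hlmono (Fin.castSucc_lt_succ (i := i)))
      (by rw [hΨLX _ (hlmem i.castSucc), hΨLX _ (hlmem i.succ)])
  choose rr hrr1 hrr2 hrr3 using hgapl
  have hgapu : ∀ i : Fin u'', ∃ c, bb i.castSucc < c ∧ c < bb i.succ ∧
      (derivative Ψ).eval c = 0 := by
    intro i
    exact MS_poly_rolle Ψ (hbmono (Fin.castSucc_lt_succ (i := i)))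
      (by rw [hΨb _ (hbmem i.castSucc), hΨb _ (hbmem i.succ)])
  choose ss hss1 hss2 hss3 using hgapu
  have hrrx : ∀ i, rr i < x := fun i => lt_of_lt_of_le (hrr2 i) (hlle _)
  have hssx : ∀ i, x < ss i := fun i => lt_trans (hbgt _) (hss1 i)
  have hssb0 : ∀ i, bb 0 < ss i := fun i =>
    lt_of_le_of_lt (hbmono.monotone (Fin.zero_le _)) (hss1 i)
  have hrrinj : Function.Injective rr := by
    intro i j hij
    by_contra hne
    rcases lt_or_gt_of_ne hne with h | h
    · have : rr i < rr j :=
        lt_trans (lt_of_lt_of_le (hrr2 i)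
          (hlmono.monotone (by
            have hval := Fin.lt_def.mp h
            rw [Fin.le_def, Fin.val_succ, Fin.coe_castSucc]
            omega))) (hrr1 j)
      exact absurd hij (ne_of_lt this)
    · have : rr j < rr i :=
        lt_trans (lt_of_lt_of_le (hrr2 j)
          (hlmono.monotone (by
            have hval := Fin.lt_def.mp h
            rw [Fin.le_def, Fin.val_succ, Fin.coe_castSucc]
            omega))) (hrr1 i)
      exact absurd hij.symm (ne_of_lt this)
  have hssinj : Function.Injective ss := by
    intro i j hij
    by_contra hne
    rcases lt_or_gt_of_ne hne with h | h
    · have : ss i < ss j :=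
        lt_trans (lt_of_lt_of_le (hss2 i)
          (hbmono.monotone (by
            have hval := Fin.lt_def.mp h
            rw [Fin.le_def, Fin.val_succ, Fin.coe_castSucc]
            omega))) (hss1 j)
      exact absurd hij (ne_of_lt this)
    · have : ss j < ss i :=
        lt_trans (lt_of_lt_of_le (hss2 j)
          (hbmono.monotone (by
            have hval := Fin.lt_def.mp h
            rw [Fin.le_def, Fin.val_succ, Fin.coe_castSucc]
            omega))) (hss1 i)
      exact absurd hij.symm (ne_of_lt this)
  have hgapfreel : ∀ (i : Fin m') (z : ℝ), z ∈ LX →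
      ¬(l i.castSucc < z ∧ z < l i.succ) := by
    rintro i z hz ⟨h1, h2⟩
    obtain ⟨k, rfl⟩ := hlsurj z hz
    have hk1 : i.castSucc < k := hlmono.lt_iff_lt.mp h1
    have hk2 : k < i.succ := hlmono.lt_iff_lt.mp h2
    simp [Fin.lt_def] at hk1 hk2
    omega
  have hgapfreeu : ∀ (i : Fin u'') (z : ℝ), z ∈ B →
      ¬(bb i.castSucc < z ∧ z < bb i.succ) := by
    rintro i z hz ⟨h1, h2⟩
    obtain ⟨k, rfl⟩ := hbsurj z hz
    have hk1 : i.castSucc < k := hbmono.lt_iff_lt.mp h1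
    have hk2 : k < i.succ := hbmono.lt_iff_lt.mp h2
    simp [Fin.lt_def] at hk1 hk2
    omega
  have hrrnotLX : ∀ i, rr i ∉ LX := fun i hmem =>
    hgapfreel i (rr i) hmem ⟨hrr1 i, hrr2 i⟩
  have hssnotB : ∀ i, ss i ∉ B := fun i hmem =>
    hgapfreeu i (ss i) hmem ⟨hss1 i, hss2 i⟩
  -- the root set
  set RR : Finset ℝ := Finset.univ.image rr with hRRdef
  set SS : Finset ℝ := Finset.univ.image ss with hSSdef
  set Z : Finset ℝ := (LA ∪ RR) ∪ (B ∪ SS) with hZdef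
  have hRRmem : ∀ z ∈ RR, ∃ i, rr i = z := by
    intro z hz
    obtain ⟨i, _, hi⟩ := Finset.mem_image.mp hz
    exact ⟨i, hi⟩
  have hSSmem : ∀ z ∈ SS, ∃ i, ss i = z := by
    intro z hz
    obtain ⟨i, _, hi⟩ := Finset.mem_image.mp hz
    exact ⟨i, hi⟩
  have hlowZ : ∀ z ∈ LA ∪ RR, z < x := by
    intro z hz
    rcases Finset.mem_union.mp hz with h | h
    · exact hLA z h
    · obtain ⟨i, rfl⟩ := hRRmem z h; exact hrrx i
  have hupZ : ∀ z ∈ B ∪ SS, x < z := by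
    intro z hz
    rcases Finset.mem_union.mp hz with h | h
    · exact hB z h
    · obtain ⟨i, rfl⟩ := hSSmem z h; exact hssx i
  have hdisj1 : Disjoint LA RR := by
    rw [Finset.disjoint_left]
    intro z hz1 hz2
    obtain ⟨i, rfl⟩ := hRRmem z hz2
    exact hrrnotLX i (Finset.mem_insert_of_mem hz1)
  have hdisj2 : Disjoint B SS := by
    rw [Finset.disjoint_left]
    intro z hz1 hz2
    obtain ⟨i, rfl⟩ := hSSmem z hz2
    exact hssnotB i hz1
  have hdisj3 : Disjoint (LA ∪ RR) (B ∪ SS) := by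
    rw [Finset.disjoint_left]
    intro z hz1 hz2
    exact absurd (lt_trans (hlowZ z hz1) (hupZ z hz2)) (lt_irrefl z)
  have hRRcard : RR.card = m' := by
    rw [hRRdef, Finset.card_image_of_injective _ hrrinj, Finset.card_univ, Fintype.card_fin]
  have hSScard : SS.card = u'' := by
    rw [hSSdef, Finset.card_image_of_injective _ hssinj, Finset.card_univ, Fintype.card_fin]
  have hZcard : Z.card = 2 * m' + 2 * u'' + 1 := by
    rw [hZdef, Finset.card_union_of_disjoint hdisj3,
      Finset.card_union_of_disjoint hdisj1, Finset.card_union_of_disjoint hdisj2,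
      hRRcard, hSScard, hBcard, ← hm']
    ring
  have hZroot : ∀ z ∈ Z, (derivative Ψ).eval z = 0 := by
    intro z hz
    rcases Finset.mem_union.mp hz with h | h
    · rcases Finset.mem_union.mp h with h1 | h1
      · exact hdΨa z h1
      · obtain ⟨i, rfl⟩ := hRRmem z h1; exact hrr3 i
    · rcases Finset.mem_union.mp h with h1 | h1
      · exact hdΨb z h1
      · obtain ⟨i, rfl⟩ := hSSmem z h1; exact hss3 i
  have hdΨne : derivative Ψ ≠ 0 := by
    intro h
    have h0 : Ψ.natDegree = 0 := Polynomial.natDegree_eq_zero_of_derivative_eq_zero h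
    have hC : Ψ = C (Ψ.coeff 0) := Polynomial.eq_C_of_natDegree_le_zero (le_of_eq h0)
    have e1 : Ψ.eval x = Ψ.eval (bb 0) := by rw [hC]; simp
    rw [hΨx, hΨb _ (hbmem 0)] at e1
    exact zero_ne_one e1
  obtain ⟨c, hcne, hfac⟩ := MS_factor hdΨne hZroot (by omega)
  have hdΨev : ∀ w, (derivative Ψ).eval w = c * ∏ z ∈ Z, (w - z) := by
    intro w
    rw [hfac, Polynomial.eval_mul, Polynomial.eval_C, Polynomial.eval_prod]
    simp
  -- the leading constant is negative
  obtain ⟨y₀, hy₀1, hy₀2, hy₀3⟩ := MS_poly_mvt Ψ (hbgt 0)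
  have hy₀pos : 0 < (derivative Ψ).eval y₀ := by
    rw [hy₀3, hΨb _ (hbmem 0), hΨx]
    have h1 : (0:ℝ) < bb 0 - x := sub_pos.mpr (hbgt 0)
    positivity
  have hy₀ne : ∀ z ∈ Z, z ≠ y₀ := by
    intro z hz
    rcases Finset.mem_union.mp hz with h | h
    · exact ne_of_lt (lt_trans (hlowZ z h) hy₀1)
    · refine ne_of_gt ?_
      rcases Finset.mem_union.mp h with h1 | h1
      · obtain ⟨i, rfl⟩ := hbsurj z h1
        exact lt_of_lt_of_le hy₀2 (hbmono.monotone (Fin.zero_le i))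
      · obtain ⟨i, rfl⟩ := hSSmem z h1
        exact lt_trans hy₀2 (hssb0 i)
  have hy₀filter : Z.filter (fun z => y₀ < z) = B ∪ SS := by
    ext z
    simp only [Finset.mem_filter]
    constructor
    · rintro ⟨hz, hlt⟩
      rcases Finset.mem_union.mp hz with h | h
      · exact absurd (lt_trans (hlowZ z h) hy₀1) (not_lt.mpr (le_of_lt hlt))
      · exact h
    · intro h
      refine ⟨Finset.mem_union.mpr (Or.inr h), ?_⟩
      rcases Finset.mem_union.mp h with h1 | h1
      · obtain ⟨i, rfl⟩ := hbsurj z h1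
        exact lt_of_lt_of_le hy₀2 (hbmono.monotone (Fin.zero_le i))
      · obtain ⟨i, rfl⟩ := hSSmem z h1
        exact lt_trans hy₀2 (hssb0 i)
  have hcneg : c < 0 := by
    have hodd : Odd ((Z.filter (fun z => y₀ < z)).card) := by
      rw [hy₀filter, Finset.card_union_of_disjoint hdisj2, hBcard, hSScard]
      exact ⟨u'', by ring⟩
    have hneg := MS_prod_neg_of_odd hy₀ne hodd
    have hev := hdΨev y₀
    nlinarith [hy₀pos]
  have hup : ∀ w, (∀ z ∈ Z, z ≠ w) → Odd ((Z.filter (fun z => w < z)).card) →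
      0 < (derivative Ψ).eval w := by
    intro w h1 h2
    rw [hdΨev]
    exact mul_pos_of_neg_of_neg hcneg (MS_prod_neg_of_odd h1 h2)
  have hdown : ∀ w, (∀ z ∈ Z, z ≠ w) → Even ((Z.filter (fun z => w < z)).card) →
      (derivative Ψ).eval w < 0 := by
    intro w h1 h2
    rw [hdΨev]
    exact mul_neg_of_neg_of_pos hcneg (MS_prod_pos_of_even h1 h2)
  -- counting decomposition
  have hlinj : Function.Injective l := hlmono.injective
  have hbinj : Function.Injective bb := hbmono.injective
  have hcount : ∀ w : ℝ, (Z.filter (fun z => w < z)).card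
      = (LA.filter (fun z => w < z)).card + (RR.filter (fun z => w < z)).card
        + ((B.filter (fun z => w < z)).card + (SS.filter (fun z => w < z)).card) := by
    intro w
    have fsub : ∀ (s : Finset ℝ), s.filter (fun z => w < z) ⊆ s :=
      fun s => Finset.filter_subset _ _
    have d3 : Disjoint
        (LA.filter (fun z => w < z) ∪ RR.filter (fun z => w < z))
        (B.filter (fun z => w < z) ∪ SS.filter (fun z => w < z)) :=
      Finset.disjoint_of_subset_left
        (Finset.union_subset_union (fsub LA) (fsub RR))
        (Finset.disjoint_of_subset_right
          (Finset.union_subset_union (fsub B) (fsub SS)) hdisj3)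
    have d1 : Disjoint (LA.filter (fun z => w < z)) (RR.filter (fun z => w < z)) :=
      Finset.disjoint_of_subset_left (fsub LA)
        (Finset.disjoint_of_subset_right (fsub RR) hdisj1)
    have d2 : Disjoint (B.filter (fun z => w < z)) (SS.filter (fun z => w < z)) :=
      Finset.disjoint_of_subset_left (fsub B)
        (Finset.disjoint_of_subset_right (fsub SS) hdisj2)
    rw [hZdef, Finset.filter_union, Finset.filter_union, Finset.filter_union,
      Finset.card_union_of_disjoint d3,
      Finset.card_union_of_disjoint d1,
      Finset.card_union_of_disjoint d2]
  have hLAfc : ∀ w : ℝ, w < x → (LA.filter (fun z => w < z)).card + 1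
      = ((Finset.univ : Finset (Fin (m' + 1))).filter (fun i => w < l i)).card := by
    intro w hw
    have h1 : LX.filter (fun z => w < z) = insert x (LA.filter (fun z => w < z)) := by
      rw [hLX, Finset.filter_insert, if_pos hw]
    have h2 : (LX.filter (fun z => w < z)).card
        = (LA.filter (fun z => w < z)).card + 1 := by
      rw [h1, Finset.card_insert_of_notMem
        (fun hc => hxLA (Finset.mem_of_mem_filter _ hc))]
    rw [← h2, hLXim, MS_count_image l hlinj]
  have hRRfc : ∀ w : ℝ, (RR.filter (fun z => w < z)).card
      = ((Finset.univ : Finset (Fin m')).filter (fun i => w < rr i)).card := by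
    intro w
    rw [hRRdef, MS_count_image rr hrrinj]
  have hBfc : ∀ w : ℝ, (B.filter (fun z => w < z)).card
      = ((Finset.univ : Finset (Fin (u'' + 1))).filter (fun i => w < bb i)).card := by
    intro w
    rw [hBim, MS_count_image bb hbinj]
  have hSSfc : ∀ w : ℝ, (SS.filter (fun z => w < z)).card
      = ((Finset.univ : Finset (Fin u'')).filter (fun i => w < ss i)).card := by
    intro w
    rw [hSSdef, MS_count_image ss hssinj]
  -- claim 1 : Ψ ≤ 0 on (-∞, x]
  have hallgt : ∀ w : ℝ, w < l 0 → ∀ z ∈ Z, w < z := by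
    intro w hw z hz
    rcases Finset.mem_union.mp hz with h | h
    · rcases Finset.mem_union.mp h with h1 | h1
      · obtain ⟨k, rfl⟩ := hlsurj z (Finset.mem_insert_of_mem h1)
        exact lt_of_lt_of_le hw (hlmono.monotone (Fin.zero_le k))
      · obtain ⟨i, rfl⟩ := hRRmem z h1
        exact lt_trans (lt_of_lt_of_le hw (hlmono.monotone (Fin.zero_le _))) (hrr1 i)
    · exact lt_trans (lt_of_lt_of_le hw (hlle 0)) (hupZ z h)
  have claim1 : ∀ y : ℝ, y ≤ x → Ψ.eval y ≤ 0 := by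
    intro y hyle
    rcases eq_or_lt_of_le hyle with heq | hylt
    · rw [heq, hΨx]
    by_cases hyLX : y ∈ LX
    · exact le_of_eq (hΨLX y hyLX)
    by_cases hcaseA : y < l 0
    · have hmono : StrictMonoOn (fun t => Ψ.eval t) (Set.Icc y (l 0)) := by
        apply MS_strictMonoOn
        intro w hw1 hw2
        apply hup
        · exact fun z hz => ne_of_gt (hallgt w hw2 z hz)
        · have hfeq : Z.filter (fun z => w < z) = Z :=
            Finset.filter_true_of_mem (fun z hz => hallgt w hw2 z hz)
          rw [hfeq, hZcard]
          exact ⟨m' + u'', by ring⟩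
      have hlt : Ψ.eval y < Ψ.eval (l 0) :=
        hmono (Set.mem_Icc.mpr ⟨le_refl y, le_of_lt hcaseA⟩)
          (Set.mem_Icc.mpr ⟨le_of_lt hcaseA, le_refl _⟩) hcaseA
      rw [hΨLX _ (hlmem 0)] at hlt
      exact le_of_lt hlt
    · have hl0y : l 0 < y :=
        lt_of_le_of_ne (not_lt.mp hcaseA) (fun h => hyLX (h ▸ hlmem 0))
      set Sy := (Finset.univ : Finset (Fin (m' + 1))).filter (fun i => l i < y) with hSydef
      have hSyne : Sy.Nonempty := ⟨0, Finset.mem_filter.mpr ⟨Finset.mem_univ _, hl0y⟩⟩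
      set j' := Sy.max' hSyne with hj'def
      have hj'mem : l j' < y := (Finset.mem_filter.mp (Sy.max'_mem hSyne)).2
      have hj'max : ∀ i : Fin (m' + 1), l i < y → i ≤ j' :=
        fun i hi => Finset.le_max' Sy i (Finset.mem_filter.mpr ⟨Finset.mem_univ _, hi⟩)
      have hj'val : (j' : ℕ) < m' := by
        rcases lt_or_eq_of_le (Nat.lt_succ_iff.mp j'.isLt) with h | h
        · exact h
        · exfalso
          have hlast : j' = Fin.last m' := Fin.ext h
          rw [hlast, hllast] at hj'mem
          exact absurd (lt_trans hj'mem hylt) (lt_irrefl x)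
      set g : Fin m' := ⟨(j' : ℕ), hj'val⟩ with hgdef
      have hgcs : g.castSucc = j' := by
        apply Fin.ext
        simp [hgdef]
      have hαy : l g.castSucc < y := by rw [hgcs]; exact hj'mem
      have hyβ : y < l g.succ := by
        rcases lt_trichotomy y (l g.succ) with h | h | h
        · exact h
        · exact absurd (h ▸ hlmem g.succ) hyLX
        · exfalso
          have h1 := hj'max g.succ h
          rw [← hgcs] at h1
          have h3 := Fin.le_def.mp h1
          rw [Fin.val_succ, Fin.coe_castSucc] at h3
          omega
      have hαβ : l g.castSucc < l g.succ := hlmono (Fin.castSucc_lt_succ (i := g))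
      rcases le_or_gt y (rr g) with hsub | hsub
      · -- decreasing on [l g.castSucc, rr g]
        have hanti : StrictAntiOn (fun t => Ψ.eval t) (Set.Icc (l g.castSucc) (rr g)) := by
          apply MS_strictAntiOn
          intro w hw1 hw2
          have hwx : w < x := lt_trans hw2 (hrrx g)
          have hlchar : ∀ i : Fin (m' + 1), w < l i ↔ g.succ ≤ i := by
            intro i
            constructor
            · intro hwi
              by_contra hc
              rw [not_le] at hc
              have hile : i ≤ g.castSucc := by
                rw [Fin.le_def]
                have h4 := Fin.lt_def.mp hc
                simp [Fin.val_succ] at h4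
                simp
                omega
              exact absurd (lt_of_le_of_lt (hlmono.monotone hile) hw1) (not_lt.mpr (le_of_lt hwi))
            · intro hi
              have h5 : l g.succ ≤ l i := hlmono.monotone hi
              have h6 : rr g < l g.succ := hrr2 g
              linarith
          have hrchar : ∀ i : Fin m', w < rr i ↔ g ≤ i := by
            intro i
            constructor
            · intro hwi
              by_contra hc
              rw [not_le] at hc
              have h4 : rr i < l i.succ := hrr2 i
              have h5 : l i.succ ≤ l g.castSucc := hlmono.monotone (by
                rw [Fin.le_def]
                simp [Fin.val_succ]
                exact Fin.lt_def.mp hc)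
              linarith
            · intro hi
              rcases eq_or_lt_of_le hi with h | h
              · rw [← h]; exact hw2
              · have h5 : l g.succ ≤ l i.castSucc := hlmono.monotone (by
                  rw [Fin.le_def]
                  simp [Fin.val_succ]
                  exact Fin.lt_def.mp h)
                have h6 := hrr1 i
                have h7 := hrr2 g
                linarith
          apply hdown
          · intro z hz
            rcases Finset.mem_union.mp hz with h | h
            · rcases Finset.mem_union.mp h with h1 | h1
              · obtain ⟨k, rfl⟩ := hlsurj z (Finset.mem_insert_of_mem h1)
                rcases lt_or_ge w (l k) with hh | hh
                · exact ne_of_gt hh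
                · have h4 : ¬ g.succ ≤ k := fun hc =>
                    absurd ((hlchar k).mpr hc) (not_lt.mpr hh)
                  rw [not_le] at h4
                  have hkle : k ≤ g.castSucc := by
                    rw [Fin.le_def]
                    have h5 := Fin.lt_def.mp h4
                    simp [Fin.val_succ] at h5
                    simp
                    omega
                  exact ne_of_lt (lt_of_le_of_lt (hlmono.monotone hkle) hw1)
              · obtain ⟨i, rfl⟩ := hRRmem z h1
                rcases lt_or_ge w (rr i) with hh | hh
                · exact ne_of_gt hh
                · have h4 : ¬ g ≤ i := fun hc =>
                    absurd ((hrchar i).mpr hc) (not_lt.mpr hh)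
                  rw [not_le] at h4
                  have h5 : rr i < l i.succ := hrr2 i
                  have h6 : l i.succ ≤ l g.castSucc := hlmono.monotone (by
                    rw [Fin.le_def]
                    simp [Fin.val_succ]
                    exact Fin.lt_def.mp h4)
                  exact ne_of_lt (by linarith)
            · exact ne_of_gt (lt_trans hwx (hupZ z h))
          · have eL : ((Finset.univ : Finset (Fin (m' + 1))).filter
                (fun i => w < l i)).card = (m' + 1) - ((g : ℕ) + 1) := by
              rw [Finset.filter_congr (fun i _ => hlchar i), MS_card_ici g.succ,
                Fin.val_succ]
            have eR : ((Finset.univ : Finset (Fin m')).filter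
                (fun i => w < rr i)).card = m' - (g : ℕ) := by
              rw [Finset.filter_congr (fun i _ => hrchar i), MS_card_ici g]
            have eB : ((Finset.univ : Finset (Fin (u'' + 1))).filter
                (fun i => w < bb i)).card = u'' + 1 :=
              MS_card_all _ (fun i => lt_trans hwx (hbgt i))
            have eS : ((Finset.univ : Finset (Fin u'')).filter
                (fun i => w < ss i)).card = u'' :=
              MS_card_all _ (fun i => lt_trans hwx (hssx i))
            have hLAc := hLAfc w hwx
            rw [eL] at hLAc
            rw [hcount w, hRRfc w, hBfc w, hSSfc w, eR, eB, eS]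
            have hgval : (g : ℕ) < m' := hj'val
            rw [Nat.even_iff]
            omega
        have hmem1 : l g.castSucc ∈ Set.Icc (l g.castSucc) (rr g) :=
          Set.mem_Icc.mpr ⟨le_refl _, le_of_lt (hrr1 g)⟩
        have hmem2 : y ∈ Set.Icc (l g.castSucc) (rr g) :=
          Set.mem_Icc.mpr ⟨le_of_lt hαy, hsub⟩
        have hlt : Ψ.eval y < Ψ.eval (l g.castSucc) := hanti hmem1 hmem2 hαy
        rw [hΨLX _ (hlmem g.castSucc)] at hlt
        exact le_of_lt hlt
      · -- increasing on [rr g, l g.succ]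
        have hmono : StrictMonoOn (fun t => Ψ.eval t) (Set.Icc (rr g) (l g.succ)) := by
          apply MS_strictMonoOn
          intro w hw1 hw2
          have hwx : w < x := lt_of_lt_of_le hw2 (hlle g.succ)
          have hlchar : ∀ i : Fin (m' + 1), w < l i ↔ g.succ ≤ i := by
            intro i
            constructor
            · intro hwi
              by_contra hc
              rw [not_le] at hc
              have hile : i ≤ g.castSucc := by
                rw [Fin.le_def]
                have h4 := Fin.lt_def.mp hc
                simp [Fin.val_succ] at h4
                simp
                omega
              have h5 : l i ≤ l g.castSucc := hlmono.monotone hile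
              have h6 := hrr1 g
              linarith
            · intro hi
              exact lt_of_lt_of_le hw2 (hlmono.monotone hi)
          have hrchar : ∀ i : Fin m', w < rr i ↔ g < i := by
            intro i
            constructor
            · intro hwi
              by_contra hc
              rw [not_lt] at hc
              rcases eq_or_lt_of_le hc with h | h
              · rw [h] at hwi
                exact absurd (lt_trans hw1 hwi) (lt_irrefl _)
              · have h4 : rr i < l i.succ := hrr2 i
                have h5 : l i.succ ≤ l g.castSucc := hlmono.monotone (by
                  rw [Fin.le_def]
                  simp [Fin.val_succ]
                  exact Fin.lt_def.mp h)
                have h6 := hrr1 g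
                linarith
            · intro hi
              have h5 : l g.succ ≤ l i.castSucc := hlmono.monotone (by
                rw [Fin.le_def]
                simp [Fin.val_succ]
                exact Fin.lt_def.mp hi)
              have h6 := hrr1 i
              linarith
          apply hup
          · intro z hz
            rcases Finset.mem_union.mp hz with h | h
            · rcases Finset.mem_union.mp h with h1 | h1
              · obtain ⟨k, rfl⟩ := hlsurj z (Finset.mem_insert_of_mem h1)
                rcases lt_or_ge w (l k) with hh | hh
                · exact ne_of_gt hh
                · have h4 : ¬ g.succ ≤ k := fun hc =>
                    absurd ((hlchar k).mpr hc) (not_lt.mpr hh)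
                  rw [not_le] at h4
                  have hkle : k ≤ g.castSucc := by
                    rw [Fin.le_def]
                    have h5 := Fin.lt_def.mp h4
                    simp [Fin.val_succ] at h5
                    simp
                    omega
                  have h6 : l k ≤ l g.castSucc := hlmono.monotone hkle
                  have h7 := hrr1 g
                  exact ne_of_lt (by linarith)
              · obtain ⟨i, rfl⟩ := hRRmem z h1
                rcases lt_or_ge w (rr i) with hh | hh
                · exact ne_of_gt hh
                · have h4 : ¬ g < i := fun hc =>
                    absurd ((hrchar i).mpr hc) (not_lt.mpr hh)
                  rw [not_lt] at h4
                  rcases eq_or_lt_of_le h4 with h | h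
                  · exact ne_of_lt (by rw [h]; exact hw1)
                  · have h5 : rr i < l i.succ := hrr2 i
                    have h6 : l i.succ ≤ l g.castSucc := hlmono.monotone (by
                      rw [Fin.le_def]
                      simp [Fin.val_succ]
                      exact Fin.lt_def.mp h)
                    have h7 := hrr1 g
                    exact ne_of_lt (by linarith)
            · exact ne_of_gt (lt_trans hwx (hupZ z h))
          · have eL : ((Finset.univ : Finset (Fin (m' + 1))).filter
                (fun i => w < l i)).card = (m' + 1) - ((g : ℕ) + 1) := by
              rw [Finset.filter_congr (fun i _ => hlchar i), MS_card_ici g.succ,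
                Fin.val_succ]
            have eR : ((Finset.univ : Finset (Fin m')).filter
                (fun i => w < rr i)).card = m' - 1 - (g : ℕ) := by
              rw [Finset.filter_congr (fun i _ => hrchar i), MS_card_ioi g]
            have eB : ((Finset.univ : Finset (Fin (u'' + 1))).filter
                (fun i => w < bb i)).card = u'' + 1 :=
              MS_card_all _ (fun i => lt_trans hwx (hbgt i))
            have eS : ((Finset.univ : Finset (Fin u'')).filter
                (fun i => w < ss i)).card = u'' :=
              MS_card_all _ (fun i => lt_trans hwx (hssx i))
            have hLAc := hLAfc w hwx
            rw [eL] at hLAc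
            rw [hcount w, hRRfc w, hBfc w, hSSfc w, eR, eB, eS]
            have hgval : (g : ℕ) < m' := hj'val
            rw [Nat.odd_iff]
            omega
        have hmem1 : y ∈ Set.Icc (rr g) (l g.succ) :=
          Set.mem_Icc.mpr ⟨le_of_lt hsub, le_of_lt hyβ⟩
        have hmem2 : l g.succ ∈ Set.Icc (rr g) (l g.succ) :=
          Set.mem_Icc.mpr ⟨le_of_lt (lt_trans hsub hyβ), le_refl _⟩
        have hlt : Ψ.eval y < Ψ.eval (l g.succ) := hmono hmem1 hmem2 hyβ
        rw [hΨLX _ (hlmem g.succ)] at hlt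
        exact le_of_lt hlt
  -- claim 2 : Ψ ≤ 1 on (x, ∞)
  have claim2 : ∀ y : ℝ, x < y → Ψ.eval y ≤ 1 := by
    intro y hxy
    by_cases hyB : y ∈ B
    · exact le_of_eq (hΨb y hyB)
    have hLAR0 : ∀ w : ℝ, x < w → (LA.filter (fun z => w < z)).card = 0 := by
      intro w hw
      rw [Finset.card_eq_zero, Finset.filter_eq_empty_iff]
      intro a ha
      exact not_lt.mpr (le_of_lt (lt_trans (hLA a ha) hw))
    have hRR0 : ∀ w : ℝ, x < w → (RR.filter (fun z => w < z)).card = 0 := by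
      intro w hw
      rw [Finset.card_eq_zero, Finset.filter_eq_empty_iff]
      intro z hz
      obtain ⟨i, rfl⟩ := hRRmem z hz
      exact not_lt.mpr (le_of_lt (lt_trans (hrrx i) hw))
    have hlowne : ∀ w : ℝ, x < w → ∀ z ∈ LA ∪ RR, z ≠ w :=
      fun w hw z hz => ne_of_lt (lt_trans (hlowZ z hz) hw)
    by_cases hcaseA : y < bb 0
    · have hmono : StrictMonoOn (fun t => Ψ.eval t) (Set.Icc y (bb 0)) := by
        apply MS_strictMonoOn
        intro w hw1 hw2
        have hwx : x < w := lt_trans hxy hw1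
        apply hup
        · intro z hz
          rcases Finset.mem_union.mp hz with h | h
          · exact hlowne w hwx z h
          · refine ne_of_gt ?_
            rcases Finset.mem_union.mp h with h1 | h1
            · obtain ⟨i, rfl⟩ := hbsurj z h1
              exact lt_of_lt_of_le hw2 (hbmono.monotone (Fin.zero_le i))
            · obtain ⟨i, rfl⟩ := hSSmem z h1
              exact lt_trans hw2 (hssb0 i)
        · have eB : ((Finset.univ : Finset (Fin (u'' + 1))).filter
              (fun i => w < bb i)).card = u'' + 1 :=
            MS_card_all _ (fun i => lt_of_lt_of_le hw2 (hbmono.monotone (Fin.zero_le i)))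
          have eS : ((Finset.univ : Finset (Fin u'')).filter
              (fun i => w < ss i)).card = u'' :=
            MS_card_all _ (fun i => lt_trans hw2 (hssb0 i))
          rw [hcount w, hLAR0 w hwx, hRR0 w hwx, hBfc w, hSSfc w, eB, eS]
          rw [Nat.odd_iff]
          omega
      have hlt : Ψ.eval y < Ψ.eval (bb 0) :=
        hmono (Set.mem_Icc.mpr ⟨le_refl y, le_of_lt hcaseA⟩)
          (Set.mem_Icc.mpr ⟨le_of_lt hcaseA, le_refl _⟩) hcaseA
      rw [hΨb _ (hbmem 0)] at hlt
      exact le_of_lt hlt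
    · have hb0y : bb 0 < y :=
        lt_of_le_of_ne (not_lt.mp hcaseA) (fun h => hyB (h ▸ hbmem 0))
      set Sy := (Finset.univ : Finset (Fin (u'' + 1))).filter (fun i => bb i < y) with hSydef
      have hSyne : Sy.Nonempty := ⟨0, Finset.mem_filter.mpr ⟨Finset.mem_univ _, hb0y⟩⟩
      set j' := Sy.max' hSyne with hj'def
      have hj'mem : bb j' < y := (Finset.mem_filter.mp (Sy.max'_mem hSyne)).2
      have hj'max : ∀ i : Fin (u'' + 1), bb i < y → i ≤ j' :=
        fun i hi => Finset.le_max' Sy i (Finset.mem_filter.mpr ⟨Finset.mem_univ _, hi⟩)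
      rcases lt_or_eq_of_le (Nat.lt_succ_iff.mp j'.isLt) with hj'val | hj'last
      · -- interior gap on the upper side
        set g : Fin u'' := ⟨(j' : ℕ), hj'val⟩ with hgdef
        have hgcs : g.castSucc = j' := by
          apply Fin.ext
          simp [hgdef]
        have hαy : bb g.castSucc < y := by rw [hgcs]; exact hj'mem
        have hyβ : y < bb g.succ := by
          rcases lt_trichotomy y (bb g.succ) with h | h | h
          · exact h
          · exact absurd (h ▸ hbmem g.succ) hyB
          · exfalso
            have h1 := hj'max g.succ h
            rw [← hgcs] at h1
            have h3 := Fin.le_def.mp h1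
            rw [Fin.val_succ, Fin.coe_castSucc] at h3
            omega
        have hxα : x < bb g.castSucc := hbgt _
        rcases le_or_gt y (ss g) with hsub | hsub
        · have hanti : StrictAntiOn (fun t => Ψ.eval t)
              (Set.Icc (bb g.castSucc) (ss g)) := by
            apply MS_strictAntiOn
            intro w hw1 hw2
            have hwx : x < w := lt_trans hxα hw1
            have hbchar : ∀ i : Fin (u'' + 1), w < bb i ↔ g.succ ≤ i := by
              intro i
              constructor
              · intro hwi
                by_contra hc
                rw [not_le] at hc
                have hile : i ≤ g.castSucc := by
                  rw [Fin.le_def]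
                  have h4 := Fin.lt_def.mp hc
                  rw [Fin.val_succ] at h4
                  rw [Fin.coe_castSucc]
                  omega
                exact absurd (lt_of_le_of_lt (hbmono.monotone hile) hw1)
                  (not_lt.mpr (le_of_lt hwi))
              · intro hi
                have h5 : bb g.succ ≤ bb i := hbmono.monotone hi
                have h6 : ss g < bb g.succ := hss2 g
                linarith
            have hschar : ∀ i : Fin u'', w < ss i ↔ g ≤ i := by
              intro i
              constructor
              · intro hwi
                by_contra hc
                rw [not_le] at hc
                have h4 : ss i < bb i.succ := hss2 i
                have h5 : bb i.succ ≤ bb g.castSucc := hbmono.monotone (by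
                  rw [Fin.le_def]
                  rw [Fin.val_succ, Fin.coe_castSucc]
                  exact Fin.lt_def.mp hc)
                linarith
              · intro hi
                rcases eq_or_lt_of_le hi with h | h
                · rw [← h]; exact hw2
                · have h5 : bb g.succ ≤ bb i.castSucc := hbmono.monotone (by
                    rw [Fin.le_def]
                    rw [Fin.val_succ, Fin.coe_castSucc]
                    exact Fin.lt_def.mp h)
                  have h6 := hss1 i
                  have h7 := hss2 g
                  linarith
            apply hdown
            · intro z hz
              rcases Finset.mem_union.mp hz with h | h
              · exact hlowne w hwx z h
              · rcases Finset.mem_union.mp h with h1 | h1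
                · obtain ⟨k, rfl⟩ := hbsurj z h1
                  rcases lt_or_ge w (bb k) with hh | hh
                  · exact ne_of_gt hh
                  · have h4 : ¬ g.succ ≤ k := fun hc =>
                      absurd ((hbchar k).mpr hc) (not_lt.mpr hh)
                    rw [not_le] at h4
                    have hkle : k ≤ g.castSucc := by
                      rw [Fin.le_def]
                      have h5 := Fin.lt_def.mp h4
                      rw [Fin.val_succ] at h5
                      rw [Fin.coe_castSucc]
                      omega
                    exact ne_of_lt (lt_of_le_of_lt (hbmono.monotone hkle) hw1)
                · obtain ⟨i, rfl⟩ := hSSmem z h1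
                  rcases lt_or_ge w (ss i) with hh | hh
                  · exact ne_of_gt hh
                  · have h4 : ¬ g ≤ i := fun hc =>
                      absurd ((hschar i).mpr hc) (not_lt.mpr hh)
                    rw [not_le] at h4
                    have h5 : ss i < bb i.succ := hss2 i
                    have h6 : bb i.succ ≤ bb g.castSucc := hbmono.monotone (by
                      rw [Fin.le_def]
                      rw [Fin.val_succ, Fin.coe_castSucc]
                      exact Fin.lt_def.mp h4)
                    exact ne_of_lt (by linarith)
            · have eB : ((Finset.univ : Finset (Fin (u'' + 1))).filter
                  (fun i => w < bb i)).card = (u'' + 1) - ((g : ℕ) + 1) := by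
                rw [Finset.filter_congr (fun i _ => hbchar i), MS_card_ici g.succ,
                  Fin.val_succ]
              have eS : ((Finset.univ : Finset (Fin u'')).filter
                  (fun i => w < ss i)).card = u'' - (g : ℕ) := by
                rw [Finset.filter_congr (fun i _ => hschar i), MS_card_ici g]
              rw [hcount w, hLAR0 w hwx, hRR0 w hwx, hBfc w, hSSfc w, eB, eS]
              have hgval : (g : ℕ) < u'' := hj'val
              rw [Nat.even_iff]
              omega
          have hmem1 : bb g.castSucc ∈ Set.Icc (bb g.castSucc) (ss g) :=
            Set.mem_Icc.mpr ⟨le_refl _, le_of_lt (hss1 g)⟩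
          have hmem2 : y ∈ Set.Icc (bb g.castSucc) (ss g) :=
            Set.mem_Icc.mpr ⟨le_of_lt hαy, hsub⟩
          have hlt : Ψ.eval y < Ψ.eval (bb g.castSucc) := hanti hmem1 hmem2 hαy
          rw [hΨb _ (hbmem g.castSucc)] at hlt
          exact le_of_lt hlt
        · have hmono : StrictMonoOn (fun t => Ψ.eval t)
              (Set.Icc (ss g) (bb g.succ)) := by
            apply MS_strictMonoOn
            intro w hw1 hw2
            have hwx : x < w := lt_trans (hssx g) hw1
            have hbchar : ∀ i : Fin (u'' + 1), w < bb i ↔ g.succ ≤ i := by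
              intro i
              constructor
              · intro hwi
                by_contra hc
                rw [not_le] at hc
                have hile : i ≤ g.castSucc := by
                  rw [Fin.le_def]
                  have h4 := Fin.lt_def.mp hc
                  rw [Fin.val_succ] at h4
                  rw [Fin.coe_castSucc]
                  omega
                have h5 : bb i ≤ bb g.castSucc := hbmono.monotone hile
                have h6 := hss1 g
                linarith
              · intro hi
                exact lt_of_lt_of_le hw2 (hbmono.monotone hi)
            have hschar : ∀ i : Fin u'', w < ss i ↔ g < i := by
              intro i
              constructor
              · intro hwi
                by_contra hc
                rw [not_lt] at hc
                rcases eq_or_lt_of_le hc with h | h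
                · rw [h] at hwi
                  exact absurd (lt_trans hw1 hwi) (lt_irrefl _)
                · have h4 : ss i < bb i.succ := hss2 i
                  have h5 : bb i.succ ≤ bb g.castSucc := hbmono.monotone (by
                    rw [Fin.le_def]
                    rw [Fin.val_succ, Fin.coe_castSucc]
                    exact Fin.lt_def.mp h)
                  have h6 := hss1 g
                  linarith
              · intro hi
                have h5 : bb g.succ ≤ bb i.castSucc := hbmono.monotone (by
                  rw [Fin.le_def]
                  rw [Fin.val_succ, Fin.coe_castSucc]
                  exact Fin.lt_def.mp hi)
                have h6 := hss1 i
                linarith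
            apply hup
            · intro z hz
              rcases Finset.mem_union.mp hz with h | h
              · exact hlowne w hwx z h
              · rcases Finset.mem_union.mp h with h1 | h1
                · obtain ⟨k, rfl⟩ := hbsurj z h1
                  rcases lt_or_ge w (bb k) with hh | hh
                  · exact ne_of_gt hh
                  · have h4 : ¬ g.succ ≤ k := fun hc =>
                      absurd ((hbchar k).mpr hc) (not_lt.mpr hh)
                    rw [not_le] at h4
                    have hkle : k ≤ g.castSucc := by
                      rw [Fin.le_def]
                      have h5 := Fin.lt_def.mp h4
                      rw [Fin.val_succ] at h5
                      rw [Fin.coe_castSucc]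
                      omega
                    have h6 : bb k ≤ bb g.castSucc := hbmono.monotone hkle
                    have h7 := hss1 g
                    exact ne_of_lt (by linarith)
                · obtain ⟨i, rfl⟩ := hSSmem z h1
                  rcases lt_or_ge w (ss i) with hh | hh
                  · exact ne_of_gt hh
                  · have h4 : ¬ g < i := fun hc =>
                      absurd ((hschar i).mpr hc) (not_lt.mpr hh)
                    rw [not_lt] at h4
                    rcases eq_or_lt_of_le h4 with h | h
                    · exact ne_of_lt (by rw [h]; exact hw1)
                    · have h5 : ss i < bb i.succ := hss2 i
                      have h6 : bb i.succ ≤ bb g.castSucc := hbmono.monotone (by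
                        rw [Fin.le_def]
                        rw [Fin.val_succ, Fin.coe_castSucc]
                        exact Fin.lt_def.mp h)
                      have h7 := hss1 g
                      exact ne_of_lt (by linarith)
            · have eB : ((Finset.univ : Finset (Fin (u'' + 1))).filter
                  (fun i => w < bb i)).card = (u'' + 1) - ((g : ℕ) + 1) := by
                rw [Finset.filter_congr (fun i _ => hbchar i), MS_card_ici g.succ,
                  Fin.val_succ]
              have eS : ((Finset.univ : Finset (Fin u'')).filter
                  (fun i => w < ss i)).card = u'' - 1 - (g : ℕ) := by
                rw [Finset.filter_congr (fun i _ => hschar i), MS_card_ioi g]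
              rw [hcount w, hLAR0 w hwx, hRR0 w hwx, hBfc w, hSSfc w, eB, eS]
              have hgval : (g : ℕ) < u'' := hj'val
              rw [Nat.odd_iff]
              omega
          have hmem1 : y ∈ Set.Icc (ss g) (bb g.succ) :=
            Set.mem_Icc.mpr ⟨le_of_lt hsub, le_of_lt hyβ⟩
          have hmem2 : bb g.succ ∈ Set.Icc (ss g) (bb g.succ) :=
            Set.mem_Icc.mpr ⟨le_of_lt (lt_trans hsub hyβ), le_refl _⟩
          have hlt : Ψ.eval y < Ψ.eval (bb g.succ) := hmono hmem1 hmem2 hyβ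
          rw [hΨb _ (hbmem g.succ)] at hlt
          exact le_of_lt hlt
      · -- y is beyond the top node
        have hj'top : j' = Fin.last u'' := Fin.ext hj'last
        have htopy : bb (Fin.last u'') < y := by rw [← hj'top]; exact hj'mem
        have hanti : StrictAntiOn (fun t => Ψ.eval t)
            (Set.Icc (bb (Fin.last u'')) y) := by
          apply MS_strictAntiOn
          intro w hw1 hw2
          have hwx : x < w := lt_trans (hbgt _) hw1
          apply hdown
          · intro z hz
            rcases Finset.mem_union.mp hz with h | h
            · exact hlowne w hwx z h
            · refine ne_of_lt ?_
              rcases Finset.mem_union.mp h with h1 | h1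
              · obtain ⟨i, rfl⟩ := hbsurj z h1
                exact lt_of_le_of_lt (hbmono.monotone (Fin.le_last i)) hw1
              · obtain ⟨i, rfl⟩ := hSSmem z h1
                have h4 : ss i < bb i.succ := hss2 i
                have h5 : bb i.succ ≤ bb (Fin.last u'') := hbmono.monotone (Fin.le_last _)
                linarith
          · have eB : ((Finset.univ : Finset (Fin (u'' + 1))).filter
                (fun i => w < bb i)).card = 0 :=
              MS_card_none _ (fun i => not_lt.mpr
                (le_of_lt (lt_of_le_of_lt (hbmono.monotone (Fin.le_last i)) hw1)))
            have eS : ((Finset.univ : Finset (Fin u'')).filter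
                (fun i => w < ss i)).card = 0 :=
              MS_card_none _ (fun i => not_lt.mpr (le_of_lt (by
                have h4 : ss i < bb i.succ := hss2 i
                have h5 : bb i.succ ≤ bb (Fin.last u'') := hbmono.monotone (Fin.le_last _)
                linarith)))
            rw [hcount w, hLAR0 w hwx, hRR0 w hwx, hBfc w, hSSfc w, eB, eS]
            exact Even.zero
        have hmem1 : bb (Fin.last u'') ∈ Set.Icc (bb (Fin.last u'')) y :=
          Set.mem_Icc.mpr ⟨le_refl _, le_of_lt htopy⟩
        have hmem2 : y ∈ Set.Icc (bb (Fin.last u'')) y :=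
          Set.mem_Icc.mpr ⟨le_of_lt htopy, le_refl _⟩
        have hlt : Ψ.eval y < Ψ.eval (bb (Fin.last u'')) := hanti hmem1 hmem2 htopy
        rw [hΨb _ (hbmem (Fin.last u''))] at hlt
        exact le_of_lt hlt
  -- final assembly
  have hRev : ∀ y : ℝ, R.eval y = 1 - Ψ.eval y := by
    intro y
    have := congrArg (fun p => Polynomial.eval y p) hΨR
    simp only [Polynomial.eval_sub, Polynomial.eval_one] at this
    linarith
  refine ⟨R, ?_, ?_, ?_, ?_, ?_, ?_⟩
  · rw [hu'']
    exact hRdeg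
  · intro y hy
    rw [hRev]
    have := claim1 y hy
    linarith
  · intro y
    rcases le_or_gt y x with hy | hy
    · rw [hRev]
      have := claim1 y hy
      linarith
    · rw [hRev]
      have := claim2 y hy
      linarith
  · intro a ha
    rw [hRev, hΨa a ha]
    ring
  · rw [hRev, hΨx]
    ring
  · exact hRb






/-- inner product of polynomials w.r.t. weights μ on {0,…,nn} -/
def MSpr (μ : ℕ → ℝ) (nn : ℕ) (p q : Polynomial ℝ) : ℝ :=
  ∑ k ∈ Finset.range (nn + 1), μ k * p.eval (k : ℝ) * q.eval (k : ℝ)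

lemma MSpr_comm (μ : ℕ → ℝ) (nn : ℕ) (p q : Polynomial ℝ) :
    MSpr μ nn p q = MSpr μ nn q p := by
  unfold MSpr
  exact Finset.sum_congr rfl (fun k _ => by ring)

lemma MSpr_shift (μ : ℕ → ℝ) (nn : ℕ) (p q : Polynomial ℝ) :
    MSpr μ nn (X * p) q = MSpr μ nn p (X * q) := by
  unfold MSpr
  refine Finset.sum_congr rfl (fun k _ => ?_)
  simp only [Polynomial.eval_mul, Polynomial.eval_X]
  ring

lemma MSpr_sum_left (μ : ℕ → ℝ) (nn : ℕ) {ι : Type*} (s : Finset ι)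
    (c : ι → ℝ) (p : ι → Polynomial ℝ) (q : Polynomial ℝ) :
    MSpr μ nn (∑ i ∈ s, c i • p i) q = ∑ i ∈ s, c i * MSpr μ nn (p i) q := by
  unfold MSpr
  simp only [Finset.mul_sum]
  rw [Finset.sum_comm]
  refine Finset.sum_congr rfl (fun k _ => ?_)
  rw [Polynomial.eval_finset_sum, Finset.mul_sum, Finset.sum_mul]
  refine Finset.sum_congr rfl (fun i _ => ?_)
  simp only [Polynomial.eval_smul, smul_eq_mul]
  ring

lemma MSpr_sum_right (μ : ℕ → ℝ) (nn : ℕ) {ι : Type*} (s : Finset ι)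
    (c : ι → ℝ) (p : ι → Polynomial ℝ) (q : Polynomial ℝ) :
    MSpr μ nn q (∑ i ∈ s, c i • p i) = ∑ i ∈ s, c i * MSpr μ nn q (p i) := by
  rw [MSpr_comm, MSpr_sum_left]
  exact Finset.sum_congr rfl (fun i _ => by rw [MSpr_comm])

/-- expansion of polynomials of degree ≤ d in an orthonormal family -/
lemma MS_expand (μ : ℕ → ℝ) (nn : ℕ) (Φ : ℕ → Polynomial ℝ) (n' : ℕ)
    (horth : ∀ i ≤ n', ∀ j ≤ n',
      MSpr μ nn (Φ i) (Φ j) = if i = j then 1 else 0)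
    (hdeg : ∀ i ≤ n', (Φ i).degree = (i : ℕ))
    (d : ℕ) (hd : d ≤ n') (q : Polynomial ℝ) (hq : q.natDegree ≤ d) (hq0 : q.degree < (d+1:ℕ)) :
    q = ∑ j ∈ Finset.range (d + 1), MSpr μ nn q (Φ j) • Φ j := by
  classical
  -- the family is linearly independent
  have li : LinearIndependent ℝ (fun j : Fin (d + 1) => Φ (j : ℕ)) := by
    rw [Fintype.linearIndependent_iff]
    intro c hc i
    have h2 : MSpr μ nn (∑ j : Fin (d+1), c j • Φ (j : ℕ)) (Φ (i : ℕ))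
        = ∑ j : Fin (d+1), c j * MSpr μ nn (Φ (j : ℕ)) (Φ (i : ℕ)) :=
      MSpr_sum_left μ nn _ _ _ _
    rw [hc] at h2
    have h3 : MSpr μ nn 0 (Φ (i:ℕ)) = 0 := by
      unfold MSpr; simp
    rw [h3] at h2
    have h4 : ∀ j : Fin (d+1), c j * MSpr μ nn (Φ (j:ℕ)) (Φ (i:ℕ))
        = if j = i then c j else 0 := by
      intro j
      rw [horth _ (le_trans (Nat.lt_succ_iff.mp j.isLt) hd)
        _ (le_trans (Nat.lt_succ_iff.mp i.isLt) hd)]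
      rcases eq_or_ne j i with h | h
      · subst h; simp
      · rw [if_neg (fun hc => h (Fin.ext hc)), if_neg h, mul_zero]
    rw [Finset.sum_congr rfl (fun j _ => h4 j), Finset.sum_ite_eq' _ i] at h2
    simpa using h2.symm
  -- the span is all of degreeLT (d+1)
  have hmemdeg : ∀ j : Fin (d + 1), (Φ (j:ℕ)) ∈ Polynomial.degreeLT ℝ (d + 1) := by
    intro j
    rw [Polynomial.mem_degreeLT, hdeg _ (le_trans (Nat.lt_succ_iff.mp j.isLt) hd)]
    exact_mod_cast Nat.lt_succ_of_le (Nat.lt_succ_iff.mp j.isLt)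
  have hspanle : Submodule.span ℝ (Set.range (fun j : Fin (d+1) => Φ (j:ℕ)))
      ≤ Polynomial.degreeLT ℝ (d + 1) := by
    rw [Submodule.span_le]
    rintro p ⟨j, rfl⟩
    exact hmemdeg j
  haveI : Module.Finite ℝ (Polynomial.degreeLT ℝ (d + 1)) :=
    Module.Finite.equiv (Polynomial.degreeLTEquiv ℝ (d + 1)).symm
  have hfr1 : Module.finrank ℝ (Polynomial.degreeLT ℝ (d + 1)) = d + 1 := by
    rw [LinearEquiv.finrank_eq (Polynomial.degreeLTEquiv ℝ (d + 1))]
    simp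
  have hfr2 : Module.finrank ℝ
      (Submodule.span ℝ (Set.range (fun j : Fin (d+1) => Φ (j:ℕ)))) = d + 1 := by
    rw [finrank_span_eq_card li]
    simp
  have hspan : Submodule.span ℝ (Set.range (fun j : Fin (d+1) => Φ (j:ℕ)))
      = Polynomial.degreeLT ℝ (d + 1) := by
    apply Submodule.eq_of_le_of_finrank_le hspanle
    rw [hfr1, hfr2]
  have hqmem : q ∈ Submodule.span ℝ (Set.range (fun j : Fin (d+1) => Φ (j:ℕ))) := by
    rw [hspan, Polynomial.mem_degreeLT]
    exact_mod_cast hq0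
  rw [Submodule.mem_span_range_iff_exists_fun] at hqmem
  obtain ⟨c, hc⟩ := hqmem
  have hcoef : ∀ i : Fin (d + 1), MSpr μ nn q (Φ (i:ℕ)) = c i := by
    intro i
    rw [← hc, MSpr_sum_left]
    have h4 : ∀ j : Fin (d+1), c j * MSpr μ nn (Φ (j:ℕ)) (Φ (i:ℕ))
        = if j = i then c j else 0 := by
      intro j
      rw [horth _ (le_trans (Nat.lt_succ_iff.mp j.isLt) hd)
        _ (le_trans (Nat.lt_succ_iff.mp i.isLt) hd)]
      rcases eq_or_ne j i with h | h
      · subst h; simp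
      · rw [if_neg (fun hc => h (Fin.ext hc)), if_neg h, mul_zero]
    rw [Finset.sum_congr rfl (fun j _ => h4 j), Finset.sum_ite_eq' _ i]
    simp
  have : ∑ j ∈ Finset.range (d + 1), MSpr μ nn q (Φ j) • Φ j
      = ∑ j : Fin (d + 1), c j • Φ (j : ℕ) := by
    rw [Finset.sum_range fun j => MSpr μ nn q (Φ j) • Φ j]
    exact Finset.sum_congr rfl (fun j _ => by rw [hcoef j])
  rw [this, hc]


set_option maxHeartbeats 2000000 in
/-- Gauss-type quadrature with a node at `x`, from the spectral theorem. -/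
lemma MS_quadrature (nn n' : ℕ) (μ : ℕ → ℝ)
    (Φ : ℕ → Polynomial ℝ)
    (horth : ∀ i ≤ n', ∀ j ≤ n',
      MSpr μ nn (Φ i) (Φ j) = if i = j then 1 else 0)
    (hdeg : ∀ i ≤ n', (Φ i).degree = (i : ℕ))
    (x : ℝ) (hx : (Φ n').eval x ≠ 0) :
    ∃ (θ : Fin (n' + 1) → ℝ) (w : Fin (n' + 1) → ℝ),
      (∀ i, 0 ≤ w i) ∧
      (∃ i₀, θ i₀ = x) ∧
      (∀ g : Polynomial ℝ, g.natDegree ≤ 2 * n' →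
        ∑ k ∈ Finset.range (nn + 1), μ k * g.eval (k : ℝ) = ∑ i, w i * g.eval (θ i)) ∧
      (∑ i ∈ Finset.univ.filter (fun i => θ i = x), w i)
        * (∑ j ∈ Finset.range (n' + 1), (Φ j).eval x ^ 2) ≤ 1 := by
  classical
  have hΦne : ∀ i ≤ n', Φ i ≠ 0 := by
    intro i hi h0
    have := hdeg i hi
    rw [h0, Polynomial.degree_zero] at this
    exact (by simp : (⊥ : WithBot ℕ) ≠ (i : ℕ)) this
  have hΦnat : ∀ i ≤ n', (Φ i).natDegree = i := fun i hi =>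
    Polynomial.natDegree_eq_of_degree_eq_some (hdeg i hi)
  have hexp : ∀ d ≤ n', ∀ q : Polynomial ℝ, q.degree < ((d + 1 : ℕ) : WithBot ℕ) →
      q = ∑ j ∈ Finset.range (d + 1), MSpr μ nn q (Φ j) • Φ j := by
    intro d hd q hq0
    exact MS_expand μ nn Φ n' horth hdeg d hd q
      (by
        by_cases h : q = 0
        · simp [h]
        · exact Nat.lt_succ_iff.mp ((Polynomial.natDegree_lt_iff_degree_lt h).mpr hq0))
      hq0
  have hlow : ∀ d ≤ n', ∀ q : Polynomial ℝ, q.degree < ((d + 1 : ℕ) : WithBot ℕ) →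
      ∀ j', d < j' → j' ≤ n' → MSpr μ nn q (Φ j') = 0 := by
    intro d hd q hq0 j' hj'1 hj'2
    have hrw := hexp d hd q hq0
    calc MSpr μ nn q (Φ j')
        = MSpr μ nn (∑ j ∈ Finset.range (d + 1), MSpr μ nn q (Φ j) • Φ j) (Φ j') := by
          rw [← hrw]
      _ = ∑ j ∈ Finset.range (d + 1), MSpr μ nn q (Φ j) * MSpr μ nn (Φ j) (Φ j') :=
          MSpr_sum_left μ nn _ _ _ _
      _ = 0 := by
          refine Finset.sum_eq_zero (fun j hj => ?_)
          rw [horth j (le_trans (Nat.lt_succ_iff.mp (Finset.mem_range.mp hj)) hd) j' hj'2,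
            if_neg, mul_zero]
          have := Finset.mem_range.mp hj
          omega
  -- the modified Jacobi-type matrix
  set lastI : Fin (n' + 1) := Fin.last n' with hlastI
  set sc : ℝ := (x * (Φ n').eval x
    - ∑ j ∈ Finset.range (n' + 1), MSpr μ nn (X * Φ n') (Φ j) * (Φ j).eval x)
    / (Φ n').eval x with hsc
  set Ms : Matrix (Fin (n' + 1)) (Fin (n' + 1)) ℝ :=
    fun i j => MSpr μ nn (X * Φ (i : ℕ)) (Φ (j : ℕ))
      + (if i = lastI ∧ j = lastI then sc else 0) with hMs
  have hsymm : ∀ i j, Ms i j = Ms j i := by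
    intro i j
    rw [hMs]
    simp only []
    rw [MSpr_shift, MSpr_comm]
    congr 1
    by_cases h : i = lastI ∧ j = lastI
    · rw [if_pos h, if_pos ⟨h.2, h.1⟩]
    · rw [if_neg h, if_neg (fun hc => h ⟨hc.2, hc.1⟩)]
  have hherm : Ms.IsHermitian := by
    unfold Matrix.IsHermitian
    ext i j
    rw [Matrix.conjTranspose_apply]
    rw [hsymm i j]
    simp
  -- the vector of inner ℝ products
  set Pv : Polynomial ℝ → EuclideanSpace ℝ (Fin (n' + 1)) :=
    fun q => WithLp.toLp 2 (fun i => MSpr μ nn q (Φ (i : ℕ))) with hPv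
  have hinner : ∀ a b : EuclideanSpace ℝ (Fin (n' + 1)),
      (inner ℝ a b : ℝ) = ∑ i, a i * b i := by
    intro a b
    rw [PiLp.inner_apply]
    simp [RCLike.inner_apply]
    exact Finset.sum_congr rfl (fun i _ => mul_comm _ _)
  have hPv0 : Pv 0 = 0 := by
    ext i
    rw [hPv]
    simp only []
    unfold MSpr
    simp
  have hmulvec : ∀ q : Polynomial ℝ, q.degree < ((n' : ℕ) : WithBot ℕ) →
      Ms.mulVec (Pv q) = Pv (X * q) := by
    intro q hq
    by_cases hq0 : q = 0
    · subst hq0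
      rw [mul_zero, hPv0, WithLp.ofLp_zero, Matrix.mulVec_zero]
    have hn1 : 1 ≤ n' := by
      rcases Nat.eq_zero_or_pos n' with h0 | h0
      · exfalso
        rw [h0] at hq
        have h1 : (0 : WithBot ℕ) ≤ q.degree := Polynomial.zero_le_degree_iff.mpr hq0
        exact absurd (lt_of_le_of_lt h1 hq) (by simp)
      · exact h0
    have hql : q.degree < ((n' - 1 + 1 : ℕ) : WithBot ℕ) := by
      rwa [Nat.sub_add_cancel hn1]
    have hiflow : MSpr μ nn q (Φ n') = 0 :=
      hlow (n' - 1) (Nat.sub_le _ _) q hql n' (by omega) (le_refl _)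
    funext i
    show (Ms.mulVec (Pv q)) i = MSpr μ nn (X * q) (Φ (i : ℕ))
    rw [Matrix.mulVec, dotProduct]
    have hsplit : ∀ j : Fin (n' + 1), Ms i j * Pv q j
        = MSpr μ nn (X * Φ (i : ℕ)) (Φ (j : ℕ)) * MSpr μ nn q (Φ (j : ℕ))
          + (if i = lastI ∧ j = lastI then sc else 0) * MSpr μ nn q (Φ (j : ℕ)) := by
      intro j
      rw [hMs]
      simp only []
      ring
    rw [Finset.sum_congr rfl (fun j _ => hsplit j), Finset.sum_add_distrib]
    have hz : ∑ j : Fin (n' + 1),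
        (if i = lastI ∧ j = lastI then sc else 0) * MSpr μ nn q (Φ (j : ℕ)) = 0 := by
      refine Finset.sum_eq_zero (fun j _ => ?_)
      by_cases h : i = lastI ∧ j = lastI
      · rw [if_pos h]
        have hj : (j : ℕ) = n' := by rw [h.2]; simp [hlastI]
        rw [hj, hiflow, mul_zero]
      · rw [if_neg h, zero_mul]
    rw [hz, add_zero]
    have hqn : q.degree < ((n' + 1 : ℕ) : WithBot ℕ) := by
      refine lt_trans hq ?_
      exact_mod_cast (by omega : n' < n' + 1)
    have hqexp := hexp n' (le_refl _) q hqn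
    calc ∑ j : Fin (n' + 1), MSpr μ nn (X * Φ (i : ℕ)) (Φ (j : ℕ)) * MSpr μ nn q (Φ (j : ℕ))
        = ∑ j ∈ Finset.range (n' + 1), MSpr μ nn q (Φ j) * MSpr μ nn (X * Φ (i : ℕ)) (Φ j) := by
          rw [← Fin.sum_univ_eq_sum_range
            (fun j => MSpr μ nn q (Φ j) * MSpr μ nn (X * Φ (i : ℕ)) (Φ j)) (n' + 1)]
          exact Finset.sum_congr rfl (fun j _ => by ring)
      _ = MSpr μ nn (X * Φ (i : ℕ)) q := by
          conv_rhs => rw [hqexp]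
          rw [MSpr_sum_right]
      _ = MSpr μ nn (X * q) (Φ (i : ℕ)) := by
          rw [MSpr_shift, MSpr_comm]
  have hpow : ∀ d, d ≤ n' → (Ms ^ d).mulVec (Pv 1) = Pv (X ^ d) := by
    intro d
    induction d with
    | zero =>
      intro _
      rw [pow_zero, pow_zero, Matrix.one_mulVec]
    | succ d ih =>
      intro hd
      have hdn : d ≤ n' := by omega
      rw [pow_succ', ← Matrix.mulVec_mulVec, ih hdn]
      have hdeg' : (X ^ d : Polynomial ℝ).degree < ((n' : ℕ) : WithBot ℕ) := by
        rw [Polynomial.degree_X_pow]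
        exact_mod_cast (by omega : d < n')
      rw [hmulvec _ hdeg', ← pow_succ']
  -- spectral decomposition
  set u := hherm.eigenvectorBasis with hu
  set θ := hherm.eigenvalues with hθ
  have hMu : ∀ i, Ms.mulVec (u i) = θ i • (u i) := fun i => hherm.mulVec_eigenvectorBasis i
  have hsymmvec : ∀ a b : EuclideanSpace ℝ (Fin (n' + 1)),
      (inner ℝ (WithLp.toLp 2 (Ms.mulVec a)) b : ℝ)
        = inner ℝ a (WithLp.toLp 2 (Ms.mulVec b)) := by
    intro a b
    rw [hinner, hinner, WithLp.ofLp_toLp, WithLp.ofLp_toLp]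
    have h1 : ∀ i : Fin (n' + 1), (Ms.mulVec a) i * b i
        = ∑ j : Fin (n' + 1), Ms i j * a j * b i := by
      intro i
      rw [Matrix.mulVec, dotProduct, Finset.sum_mul]
    have h2 : ∀ j : Fin (n' + 1), a j * (Ms.mulVec b) j
        = ∑ i : Fin (n' + 1), Ms j i * b i * a j := by
      intro j
      rw [Matrix.mulVec, dotProduct, Finset.mul_sum]
      exact Finset.sum_congr rfl (fun i _ => by ring)
    rw [Finset.sum_congr rfl (fun i _ => h1 i), Finset.sum_congr rfl (fun j _ => h2 j),
      Finset.sum_comm]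
    refine Finset.sum_congr rfl (fun j _ => Finset.sum_congr rfl (fun i _ => ?_))
    rw [hsymm i j]
    ring
  have hpowvec : ∀ d (a : EuclideanSpace ℝ (Fin (n' + 1))) (i : Fin (n' + 1)),
      (inner ℝ (WithLp.toLp 2 ((Ms ^ d).mulVec a)) (u i) : ℝ)
        = θ i ^ d * inner ℝ a (u i) := by
    intro d
    induction d with
    | zero =>
      intro a i
      rw [pow_zero, Matrix.one_mulVec, pow_zero, one_mul]
    | succ d ih =>
      intro a i
      rw [pow_succ, ← Matrix.mulVec_mulVec]
      rw [← WithLp.ofLp_toLp (p := 2) (Ms.mulVec a), ih (WithLp.toLp 2 (Ms.mulVec a)) i, hsymmvec a (u i)]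
      have hMui : (WithLp.toLp 2 (Ms.mulVec (u i)))
          = θ i • (u i) := by rw [hMu i, WithLp.toLp_smul, WithLp.toLp_ofLp]
      rw [hMui, real_inner_smul_right]
      ring
  set w : Fin (n' + 1) → ℝ := fun i => (inner ℝ (Pv 1) (u i) : ℝ) ^ 2 with hw
  have hwnn : ∀ i, 0 ≤ w i := fun i => sq_nonneg _
  -- Parseval
  have hParseval : ∀ p q : Polynomial ℝ, q.degree < ((n' + 1 : ℕ) : WithBot ℕ) →
      MSpr μ nn p q = inner ℝ (Pv p) (Pv q) := by
    intro p q hq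
    rw [hinner]
    conv_lhs => rw [hexp n' (le_refl _) q hq]
    rw [MSpr_sum_right]
    rw [← Fin.sum_univ_eq_sum_range
      (fun j => MSpr μ nn q (Φ j) * MSpr μ nn p (Φ j)) (n' + 1)]
    exact Finset.sum_congr rfl (fun j _ => by ring)
  -- quadrature identity for monomials
  have hmono : ∀ d, d ≤ 2 * n' →
      ∑ k ∈ Finset.range (nn + 1), μ k * ((k : ℝ)) ^ d = ∑ i, w i * θ i ^ d := by
    intro d hd
    set d₁ := min d n' with hd₁
    set d₂ := d - d₁ with hd₂
    have hd₁n : d₁ ≤ n' := min_le_right _ _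
    have hd₂n : d₂ ≤ n' := by omega
    have hdsum : d₁ + d₂ = d := by omega
    have e1 : ∑ k ∈ Finset.range (nn + 1), μ k * ((k : ℝ)) ^ d
        = MSpr μ nn (X ^ d₁) (X ^ d₂) := by
      unfold MSpr
      refine Finset.sum_congr rfl (fun k _ => ?_)
      rw [Polynomial.eval_pow, Polynomial.eval_pow, Polynomial.eval_X, ← hdsum, pow_add]
      ring
    have hdegd : ∀ e, e ≤ n' → ((X : Polynomial ℝ) ^ e).degree < ((n' + 1 : ℕ) : WithBot ℕ) := by
      intro e he
      rw [Polynomial.degree_X_pow]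
      exact_mod_cast (by omega : e < n' + 1)
    rw [e1, hParseval _ _ (hdegd d₂ hd₂n)]
    rw [← u.sum_inner_mul_inner (Pv (X ^ d₁)) (Pv (X ^ d₂))]
    refine Finset.sum_congr rfl (fun i _ => ?_)
    have e2 : (inner ℝ (Pv (X ^ d₁)) (u i) : ℝ) = θ i ^ d₁ * inner ℝ (Pv 1) (u i) := by
      rw [← WithLp.toLp_ofLp (x := Pv (X ^ d₁)), ← hpow d₁ hd₁n, hpowvec]
    have e3 : (inner ℝ (u i) (Pv (X ^ d₂)) : ℝ) = θ i ^ d₂ * inner ℝ (Pv 1) (u i) := by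
      rw [real_inner_comm, ← WithLp.toLp_ofLp (x := Pv (X ^ d₂)), ← hpow d₂ hd₂n, hpowvec]
    rw [e2, e3]
    simp only [hw]
    rw [← hdsum, pow_add]
    ring
  -- quadrature for all polynomials of degree ≤ 2n'
  have hquad : ∀ g : Polynomial ℝ, g.natDegree ≤ 2 * n' →
      ∑ k ∈ Finset.range (nn + 1), μ k * g.eval (k : ℝ) = ∑ i, w i * g.eval (θ i) := by
    intro g hg
    have hev : ∀ y : ℝ, g.eval y = ∑ e ∈ Finset.range (2 * n' + 1), g.coeff e * y ^ e :=
      fun y => Polynomial.eval_eq_sum_range' (by omega) y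
    calc ∑ k ∈ Finset.range (nn + 1), μ k * g.eval (k : ℝ)
        = ∑ k ∈ Finset.range (nn + 1), ∑ e ∈ Finset.range (2 * n' + 1),
            g.coeff e * (μ k * ((k : ℝ)) ^ e) := by
          refine Finset.sum_congr rfl (fun k _ => ?_)
          rw [hev, Finset.mul_sum]
          exact Finset.sum_congr rfl (fun e _ => by ring)
      _ = ∑ e ∈ Finset.range (2 * n' + 1), g.coeff e
            * ∑ k ∈ Finset.range (nn + 1), μ k * ((k : ℝ)) ^ e := by
          rw [Finset.sum_comm]
          exact Finset.sum_congr rfl (fun e _ => by rw [Finset.mul_sum])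
      _ = ∑ e ∈ Finset.range (2 * n' + 1), g.coeff e * ∑ i, w i * θ i ^ e := by
          refine Finset.sum_congr rfl (fun e he => ?_)
          rw [hmono e (Nat.lt_succ_iff.mp (Finset.mem_range.mp he))]
      _ = ∑ i, ∑ e ∈ Finset.range (2 * n' + 1), w i * (g.coeff e * θ i ^ e) := by
          rw [Finset.sum_comm]
          refine Finset.sum_congr rfl (fun e _ => ?_)
          rw [Finset.mul_sum]
          exact Finset.sum_congr rfl (fun i _ => by ring)
      _ = ∑ i, w i * g.eval (θ i) := by
          refine Finset.sum_congr rfl (fun i _ => ?_)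
          rw [← Finset.mul_sum, ← hev (θ i)]
  -- the reproducing vector at x
  set q₀ : Polynomial ℝ := ∑ j ∈ Finset.range (n' + 1), ((Φ j).eval x) • Φ j with hq₀
  have hq₀deg : q₀.degree < ((n' + 1 : ℕ) : WithBot ℕ) := by
    rw [hq₀]
    refine lt_of_le_of_lt (Polynomial.degree_sum_le _ _) ?_
    rw [Finset.sup_lt_iff (by exact_mod_cast WithBot.bot_lt_coe (n' + 1))]
    intro j hj
    refine lt_of_le_of_lt (Polynomial.degree_smul_le _ _) ?_
    rw [hdeg j (Nat.lt_succ_iff.mp (Finset.mem_range.mp hj))]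
    exact_mod_cast Finset.mem_range.mp hj
  have hq₀nat : q₀.natDegree < n' + 1 := by
    by_cases h : q₀ = 0
    · rw [h]
      simp
    · exact (Polynomial.natDegree_lt_iff_degree_lt h).mpr hq₀deg
  have hPq₀ : ∀ i : Fin (n' + 1), Pv q₀ i = (Φ (i : ℕ)).eval x := by
    intro i
    rw [hPv]
    simp only []
    rw [hq₀, MSpr_sum_left]
    have h4 : ∀ j ∈ Finset.range (n' + 1),
        (Φ j).eval x * MSpr μ nn (Φ j) (Φ (i : ℕ))
          = if j = (i : ℕ) then (Φ j).eval x else 0 := by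
      intro j hj
      rw [horth j (Nat.lt_succ_iff.mp (Finset.mem_range.mp hj)) (i : ℕ)
        (Nat.lt_succ_iff.mp i.isLt)]
      by_cases h : j = (i : ℕ)
      · rw [if_pos h, if_pos h, mul_one]
      · rw [if_neg h, if_neg h, mul_zero]
    rw [Finset.sum_congr rfl h4, Finset.sum_ite_eq' (Finset.range (n' + 1)) (i : ℕ)]
    rw [if_pos (Finset.mem_range.mpr i.isLt)]
  have hcoordL : ((lastI : Fin (n' + 1)) : ℕ) = n' := by simp [hlastI]
  have hMskx : Ms.mulVec (Pv q₀) = x • (Pv q₀) := by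
    funext i
    rw [Matrix.mulVec, dotProduct]
    have hsplit : ∀ j : Fin (n' + 1), Ms i j * Pv q₀ j
        = MSpr μ nn (X * Φ (i : ℕ)) (Φ (j : ℕ)) * (Φ (j : ℕ)).eval x
          + (if i = lastI ∧ j = lastI then sc else 0) * (Φ (j : ℕ)).eval x := by
      intro j
      rw [hPq₀ j, hMs]
      simp only []
      ring
    rw [Finset.sum_congr rfl (fun j _ => hsplit j), Finset.sum_add_distrib]
    have hsum1 : ∑ j : Fin (n' + 1),
        MSpr μ nn (X * Φ (i : ℕ)) (Φ (j : ℕ)) * (Φ (j : ℕ)).eval x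
        = ∑ j ∈ Finset.range (n' + 1), MSpr μ nn (X * Φ (i : ℕ)) (Φ j) * (Φ j).eval x :=
      Fin.sum_univ_eq_sum_range
        (fun j => MSpr μ nn (X * Φ (i : ℕ)) (Φ j) * (Φ j).eval x) (n' + 1)
    rw [hsum1]
    have hRHS : (x • (Pv q₀).ofLp) i = x * (Φ (i : ℕ)).eval x := by
      rw [Pi.smul_apply, hPq₀ i, smul_eq_mul]
    rw [hRHS]
    by_cases hi : i = lastI
    · subst hi
      have hifsum : ∑ j : Fin (n' + 1),
          (if lastI = lastI ∧ j = lastI then sc else 0) * (Φ (j : ℕ)).eval x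
            = sc * (Φ n').eval x := by
        rw [Finset.sum_eq_single_of_mem lastI (Finset.mem_univ _)]
        · rw [if_pos ⟨rfl, rfl⟩, hcoordL]
        · intro j _ hj
          rw [if_neg (fun hc => hj hc.2), zero_mul]
      rw [hifsum, hcoordL]
      have hscmul : sc * (Φ n').eval x
          = x * (Φ n').eval x
            - ∑ j ∈ Finset.range (n' + 1), MSpr μ nn (X * Φ n') (Φ j) * (Φ j).eval x := by
        rw [hsc, div_mul_cancel₀ _ hx]
      rw [hscmul]
      ring
    · have hin : (i : ℕ) < n' := by
        have h1 := i.isLt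
        have hne : (i : ℕ) ≠ n' := fun h => hi (Fin.ext (by rw [h, hcoordL]))
        omega
      have hifzero : ∑ j : Fin (n' + 1),
          (if i = lastI ∧ j = lastI then sc else 0) * (Φ (j : ℕ)).eval x = 0 :=
        Finset.sum_eq_zero (fun j _ => by rw [if_neg (fun hc => hi hc.1), zero_mul])
      rw [hifzero, add_zero]
      have hXne : (X * Φ (i : ℕ)) ≠ 0 :=
        mul_ne_zero Polynomial.X_ne_zero (hΦne _ (le_of_lt hin))
      have hdegXΦ : (X * Φ (i : ℕ)).degree < ((n' + 1 : ℕ) : WithBot ℕ) := by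
        rw [← Polynomial.natDegree_lt_iff_degree_lt hXne]
        rw [Polynomial.natDegree_mul Polynomial.X_ne_zero (hΦne _ (le_of_lt hin)),
          Polynomial.natDegree_X, hΦnat _ (le_of_lt hin)]
        omega
      have hXexp := hexp n' (le_refl _) _ hdegXΦ
      have hevalexp : (X * Φ (i : ℕ)).eval x
          = ∑ j ∈ Finset.range (n' + 1), MSpr μ nn (X * Φ (i : ℕ)) (Φ j) * (Φ j).eval x := by
        conv_lhs => rw [hXexp]
        rw [Polynomial.eval_finset_sum]
        exact Finset.sum_congr rfl (fun j _ => by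
          rw [Polynomial.eval_smul, smul_eq_mul])
      rw [← hevalexp, Polynomial.eval_mul, Polynomial.eval_X]
  -- x is an eigenvalue
  have hnode : ∃ i₀, θ i₀ = x := by
    by_contra hc
    push_neg at hc
    have hz : ∀ i, (inner ℝ (Pv q₀) (u i) : ℝ) = 0 := by
      intro i
      have h1 : θ i * (inner ℝ (Pv q₀) (u i) : ℝ) = x * inner ℝ (Pv q₀) (u i) := by
        calc θ i * (inner ℝ (Pv q₀) (u i) : ℝ)
            = inner ℝ (Pv q₀) (show EuclideanSpace ℝ (Fin (n' + 1)) from θ i • u i) := by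
              rw [real_inner_smul_right]
          _ = inner ℝ (Pv q₀)
                (WithLp.toLp 2 (Ms.mulVec (u i))) := by
              rw [hMu i, WithLp.toLp_smul, WithLp.toLp_ofLp]
          _ = inner ℝ (WithLp.toLp 2 (Ms.mulVec (Pv q₀))) (u i) :=
              (hsymmvec _ _).symm
          _ = inner ℝ (show EuclideanSpace ℝ (Fin (n' + 1)) from x • Pv q₀) (u i) := by
              rw [hMskx, WithLp.toLp_smul, WithLp.toLp_ofLp]
          _ = x * inner ℝ (Pv q₀) (u i) := real_inner_smul_left _ _ _
      have h2 := sub_ne_zero_of_ne (hc i)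
      have h3 : (θ i - x) * (inner ℝ (Pv q₀) (u i) : ℝ) = 0 := by linarith
      rcases mul_eq_zero.mp h3 with h4 | h4
      · exact absurd h4 h2
      · exact h4
    have hpar := u.sum_inner_mul_inner (Pv q₀) (Pv q₀)
    rw [Finset.sum_congr rfl (fun i _ => by rw [hz i, zero_mul])] at hpar
    simp only [Finset.sum_const_zero] at hpar
    have h2 : (inner ℝ (Pv q₀) (Pv q₀) : ℝ) = 0 := hpar.symm
    have h3 := inner_self_eq_zero.mp h2
    have h4 := hPq₀ lastI
    rw [h3, hcoordL] at h4
    exact hx (by simpa using h4.symm)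
  -- the Christoffel bound on the weight at x
  set Kx := ∑ j ∈ Finset.range (n' + 1), (Φ j).eval x ^ 2 with hKx
  have hq₀x : q₀.eval x = Kx := by
    rw [hq₀, Polynomial.eval_finset_sum, hKx]
    exact Finset.sum_congr rfl (fun j _ => by
      rw [Polynomial.eval_smul, smul_eq_mul, sq])
  have hKxpos : 0 < Kx := by
    have h1 : (Φ n').eval x ^ 2 ≤ Kx := by
      rw [hKx]
      exact Finset.single_le_sum (f := fun j => (Φ j).eval x ^ 2)
        (fun j _ => sq_nonneg _) (Finset.mem_range.mpr (by omega))
    have h2 : 0 < (Φ n').eval x ^ 2 :=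
      lt_of_le_of_ne (sq_nonneg _) (Ne.symm (pow_ne_zero 2 hx))
    linarith
  have hPvinner : ∀ (q : Polynomial ℝ), q.natDegree < n' + 1 → ∀ i : Fin (n' + 1),
      (inner ℝ (Pv q) (u i) : ℝ) = q.eval (θ i) * inner ℝ (Pv 1) (u i) := by
    intro q hqd i
    have hq' : q = ∑ e ∈ Finset.range (n' + 1), q.coeff e • (X ^ e : Polynomial ℝ) := by
      conv_lhs => rw [Polynomial.as_sum_range' q (n' + 1) hqd]
      exact Finset.sum_congr rfl (fun e _ => by
        rw [Polynomial.smul_X_eq_monomial])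
    have hPvq : ∀ jj : Fin (n' + 1),
        Pv q jj = ∑ e ∈ Finset.range (n' + 1), q.coeff e * Pv (X ^ e) jj := by
      intro jj
      show MSpr μ nn q (Φ (jj : ℕ)) = _
      conv_lhs => rw [hq']
      rw [MSpr_sum_left]
    rw [hinner]
    calc ∑ jj, Pv q jj * u i jj
        = ∑ jj : Fin (n' + 1), ∑ e ∈ Finset.range (n' + 1),
            q.coeff e * (Pv (X ^ e) jj * u i jj) := by
          refine Finset.sum_congr rfl (fun jj _ => ?_)
          rw [hPvq jj, Finset.sum_mul]
          exact Finset.sum_congr rfl (fun e _ => by ring)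
      _ = ∑ e ∈ Finset.range (n' + 1), q.coeff e * ∑ jj, Pv (X ^ e) jj * u i jj := by
          rw [Finset.sum_comm]
          exact Finset.sum_congr rfl (fun e _ => by rw [Finset.mul_sum])
      _ = ∑ e ∈ Finset.range (n' + 1), q.coeff e * (θ i ^ e * inner ℝ (Pv 1) (u i)) := by
          refine Finset.sum_congr rfl (fun e he => ?_)
          rw [← hinner, ← WithLp.toLp_ofLp (x := Pv (X ^ e)), ← hpow e (Nat.lt_succ_iff.mp (Finset.mem_range.mp he)), hpowvec]
      _ = q.eval (θ i) * inner ℝ (Pv 1) (u i) := by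
          rw [Polynomial.eval_eq_sum_range' hqd, Finset.sum_mul]
          exact Finset.sum_congr rfl (fun e _ => by ring)
  have hkey : ∀ i : Fin (n' + 1), θ i = x →
      (inner ℝ (Pv q₀) (u i) : ℝ) = Kx * inner ℝ (Pv 1) (u i) := by
    intro i hθi
    rw [hPvinner q₀ hq₀nat i, hθi, hq₀x]
  have hKq : (inner ℝ (Pv q₀) (Pv q₀) : ℝ) = Kx := by
    rw [hinner, hKx, ← Fin.sum_univ_eq_sum_range (fun j => (Φ j).eval x ^ 2) (n' + 1)]
    exact Finset.sum_congr rfl (fun i _ => by rw [hPq₀ i, sq])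
  have hbessel : ∑ i ∈ Finset.univ.filter (fun i => θ i = x),
      (inner ℝ (Pv q₀) (u i) : ℝ) ^ 2 ≤ Kx := by
    have h1 : ∑ i, (inner ℝ (Pv q₀) (u i) : ℝ) ^ 2 = Kx := by
      rw [← hKq, ← u.sum_inner_mul_inner (Pv q₀) (Pv q₀)]
      exact Finset.sum_congr rfl (fun i _ => by
        rw [real_inner_comm (u i) (Pv q₀), sq])
    rw [← h1]
    exact Finset.sum_le_sum_of_subset_of_nonneg (Finset.subset_univ _)
      (fun i _ _ => sq_nonneg _)
  have hWx : (∑ i ∈ Finset.univ.filter (fun i => θ i = x), w i) * Kx ≤ 1 := by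
    have h2 : ∑ i ∈ Finset.univ.filter (fun i => θ i = x),
        (inner ℝ (Pv q₀) (u i) : ℝ) ^ 2
          = Kx ^ 2 * ∑ i ∈ Finset.univ.filter (fun i => θ i = x), w i := by
      rw [Finset.mul_sum]
      refine Finset.sum_congr rfl (fun i hi => ?_)
      rw [hkey i (Finset.mem_filter.mp hi).2, hw]
      simp only []
      ring
    have h3 : Kx ^ 2 * ∑ i ∈ Finset.univ.filter (fun i => θ i = x), w i ≤ Kx := by
      rw [← h2]
      exact hbessel
    have h4 : 0 ≤ ∑ i ∈ Finset.univ.filter (fun i => θ i = x), w i :=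
      Finset.sum_nonneg (fun i _ => hwnn i)
    nlinarith [hKxpos]
  exact ⟨θ, w, hwnn, hnode, hquad, hWx⟩



/-- The Markov–Stieltjes minorant polynomial (by reflection). -/
lemma MS_minorant (x : ℝ) (LA B : Finset ℝ)
    (hLA : ∀ a ∈ LA, a < x) (hB : ∀ b ∈ B, x < b) :
    ∃ r : Polynomial ℝ, r.natDegree ≤ 2 * (LA.card + B.card) ∧
      (∀ y : ℝ, r.eval y ≤ 1) ∧
      (∀ y : ℝ, x ≤ y → r.eval y ≤ 0) ∧
      (∀ a ∈ LA, r.eval a = 1) ∧ r.eval x = 0 ∧ (∀ b ∈ B, r.eval b = 0) := by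
  classical
  obtain ⟨R, hdeg, h1, h0, hval1, hvalx, hval0⟩ :=
    MS_majorant (-x) (B.image (fun t => -t)) (LA.image (fun t => -t))
      (by
        intro a ha
        obtain ⟨b, hb, rfl⟩ := Finset.mem_image.mp ha
        exact neg_lt_neg (hB b hb))
      (by
        intro b hb
        obtain ⟨a, ha, rfl⟩ := Finset.mem_image.mp hb
        exact neg_lt_neg (hLA a ha))
  have hneginj : Function.Injective (fun t : ℝ => -t) := fun a b h => by simpa using h
  have hcards : (B.image (fun t => -t)).card = B.card :=
    Finset.card_image_of_injective _ hneginj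
  have hcardl : (LA.image (fun t => -t)).card = LA.card :=
    Finset.card_image_of_injective _ hneginj
  have hev : ∀ y : ℝ, (1 - R.comp (-X) : Polynomial ℝ).eval y = 1 - R.eval (-y) := by
    intro y
    rw [Polynomial.eval_sub, Polynomial.eval_one, Polynomial.eval_comp]
    simp
  refine ⟨1 - R.comp (-X), ?_, ?_, ?_, ?_, ?_, ?_⟩
  · refine le_trans (Polynomial.natDegree_sub_le _ _) ?_
    simp only [Polynomial.natDegree_one]
    rw [Polynomial.natDegree_comp]
    have hnx : (-X : Polynomial ℝ).natDegree = 1 := by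
      rw [Polynomial.natDegree_neg, Polynomial.natDegree_X]
    rw [hnx, mul_one]
    rw [hcards, hcardl] at hdeg
    omega
  · intro y
    rw [hev]
    have := h0 (-y)
    linarith
  · intro y hy
    rw [hev]
    have := h1 (-y) (neg_le_neg hy)
    linarith
  · intro a ha
    rw [hev, hval0 (-a) (Finset.mem_image_of_mem _ ha)]
    ring
  · rw [hev, hvalx]
    ring
  · intro b hb
    rw [hev, hval1 (-b) (Finset.mem_image_of_mem _ hb)]
    ring


set_option maxHeartbeats 1000000 in
/-- If `D` is a `t`-design in a DDR finite metric space, then the c.d.f. of distances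
in `D` differs from that of the whole space by at most the Christoffel function
`λ(x) = (Σ_{i=0}^{⌊t/2⌋} Φ_i(x)²)⁻¹`. -/
theorem design_cdf_bound {X : Type*} [Fintype X] [Nonempty X]
    (d : X → X → ℕ) (n : ℕ)
    (hsymm : ∀ x y, d x y = d y x)
    (hzero : ∀ x y, d x y = 0 ↔ x = y)
    (htri : ∀ x y z, d x y ≤ d x z + d z y)
    (hdiam : ∀ x y, d x y ≤ n)
    (v : ℕ → ℕ)
    (hDDR : ∀ x i, (Finset.univ.filter fun y => d x y = i).card = v i)
    (N : ℕ) (hN : N ≤ n)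
    (Φ : ℕ → Polynomial ℝ)
    (hdeg : ∀ i ≤ N, (Φ i).degree = i)
    (horth : ∀ i ≤ N, ∀ j ≤ N,
      (1 / (Fintype.card X : ℝ)) * ∑ k ∈ Finset.range (n + 1),
        (v k : ℝ) * (Φ i).eval (k : ℝ) * (Φ j).eval (k : ℝ) = if i = j then 1 else 0)
    (D : Finset X) (hD : D.Nonempty)
    (f : ℕ → ℝ)
    (hf : ∀ k, f k = ((D ×ˢ D).filter fun p => d p.1 p.2 = k).card / (D.card : ℝ) ^ 2)
    (t : ℕ) (ht1 : 1 ≤ t) (htN : t ≤ N)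
    (hdesign : ∀ i, 1 ≤ i → i ≤ t →
      ∑ j ∈ Finset.range (n + 1), f j * (j : ℝ) ^ i
        = ∑ j ∈ Finset.range (n + 1), ((v j : ℝ) / Fintype.card X) * (j : ℝ) ^ i)
    (lam : ℝ → ℝ)
    (hlam : ∀ x : ℝ, lam x = (∑ i ∈ Finset.range (t / 2 + 1), ((Φ i).eval x) ^ 2)⁻¹)
    (FD FX : ℝ → ℝ)
    (hFD : ∀ x : ℝ, FD x = ∑ i ∈ (Finset.range (n + 1)).filter (fun i : ℕ => (i : ℝ) ≤ x), f i)
    (hFX : ∀ x : ℝ, FX x = ∑ i ∈ (Finset.range (n + 1)).filter (fun i : ℕ => (i : ℝ) ≤ x),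
        (v i : ℝ) / Fintype.card X) :
    ∀ x : ℝ, |FD x - FX x| ≤ lam x := by
  classical
  intro x
  have cardXpos : (0:ℝ) < (Fintype.card X : ℝ) := by
    exact_mod_cast Fintype.card_pos
  set μf : ℕ → ℝ := fun k => (v k : ℝ) / (Fintype.card X : ℝ) with hμf
  have horthMS : ∀ i ≤ N, ∀ j ≤ N, MSpr μf n (Φ i) (Φ j) = if i = j then 1 else 0 := by
    intro i hi j hj
    rw [← horth i hi j hj]
    unfold MSpr
    rw [Finset.mul_sum]
    refine Finset.sum_congr rfl (fun k _ => ?_)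
    rw [hμf]
    field_simp
  obtain ⟨x₀⟩ := ‹Nonempty X›
  have hvsum : ∑ k ∈ Finset.range (n+1), (v k : ℝ) = (Fintype.card X : ℝ) := by
    have h1 : (Finset.univ : Finset X).card
        = ∑ k ∈ Finset.range (n+1), ((Finset.univ.filter fun y => d x₀ y = k)).card :=
      Finset.card_eq_sum_card_fiberwise
        (fun y _ => Finset.mem_range.mpr (Nat.lt_succ_of_le (hdiam x₀ y)))
    have h2 : ∑ k ∈ Finset.range (n+1), (v k : ℝ) = ((Finset.univ : Finset X).card : ℝ) := by
      rw [h1]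
      push_cast
      exact Finset.sum_congr rfl (fun k _ => by rw [hDDR x₀ k])
    rw [h2, Finset.card_univ]
  have hμ1 : ∑ k ∈ Finset.range (n+1), μf k = 1 := by
    rw [hμf, ← Finset.sum_div, hvsum, div_self (ne_of_gt cardXpos)]
  have hDpos : (0:ℝ) < (D.card : ℝ) := by exact_mod_cast Finset.card_pos.mpr hD
  have hν1 : ∑ k ∈ Finset.range (n+1), f k = 1 := by
    have h1 : (D ×ˢ D).card
        = ∑ k ∈ Finset.range (n+1), (((D ×ˢ D).filter fun p => d p.1 p.2 = k)).card :=
      Finset.card_eq_sum_card_fiberwise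
        (fun p _ => Finset.mem_range.mpr (Nat.lt_succ_of_le (hdiam p.1 p.2)))
    have h2 : ∑ k ∈ Finset.range (n+1), f k
        = ((D ×ˢ D).card : ℝ) / (D.card : ℝ)^2 := by
      rw [Finset.sum_congr rfl (fun k _ => hf k), ← Finset.sum_div]
      congr 1
      rw [h1]
      push_cast
      rfl
    rw [h2, Finset.card_product]
    push_cast
    field_simp
  have hmom : ∀ g : Polynomial ℝ, g.natDegree ≤ t →
      ∑ k ∈ Finset.range (n+1), f k * g.eval (k : ℝ)
        = ∑ k ∈ Finset.range (n+1), μf k * g.eval (k : ℝ) := by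
    intro g hg
    have hmon : ∀ e ∈ Finset.range (t+1),
        ∑ k ∈ Finset.range (n+1), f k * ((k : ℝ))^e
          = ∑ k ∈ Finset.range (n+1), μf k * ((k : ℝ))^e := by
      intro e he
      rcases Nat.eq_zero_or_pos e with h0 | h0
      · subst h0
        simp only [pow_zero, mul_one]
        rw [hν1, hμ1]
      · rw [hμf]
        exact hdesign e h0 (Nat.lt_succ_iff.mp (Finset.mem_range.mp he))
    have hev : ∀ y : ℝ, g.eval y = ∑ e ∈ Finset.range (t+1), g.coeff e * y^e :=
      fun y => Polynomial.eval_eq_sum_range' (by omega) y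
    have swap : ∀ ρ : ℕ → ℝ,
        ∑ k ∈ Finset.range (n+1), ρ k * g.eval (k : ℝ)
          = ∑ e ∈ Finset.range (t+1), g.coeff e
              * ∑ k ∈ Finset.range (n+1), ρ k * ((k : ℝ))^e := by
      intro ρ
      calc ∑ k ∈ Finset.range (n+1), ρ k * g.eval (k : ℝ)
          = ∑ k ∈ Finset.range (n+1), ∑ e ∈ Finset.range (t+1),
              g.coeff e * (ρ k * ((k : ℝ))^e) := by
            refine Finset.sum_congr rfl (fun k _ => ?_)
            rw [hev, Finset.mul_sum]
            exact Finset.sum_congr rfl (fun e _ => by ring)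
        _ = ∑ e ∈ Finset.range (t+1), g.coeff e
              * ∑ k ∈ Finset.range (n+1), ρ k * ((k : ℝ))^e := by
            rw [Finset.sum_comm]
            exact Finset.sum_congr rfl (fun e _ => by rw [Finset.mul_sum])
    rw [swap f, swap μf]
    exact Finset.sum_congr rfl (fun e he => by rw [hmon e he])
  -- Φ 0 is a constant of square one
  have hΦ0sq : ∀ yy : ℝ, (Φ 0).eval yy ^ 2 = 1 := by
    have hd0 := hdeg 0 (Nat.zero_le N)
    rw [Nat.cast_zero] at hd0
    have hC : Φ 0 = C ((Φ 0).coeff 0) := Polynomial.eq_C_of_degree_le_zero (le_of_eq hd0)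
    have h00 := horthMS 0 (Nat.zero_le N) 0 (Nat.zero_le N)
    rw [if_pos rfl] at h00
    unfold MSpr at h00
    have h2 : ∑ k ∈ Finset.range (n+1), μf k * (Φ 0).eval (k : ℝ) * (Φ 0).eval (k : ℝ)
        = ((Φ 0).coeff 0)^2 * ∑ k ∈ Finset.range (n+1), μf k := by
      rw [Finset.mul_sum]
      refine Finset.sum_congr rfl (fun k _ => ?_)
      conv_lhs => rw [hC]
      simp only [Polynomial.eval_C]
      ring
    rw [h2, hμ1, mul_one] at h00
    intro yy
    conv_lhs => rw [hC]
    simp only [Polynomial.eval_C]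
    exact h00
  set κ := t / 2 with hκdef
  have hκN : κ ≤ N := le_trans (Nat.div_le_self t 2) htN
  have hP0 : (Φ 0).eval x ≠ 0 := by
    intro h
    have h2 := hΦ0sq x
    rw [h] at h2
    norm_num at h2
  set r := Nat.findGreatest (fun j => (Φ j).eval x ≠ 0) κ with hrdef
  have hrκ : r ≤ κ := Nat.findGreatest_le κ
  have hrP : (Φ r).eval x ≠ 0 := by
    have h := Nat.findGreatest_spec (P := fun j => (Φ j).eval x ≠ 0) (m := 0)
      (Nat.zero_le κ) hP0
    simpa [hrdef] using h
  have hrzero : ∀ j, r < j → j ≤ κ → (Φ j).eval x = 0 := by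
    intro j h1 h2
    by_contra hc
    exact absurd (Nat.le_findGreatest (P := fun j => (Φ j).eval x ≠ 0) h2 hc) (by omega)
  have hrN : r ≤ N := le_trans hrκ hκN
  obtain ⟨θ, w, hwnn, ⟨i₀, hi₀⟩, hquadr, hWK⟩ :=
    MS_quadrature n r μf Φ
      (fun i hi j hj => horthMS i (le_trans hi hrN) j (le_trans hj hrN))
      (fun i hi => hdeg i (le_trans hi hrN))
      x hrP
  set Kr := ∑ j ∈ Finset.range (r+1), (Φ j).eval x ^ 2 with hKr
  have hKrpos : 0 < Kr := by
    have h1 : (Φ 0).eval x ^ 2 ≤ Kr := by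
      rw [hKr]
      exact Finset.single_le_sum (f := fun j => (Φ j).eval x ^ 2)
        (fun j _ => sq_nonneg _) (Finset.mem_range.mpr (by omega))
    have h2 := hΦ0sq x
    linarith
  have hKκ : ∑ j ∈ Finset.range (κ+1), (Φ j).eval x ^ 2 = Kr := by
    rw [hKr, ← Finset.sum_range_add_sum_Ico _ (by omega : r + 1 ≤ κ + 1)]
    have h0 : ∑ j ∈ Finset.Ico (r+1) (κ+1), (Φ j).eval x ^ 2 = 0 :=
      Finset.sum_eq_zero (fun j hj => by
        obtain ⟨h1, h2⟩ := Finset.mem_Ico.mp hj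
        rw [hrzero j (by omega) (by omega)]
        ring)
    rw [h0, add_zero]
  -- node sets
  set nodes := Finset.univ.image θ with hnodes
  set LAx := nodes.filter (fun z => z < x) with hLAxdef
  set Bx := nodes.filter (fun z => x < z) with hBxdef
  have hxnodes : x ∈ nodes := by
    rw [hnodes]
    exact Finset.mem_image.mpr ⟨i₀, Finset.mem_univ _, hi₀⟩
  have hcard : LAx.card + Bx.card ≤ r := by
    have hdisj : Disjoint LAx Bx := by
      rw [Finset.disjoint_left]
      intro z h1 h2
      rw [hLAxdef, Finset.mem_filter] at h1
      rw [hBxdef, Finset.mem_filter] at h2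
      exact absurd (h1.2.trans h2.2) (lt_irrefl z)
    have hsub : LAx ∪ Bx ⊆ nodes.erase x := by
      intro z hz
      rcases Finset.mem_union.mp hz with h | h
      · rw [hLAxdef, Finset.mem_filter] at h
        exact Finset.mem_erase.mpr ⟨ne_of_lt h.2, h.1⟩
      · rw [hBxdef, Finset.mem_filter] at h
        exact Finset.mem_erase.mpr ⟨ne_of_gt h.2, h.1⟩
    have h1 : (LAx ∪ Bx).card ≤ (nodes.erase x).card := Finset.card_le_card hsub
    rw [Finset.card_union_of_disjoint hdisj] at h1
    have h2 : (nodes.erase x).card = nodes.card - 1 := Finset.card_erase_of_mem hxnodes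
    have h3 : nodes.card ≤ r + 1 := by
      rw [hnodes]
      exact le_trans Finset.card_image_le (by simp)
    have h4 : 1 ≤ nodes.card := Finset.card_pos.mpr ⟨x, hxnodes⟩
    omega
  obtain ⟨R, hRdeg, hR1, hR0, hRa, hRx, hRb⟩ :=
    MS_majorant x LAx Bx (fun a ha => (Finset.mem_filter.mp ha).2)
      (fun b hb => (Finset.mem_filter.mp hb).2)
  obtain ⟨rr, hrrdeg, hrr1, hrr0, hrra, hrrx, hrrb⟩ :=
    MS_minorant x LAx Bx (fun a ha => (Finset.mem_filter.mp ha).2)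
      (fun b hb => (Finset.mem_filter.mp hb).2)
  have hrt : 2 * r ≤ t := by omega
  have hRdeg2r : R.natDegree ≤ 2 * r := le_trans hRdeg (by omega)
  have hRdegt : R.natDegree ≤ t := le_trans hRdeg2r hrt
  have hrrdeg2r : rr.natDegree ≤ 2 * r := le_trans hrrdeg (by omega)
  have hrrdegt : rr.natDegree ≤ t := le_trans hrrdeg2r hrt
  set Slt := ∑ i ∈ Finset.univ.filter (fun i => θ i < x), w i with hSltdef
  set Sle := ∑ i ∈ Finset.univ.filter (fun i => θ i ≤ x), w i with hSledef
  set Weq := ∑ i ∈ Finset.univ.filter (fun i => θ i = x), w i with hWeqdef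
  have hsplitS : Sle = Slt + Weq := by
    rw [hSledef, hSltdef, hWeqdef, ← Finset.sum_union (by
      rw [Finset.disjoint_left]
      intro i h1 h2
      rw [Finset.mem_filter] at h1 h2
      exact absurd h1.2 (by rw [h2.2]; exact lt_irrefl x))]
    congr 1
    ext i
    simp only [Finset.mem_filter, Finset.mem_union, Finset.mem_univ, true_and]
    constructor
    · intro h
      rcases lt_or_eq_of_le h with h1 | h1
      · exact Or.inl h1
      · exact Or.inr h1
    · rintro (h | h)
      · exact le_of_lt h
      · exact le_of_eq h
  have hθmem : ∀ i, θ i ∈ nodes := by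
    intro i
    rw [hnodes]
    exact Finset.mem_image.mpr ⟨i, Finset.mem_univ _, rfl⟩
  have hRquad : ∑ i, w i * R.eval (θ i) = Sle := by
    have h1 : ∀ i, w i * R.eval (θ i) = if θ i ≤ x then w i else 0 := by
      intro i
      by_cases h : θ i ≤ x
      · rw [if_pos h]
        rcases lt_or_eq_of_le h with h2 | h2
        · rw [hRa _ (Finset.mem_filter.mpr ⟨hθmem i, h2⟩), mul_one]
        · rw [h2, hRx, mul_one]
      · rw [if_neg h, hRb _ (Finset.mem_filter.mpr ⟨hθmem i, not_le.mp h⟩), mul_zero]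
    rw [Finset.sum_congr rfl (fun i _ => h1 i), hSledef, Finset.sum_filter]
  have hrrquad : ∑ i, w i * rr.eval (θ i) = Slt := by
    have h1 : ∀ i, w i * rr.eval (θ i) = if θ i < x then w i else 0 := by
      intro i
      by_cases h : θ i < x
      · rw [if_pos h, hrra _ (Finset.mem_filter.mpr ⟨hθmem i, h⟩), mul_one]
      · rw [if_neg h]
        rcases eq_or_lt_of_le (not_lt.mp h) with h2 | h2
        · rw [← h2, hrrx, mul_zero]
        · rw [hrrb _ (Finset.mem_filter.mpr ⟨hθmem i, h2⟩), mul_zero]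
    rw [Finset.sum_congr rfl (fun i _ => h1 i), hSltdef, Finset.sum_filter]
  have hbound : ∀ ρ : ℕ → ℝ, (∀ k, k ∈ Finset.range (n+1) → 0 ≤ ρ k) →
      (∀ g : Polynomial ℝ, g.natDegree ≤ t →
        ∑ k ∈ Finset.range (n+1), ρ k * g.eval (k : ℝ)
          = ∑ k ∈ Finset.range (n+1), μf k * g.eval (k : ℝ)) →
      Slt ≤ ∑ k ∈ (Finset.range (n+1)).filter (fun k : ℕ => (k : ℝ) ≤ x), ρ k
        ∧ ∑ k ∈ (Finset.range (n+1)).filter (fun k : ℕ => (k : ℝ) ≤ x), ρ k ≤ Sle := by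
    intro ρ hρnn hρmom
    constructor
    · have c1 : Slt = ∑ k ∈ Finset.range (n+1), ρ k * rr.eval (k : ℝ) := by
        rw [← hrrquad, ← hquadr rr hrrdeg2r, ← hρmom rr hrrdegt]
      have c2 : ∑ k ∈ Finset.range (n+1), ρ k * rr.eval (k : ℝ)
          ≤ ∑ k ∈ (Finset.range (n+1)).filter (fun k : ℕ => (k : ℝ) ≤ x),
              ρ k * rr.eval (k : ℝ) := by
        rw [← Finset.sum_filter_add_sum_filter_not (Finset.range (n+1))
          (fun k : ℕ => (k : ℝ) ≤ x) (fun k => ρ k * rr.eval (k : ℝ))]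
        have h2 : ∑ k ∈ (Finset.range (n+1)).filter (fun k : ℕ => ¬ (k : ℝ) ≤ x),
            ρ k * rr.eval (k : ℝ) ≤ 0 :=
          Finset.sum_nonpos (fun k hk => by
            have hk1 := Finset.mem_filter.mp hk
            have hρk := hρnn k hk1.1
            have hrrk := hrr0 (k : ℝ) (le_of_lt (not_le.mp hk1.2))
            exact mul_nonpos_iff.mpr (Or.inl ⟨hρk, hrrk⟩))
        linarith
      have c3 : ∑ k ∈ (Finset.range (n+1)).filter (fun k : ℕ => (k : ℝ) ≤ x),
          ρ k * rr.eval (k : ℝ)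
            ≤ ∑ k ∈ (Finset.range (n+1)).filter (fun k : ℕ => (k : ℝ) ≤ x), ρ k :=
        Finset.sum_le_sum (fun k hk => by
          have hρk := hρnn k (Finset.mem_of_mem_filter _ hk)
          have h1 := hrr1 (k : ℝ)
          nlinarith)
      linarith
    · have c1 : Sle = ∑ k ∈ Finset.range (n+1), ρ k * R.eval (k : ℝ) := by
        rw [← hRquad, ← hquadr R hRdeg2r, ← hρmom R hRdegt]
      have c2 : ∑ k ∈ (Finset.range (n+1)).filter (fun k : ℕ => (k : ℝ) ≤ x), ρ k
          ≤ ∑ k ∈ (Finset.range (n+1)).filter (fun k : ℕ => (k : ℝ) ≤ x),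
              ρ k * R.eval (k : ℝ) :=
        Finset.sum_le_sum (fun k hk => by
          have hk1 := Finset.mem_filter.mp hk
          have hρk := hρnn k hk1.1
          have h1 := hR1 (k : ℝ) hk1.2
          nlinarith)
      have c3 : ∑ k ∈ (Finset.range (n+1)).filter (fun k : ℕ => (k : ℝ) ≤ x),
          ρ k * R.eval (k : ℝ) ≤ ∑ k ∈ Finset.range (n+1), ρ k * R.eval (k : ℝ) := by
        rw [← Finset.sum_filter_add_sum_filter_not (Finset.range (n+1))
          (fun k : ℕ => (k : ℝ) ≤ x) (fun k => ρ k * R.eval (k : ℝ))]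
        have h2 : 0 ≤ ∑ k ∈ (Finset.range (n+1)).filter (fun k : ℕ => ¬ (k : ℝ) ≤ x),
            ρ k * R.eval (k : ℝ) :=
          Finset.sum_nonneg (fun k hk => by
            have hk1 := Finset.mem_filter.mp hk
            exact mul_nonneg (hρnn k hk1.1) (hR0 (k : ℝ)))
        linarith
      linarith
  have hνb := hbound f (fun k _ => by
      rw [hf k]
      exact div_nonneg (Nat.cast_nonneg _) (pow_nonneg (Nat.cast_nonneg _) 2)) hmom
  have hμb := hbound μf (fun k _ => by
      rw [hμf]
      exact div_nonneg (Nat.cast_nonneg _) (le_of_lt cardXpos)) (fun g _ => rfl)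
  have hWle : Weq ≤ Kr⁻¹ := by
    rw [inv_eq_one_div, le_div_iff₀ hKrpos]
    exact hWK
  rw [hFD x, hFX x, hlam x, hKκ, abs_le]
  have e1 := hνb.1
  have e2 := hνb.2
  have e3 := hμb.1
  have e4 := hμb.2
  constructor
  · linarith
  · linarith

end MSproof
end

section
/- If D is a binary orthogonal array with n columns of strength at least 5, then for every x, |F_D(x) − F_X(x)| < 2(n−1)/(3n−2), where F_X is the c.d.f. of the binomial distribution F_X(x) = 2⁻ⁿ Σ_{i ≤ x} C(n,i) and F_D is the c.d.f. of the Hamming distance distribution of D. -/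
open Finset
set_option linter.unusedSectionVars false


lemma centralBinom_sq_bound : ∀ m : ℕ, (3*m+1) * (Nat.centralBinom m)^2 ≤ 16^m := by
  intro m
  induction m with
  | zero => simp [Nat.centralBinom]
  | succ m ih =>
    have h := Nat.succ_mul_centralBinom_succ m
    have h2 : ((m+1) * Nat.centralBinom (m+1))^2 = (2*(2*m+1))^2 * (Nat.centralBinom m)^2 := by
      rw [h]; ring
    have key : (3*(m+1)+1) * (2*(2*m+1))^2 ≤ 16 * (m+1)^2 * (3*m+1) := by nlinarith
    have : (m+1)^2 * ((3*(m+1)+1) * (Nat.centralBinom (m+1))^2) ≤ (m+1)^2 * 16^(m+1) := by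
      calc (m+1)^2 * ((3*(m+1)+1) * (Nat.centralBinom (m+1))^2)
          = (3*(m+1)+1) * (((m+1) * Nat.centralBinom (m+1))^2) := by ring
        _ = (3*(m+1)+1) * ((2*(2*m+1))^2 * (Nat.centralBinom m)^2) := by rw [h2]
        _ = ((3*(m+1)+1) * (2*(2*m+1))^2) * (Nat.centralBinom m)^2 := by ring
        _ ≤ (16 * (m+1)^2 * (3*m+1)) * (Nat.centralBinom m)^2 :=
            Nat.mul_le_mul_right _ key
        _ = (16 * (m+1)^2) * ((3*m+1) * (Nat.centralBinom m)^2) := by ring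
        _ ≤ (16 * (m+1)^2) * 16^m := Nat.mul_le_mul_left _ ih
        _ = (m+1)^2 * 16^(m+1) := by ring
    exact Nat.le_of_mul_le_mul_left this (by positivity)

lemma middle_binom_bound (n : ℕ) : 3*n * (n.choose (n/2))^2 ≤ 2 * 4^n := by
  rcases Nat.even_or_odd n with ⟨m, hm⟩ | ⟨m, hm⟩
  · subst hm
    have h1 : (m+m)/2 = m := by omega
    rw [h1]
    have : (m+m).choose m = Nat.centralBinom m := by
      rw [Nat.centralBinom_eq_two_mul_choose]; congr 1; omega
    rw [this]
    have h16 : 4^(m+m) = 16^m := by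
      rw [show (16:ℕ) = 4^2 by norm_num, ← pow_mul]; congr 1; omega
    rw [h16]
    have := centralBinom_sq_bound m
    nlinarith [this]
  · subst hm
    have h1 : (2*m+1)/2 = m := by omega
    rw [h1]
    -- (m+1) * C(2m+1, m) = (2m+1) * C(2m, m)
    have hsymm : (2*m+1).choose m = (2*m+1).choose (m+1) := by
      have := Nat.choose_symm (n := 2*m+1) (k := m+1) (by omega)
      rw [show 2*m+1-(m+1) = m by omega] at this
      exact this
    have hrec : (2*m+1) * (2*m).choose m = (2*m+1).choose (m+1) * (m+1) := by
      have := Nat.add_one_mul_choose_eq (2*m) m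
      simpa [Nat.succ_eq_add_one] using this
    have hrec' : (m+1) * ((2*m+1).choose m) = (2*m+1) * Nat.centralBinom m := by
      rw [hsymm, Nat.centralBinom_eq_two_mul_choose, hrec]; ring
    have h16 : 4^(2*m+1) = 4 * 16^m := by
      rw [show (16:ℕ) = 4^2 by norm_num, ← pow_mul]; ring_nf
    have key : 3*(2*m+1) * (2*m+1)^2 ≤ 8 * (m+1)^2 * (3*m+1) := by nlinarith
    have hc := centralBinom_sq_bound m
    have main : (m+1)^2 * (3*(2*m+1) * ((2*m+1).choose m)^2) ≤ (m+1)^2 * (2 * 4^(2*m+1)) := by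
      calc (m+1)^2 * (3*(2*m+1) * ((2*m+1).choose m)^2)
          = 3*(2*m+1) * (((m+1) * ((2*m+1).choose m))^2) := by ring
        _ = 3*(2*m+1) * ((2*m+1)^2 * (Nat.centralBinom m)^2) := by rw [hrec']; ring
        _ = (3*(2*m+1) * (2*m+1)^2) * (Nat.centralBinom m)^2 := by ring
        _ ≤ (8 * (m+1)^2 * (3*m+1)) * (Nat.centralBinom m)^2 := Nat.mul_le_mul_right _ key
        _ = (8 * (m+1)^2) * ((3*m+1) * (Nat.centralBinom m)^2) := by ring
        _ ≤ (8 * (m+1)^2) * 16^m := Nat.mul_le_mul_left _ hc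
        _ = (m+1)^2 * (2 * (4 * 16^m)) := by ring
        _ = (m+1)^2 * (2 * 4^(2*m+1)) := by rw [h16]
    exact Nat.le_of_mul_le_mul_left main (by positivity)


-- reflection: tail sum equals head sum
lemma choose_tail_sum (n k : ℕ) (hk : k ≤ n + 1) :
    ∑ i ∈ Finset.Ico k (n+1), n.choose i = ∑ i ∈ Finset.range (n+1-k), n.choose i := by
  rw [Finset.range_eq_Ico]
  apply Finset.sum_nbij' (fun i => n - i) (fun i => n - i)
  · intro a ha; simp only [Finset.mem_Ico] at *; omega
  · intro a ha; simp only [Finset.mem_Ico] at *; omega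
  · intro a ha; simp only [Finset.mem_Ico] at ha; omega
  · intro a ha; simp only [Finset.mem_Ico] at ha; omega
  · intro a ha; simp only [Finset.mem_Ico] at ha
    exact (Nat.choose_symm (by omega)).symm

lemma choose_head_tail (n k : ℕ) (hk : k < n) :
    ∑ i ∈ Finset.range (k+1), n.choose i + ∑ i ∈ Finset.range (n-k), n.choose i = 2^n := by
  have h := Finset.sum_Ico_consecutive (fun i => n.choose i) (Nat.zero_le (k+1)) (by omega : k+1 ≤ n+1)
  simp only [← Finset.range_eq_Ico] at h
  rw [choose_tail_sum n (k+1) (by omega), show n+1-(k+1) = n-k by omega] at h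
  rw [h]
  exact Nat.sum_range_choose n

lemma choose_head_le (n k : ℕ) (hk : 2*k < n) :
    2 * ∑ i ∈ Finset.range (k+1), n.choose i ≤ 2^n := by
  have h := choose_head_tail n k (by omega)
  have hle : ∑ i ∈ Finset.range (k+1), n.choose i ≤ ∑ i ∈ Finset.range (n-k), n.choose i :=
    Finset.sum_le_sum_of_subset (by apply Finset.range_subset_range.2; omega)
  omega

lemma choose_head_ge (n k : ℕ) (hk : 2*k < n) :
    2^n ≤ 2 * ∑ i ∈ Finset.range (k+1), n.choose i + (n - 1 - 2*k) * n.choose (n/2) := by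
  have h := choose_head_tail n k (by omega)
  -- middle part: range (n-k) = range (k+1) ∪ Ico (k+1) (n-k)
  have hsplit := Finset.sum_Ico_consecutive (fun i => n.choose i)
    (Nat.zero_le (k+1)) (by omega : k+1 ≤ n-k)
  simp only [← Finset.range_eq_Ico] at hsplit
  beta_reduce at hsplit
  have hmid : ∑ i ∈ Finset.Ico (k+1) (n-k), n.choose i ≤ (n - 1 - 2*k) * n.choose (n/2) := by
    calc ∑ i ∈ Finset.Ico (k+1) (n-k), n.choose i
        ≤ ∑ _i ∈ Finset.Ico (k+1) (n-k), n.choose (n/2) :=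
          Finset.sum_le_sum (fun i _ => Nat.choose_le_middle i n)
      _ = (n - 1 - 2*k) * n.choose (n/2) := by
          rw [Finset.sum_const, Nat.card_Ico, smul_eq_mul]; congr 1; omega
  omega


set_option maxHeartbeats 1000000 in
lemma poly_step (n r : ℝ) (hn0 : 0 < n) (hr0 : 0 ≤ r) (hrle : r ≤ n/6) :
    (r*(2/(3*n)))*(n/4+r)^2 ≤ (n/40 + (11/10)*r)^2 := by
  rw [← sub_nonneg]
  have expand : (n/40 + (11/10)*r)^2 - (r*(2/(3*n)))*(n/4+r)^2
      = (3*n*(n/40 + (11/10)*r)^2 - 2*r*(n/4+r)^2)/(3*n) := by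
    field_simp
  rw [expand]
  apply div_nonneg _ (by linarith)
  have hcube : 2*(r*r*r) ≤ (n/3)*(r*r) := by
    have h2r : 2*r ≤ n/3 := by linarith
    have := mul_le_mul_of_nonneg_right h2r (mul_nonneg hr0 hr0)
    calc 2*(r*r*r) = 2*r*(r*r) := by ring
      _ ≤ n/3*(r*r) := this
  nlinarith [hcube, mul_nonneg (mul_nonneg hn0.le hn0.le) hr0,
    mul_nonneg hn0.le (mul_nonneg hr0 hr0), mul_pos (mul_pos hn0 hn0) hn0]


lemma key_arith (n t FD FX c : ℝ) (hn : 5 ≤ n) (ht : 1/2 ≤ t)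
    (hFD0 : 0 ≤ FD) (hFD1 : FD * (n/4 + t^2) ≤ n/4)
    (hFX2 : FX ≤ 1/2) (hFX0 : 0 ≤ FX) (hFXlb : 1/2 - (t - 1/2)*c ≤ FX)
    (hc0 : 0 ≤ c) (hc : 3*n*c^2 ≤ 2) :
    |FD - FX| < 2*(n-1)/(3*n-2) := by
  have hden : 0 < 3*n - 2 := by linarith
  have hB : 3/5 < 2*(n-1)/(3*n-2) := by
    rw [lt_div_iff₀ hden]; nlinarith
  have hB2 : 1/2 < 2*(n-1)/(3*n-2) := by
    rw [lt_div_iff₀ hden]; nlinarith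
  have hq : 0 < n/4 + t^2 := by nlinarith
  rw [abs_sub_lt_iff]
  constructor
  · -- FD - FX < B
    rcases le_or_gt n (6*t^2) with hcase | hcase
    · -- FD ≤ 3/5
      have h1 : FD ≤ 3/5 := by nlinarith
      linarith
    · -- middle zone
      have hn0 : (0:ℝ) < n := by linarith
      have hu0 : 0 ≤ t * c := by positivity
      have hcsq : c^2 ≤ 2/(3*n) := by
        rw [le_div_iff₀ (by linarith : (0:ℝ) < 3*n)]
        nlinarith [hc]
      have hu2 : (t*c)^2 ≤ t^2 * (2/(3*n)) := by
        have h := mul_le_mul_of_nonneg_left hcsq (sq_nonneg t)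
        calc (t*c)^2 = t^2 * c^2 := by ring
          _ ≤ t^2 * (2/(3*n)) := h
      have hrle : t^2 ≤ n/6 := by linarith
      -- main polynomial inequality: FD + t*c ≤ 11/10
      have hmain : FD + t*c ≤ 11/10 := by
        have hrhs : (0:ℝ) ≤ n/40 + (11/10)*t^2 := by positivity
        have hsq : ((t*c)*(n/4+t^2))^2 ≤ (t^2*(2/(3*n)))*(n/4+t^2)^2 := by
          calc ((t*c)*(n/4+t^2))^2 = (t*c)^2 * (n/4+t^2)^2 := by ring
            _ ≤ (t^2*(2/(3*n)))*(n/4+t^2)^2 :=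
              mul_le_mul_of_nonneg_right hu2 (sq_nonneg _)
        have hpoly : (t^2*(2/(3*n)))*(n/4+t^2)^2 ≤ (n/40 + (11/10)*t^2)^2 :=
          poly_step n (t^2) hn0 (sq_nonneg t) hrle
        have h2 : (t*c)*(n/4+t^2) ≤ n/40 + (11/10)*t^2 :=
          le_of_pow_le_pow_left₀ (by norm_num) hrhs (le_trans hsq hpoly)
        have hkey : n/4 ≤ (11/10 - t*c)*(n/4+t^2) := by nlinarith [h2]
        have h7 : FD*(n/4+t^2) ≤ (11/10 - t*c)*(n/4+t^2) := le_trans hFD1 hkey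
        have := le_of_mul_le_mul_right h7 hq
        linarith
      have hstep : FD - FX ≤ 3/5 := by linarith [hmain, hFXlb, hc0]
      linarith
  · -- FX - FD < B
    have : FX - FD ≤ 1/2 := by linarith
    linarith


section OA
variable {n : ℕ} (hn : 5 ≤ n) (D : Finset (Fin n → Fin 2))
  (hOA : ∀ s : Finset (Fin n), s.card = 5 → ∀ u w : Fin n → Fin 2,
      (D.filter fun x => ∀ i ∈ s, x i = u i).card
        = (D.filter fun x => ∀ i ∈ s, x i = w i).card)

include hn hOA

lemma OA_pattern_count (s : Finset (Fin n)) (hs : s.card = 5) (u : Fin n → Fin 2) :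
    32 * (D.filter fun x => ∀ i ∈ s, x i = u i).card = D.card := by
  classical
  have hsum : ∑ v : Fin n → Fin 2, (D.filter fun x => ∀ i ∈ s, x i = v i).card
      = D.card * 2^(n-5) := by
    have h1 : ∀ v : Fin n → Fin 2, (D.filter fun x => ∀ i ∈ s, x i = v i).card
        = ∑ x ∈ D, if (∀ i ∈ s, x i = v i) then 1 else 0 := fun v => Finset.card_filter _ _
    simp only [h1]
    rw [Finset.sum_comm]
    have h2 : ∀ x : Fin n → Fin 2,
        (∑ v : Fin n → Fin 2, if (∀ i ∈ s, x i = v i) then 1 else 0) = 2^(n-5) := by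
      intro x
      rw [← Finset.card_filter]
      have heq : (Finset.univ.filter fun v : Fin n → Fin 2 => ∀ i ∈ s, x i = v i)
          = Fintype.piFinset (fun i => if i ∈ s then ({x i} : Finset (Fin 2)) else Finset.univ) := by
        ext v
        simp only [Finset.mem_filter, Finset.mem_univ, true_and, Fintype.mem_piFinset]
        constructor
        · intro h i
          by_cases hi : i ∈ s
          · simp [hi, (h i hi).symm]
          · simp [hi]
        · intro h i hi
          have := h i
          simp [hi] at this
          exact this.symm
      rw [heq, Fintype.card_piFinset]
      have : ∀ i : Fin n, (if i ∈ s then ({x i} : Finset (Fin 2)) else Finset.univ).card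
          = if i ∈ s then 1 else 2 := by
        intro i; by_cases hi : i ∈ s <;> simp [hi]
      simp only [this]
      rw [Finset.prod_ite, Finset.prod_const, Finset.prod_const]
      simp only [one_pow, one_mul]
      congr 1
      have : Finset.univ.filter (fun i : Fin n => ¬ i ∈ s) = sᶜ := by
        ext i; simp
      rw [this, Finset.card_compl, Fintype.card_fin, hs]
    rw [Finset.sum_congr rfl (fun x _ => h2 x), Finset.sum_const, smul_eq_mul]
  have hconst : ∑ v : Fin n → Fin 2, (D.filter fun x => ∀ i ∈ s, x i = v i).card
      = 2^n * (D.filter fun x => ∀ i ∈ s, x i = u i).card := by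
    rw [Finset.sum_congr rfl (fun v _ => hOA s hs v u), Finset.sum_const, smul_eq_mul,
      Finset.card_univ]
    simp
  have hsum2 := hconst.symm.trans hsum
  have h5 : n - 5 + 5 = n := Nat.sub_add_cancel hn
  have hpow : (2:ℕ)^n = 2^(n-5) * 32 := by
    calc (2:ℕ)^n = 2^(n-5+5) := by rw [h5]
      _ = 2^(n-5) * 2^5 := pow_add 2 _ 5
      _ = 2^(n-5) * 32 := by norm_num
  have h2pos : 0 < 2^(n-5) := Nat.pow_pos (by norm_num)
  rw [hpow] at hsum2
  rw [mul_assoc] at hsum2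
  rw [mul_comm D.card] at hsum2
  exact Nat.eq_of_mul_eq_mul_left h2pos hsum2

lemma OA_pair_count (i j : Fin n) (hij : i ≠ j) (a b : Fin 2) :
    4 * (D.filter fun x => x i = a ∧ x j = b).card = D.card := by
  classical
  obtain ⟨s, hsub, -, hs⟩ := Finset.exists_subsuperset_card_eq
    (t := (Finset.univ : Finset (Fin n))) (s := ({i, j} : Finset (Fin n))) (n := 5)
    (Finset.subset_univ _) (by
      rw [Finset.card_insert_of_notMem (by simp [hij]), Finset.card_singleton]; omega)
    (by simp; omega)
  have hi : i ∈ s := hsub (by simp)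
  have hj : j ∈ s := hsub (by simp)
  set φ : (Fin n → Fin 2) → (Fin n → Fin 2) := fun x k => if k ∈ s then x k else 0 with hφ
  set T : Finset (Fin n → Fin 2) := Fintype.piFinset (fun k =>
    if k = i then ({a} : Finset (Fin 2)) else if k = j then {b} else if k ∈ s then Finset.univ else {0}) with hT
  have hmap : ∀ x ∈ D.filter (fun x => x i = a ∧ x j = b), φ x ∈ T := by
    intro x hx
    rw [Finset.mem_filter] at hx
    rw [hT, Fintype.mem_piFinset]
    intro k
    rcases eq_or_ne k i with rfl | hki
    · simp [hφ, hi, hx.2.1]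
    rcases eq_or_ne k j with rfl | hkj
    · simp [hφ, hj, hki, hx.2.2]
    by_cases hks : k ∈ s <;> simp [hφ, hki, hkj, hks]
  have hcard := Finset.card_eq_sum_card_fiberwise hmap
  have hfiber : ∀ t ∈ T, ((D.filter (fun x => x i = a ∧ x j = b)).filter (fun x => φ x = t)).card
      = (D.filter fun x => ∀ k ∈ s, x k = t k).card := by
    intro t ht
    rw [hT, Fintype.mem_piFinset] at ht
    have hti : t i = a := by have := ht i; simpa using this
    have htj : t j = b := by have := ht j; simp [hij.symm] at this; exact this
    have htoff : ∀ k, k ∉ s → t k = 0 := by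
      intro k hk
      have := ht k
      have hki : k ≠ i := fun h => hk (h ▸ hi)
      have hkj : k ≠ j := fun h => hk (h ▸ hj)
      simpa [hki, hkj, hk] using this
    congr 1
    ext x
    simp only [Finset.mem_filter, and_assoc]
    constructor
    · rintro ⟨hxD, hxa, hxb, hxφ⟩
      refine ⟨hxD, fun k hk => ?_⟩
      have : φ x k = t k := by rw [hxφ]
      simpa [hφ, hk] using this
    · rintro ⟨hxD, hall⟩
      refine ⟨hxD, by rw [hall i hi, hti], by rw [hall j hj, htj], ?_⟩
      funext k
      by_cases hks : k ∈ s
      · simp [hφ, hks, hall k hks]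
      · simp [hφ, hks, htoff k hks]
  have hTcard : T.card = 8 := by
    rw [hT, Fintype.card_piFinset]
    have hval : ∀ k : Fin n, (if k = i then ({a} : Finset (Fin 2)) else if k = j then {b}
        else if k ∈ s then Finset.univ else {0}).card = if k ∈ s \ {i, j} then 2 else 1 := by
      intro k
      rcases eq_or_ne k i with rfl | hki
      · simp [hi]
      rcases eq_or_ne k j with rfl | hkj
      · simp [hj, hki]
      by_cases hks : k ∈ s <;> simp [hki, hkj, hks]
    simp only [hval]
    rw [Finset.prod_ite, Finset.prod_const, Finset.prod_const]
    simp only [one_pow, mul_one]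
    have : Finset.univ.filter (fun k : Fin n => k ∈ s \ {i, j}) = s \ {i, j} := by
      ext k; simp
    rw [this]
    have : (s \ {i, j}).card = 3 := by
      rw [Finset.card_sdiff_of_subset (by intro k hk; simp at hk; rcases hk with rfl | rfl <;> assumption)]
      rw [hs, Finset.card_insert_of_notMem (by simp [hij]), Finset.card_singleton]
    rw [this]
    norm_num
  have h32 : 32 * (D.filter (fun x => x i = a ∧ x j = b)).card = 8 * D.card := by
    rw [hcard, Finset.mul_sum]
    rw [Finset.sum_congr rfl (fun t ht => by
      rw [hfiber t ht, OA_pattern_count hn D hOA s hs t])]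
    rw [Finset.sum_const, hTcard, smul_eq_mul]
  have h4 : 8 * (4 * (D.filter (fun x => x i = a ∧ x j = b)).card) = 8 * D.card := by
    linarith [h32]
  exact Nat.eq_of_mul_eq_mul_left (by norm_num) h4

lemma OA_single_count (i : Fin n) (a : Fin 2) :
    2 * (D.filter fun x => x i = a).card = D.card := by
  classical
  have hnt : Nontrivial (Fin n) := Fin.nontrivial_iff_two_le.2 (by omega)
  obtain ⟨j, hj⟩ := exists_ne i
  have h0 := OA_pair_count hn D hOA i j (fun h => hj (h.symm)) a 0
  have h1 := OA_pair_count hn D hOA i j (fun h => hj (h.symm)) a 1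
  have hne : ∀ v : Fin 2, (¬ v = 0) ↔ (v = 1) := by decide
  have hsplit := Finset.card_filter_add_card_filter_not
    (s := D.filter fun x => x i = a) (p := fun x => x j = 0)
  rw [Finset.filter_filter, Finset.filter_filter] at hsplit
  simp only [hne] at hsplit
  linarith [h0, h1, hsplit]



lemma hamming_eq_sum (u v : Fin n → Fin 2) :
    hammingDist u v = ∑ i : Fin n, (if u i ≠ v i then 1 else 0) := by
  rw [hammingDist, Finset.card_filter]

lemma OA_ne_count (i : Fin n) (u : Fin n → Fin 2) :
    2 * (D.filter fun v => u i ≠ v i).card = D.card := by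
  classical
  have h1 := OA_single_count hn D hOA i (u i)
  have heq : D.filter (fun v => u i ≠ v i) = D.filter (fun v => ¬ v i = u i) := by
    apply Finset.filter_congr; intro v _; simp [eq_comm]
  have hsplit := Finset.card_filter_add_card_filter_not
    (s := D) (p := fun v => v i = u i)
  rw [heq]
  linarith [h1, hsplit]

lemma OA_pair_ne_count (i j : Fin n) (hij : i ≠ j) (u : Fin n → Fin 2) :
    4 * (D.filter fun v => u i ≠ v i ∧ u j ≠ v j).card = D.card := by
  classical
  have hdec : ∀ z w : Fin 2, (¬ z = w) ↔ (w = z + 1) := by decide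
  have heq : D.filter (fun v => u i ≠ v i ∧ u j ≠ v j)
      = D.filter (fun v => v i = u i + 1 ∧ v j = u j + 1) := by
    apply Finset.filter_congr; intro v _
    simp only [ne_eq, hdec]
  rw [heq]
  exact OA_pair_count hn D hOA i j hij (u i + 1) (u j + 1)

lemma OA_sum_d (u : Fin n → Fin 2) :
    2 * ∑ v ∈ D, hammingDist u v = n * D.card := by
  classical
  have h1 : ∑ v ∈ D, hammingDist u v
      = ∑ i : Fin n, (D.filter fun v => u i ≠ v i).card := by
    rw [Finset.sum_congr rfl (fun v _ => hamming_eq_sum hn D hOA u v), Finset.sum_comm]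
    exact Finset.sum_congr rfl (fun i _ => (Finset.card_filter _ _).symm)
  rw [h1, Finset.mul_sum]
  rw [Finset.sum_congr rfl (fun i _ => OA_ne_count hn D hOA i u)]
  rw [Finset.sum_const, Finset.card_univ, Fintype.card_fin, smul_eq_mul]

lemma OA_sum_d_sq (u : Fin n → Fin 2) :
    4 * ∑ v ∈ D, (hammingDist u v)^2
      = 4 * (∑ v ∈ D, hammingDist u v) + n * (n-1) * D.card := by
  classical
  set f : Fin n → (Fin n → Fin 2) → ℕ := fun i v => if u i ≠ v i then 1 else 0 with hf
  set g : Fin n → Fin n → ℕ := fun i j => ∑ v ∈ D, f i v * f j v with hg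
  have hexp : ∑ v ∈ D, (hammingDist u v)^2 = ∑ i : Fin n, ∑ j : Fin n, g i j := by
    have h1 : ∀ v, (hammingDist u v)^2 = ∑ i : Fin n, ∑ j : Fin n, f i v * f j v := by
      intro v
      rw [sq, hamming_eq_sum hn D hOA u v, Finset.sum_mul_sum]
    rw [Finset.sum_congr rfl (fun v _ => h1 v), Finset.sum_comm]
    apply Finset.sum_congr rfl; intro i _
    rw [Finset.sum_comm]
  have hdiag : ∀ i, g i i = ∑ v ∈ D, f i v := by
    intro i
    apply Finset.sum_congr rfl; intro v _
    by_cases h : u i = v i <;> simp [hf, h]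
  have hoff : ∀ i j, i ≠ j → 4 * g i j = D.card := by
    intro i j hij
    have h1 : g i j = (D.filter fun v => u i ≠ v i ∧ u j ≠ v j).card := by
      rw [hg, Finset.card_filter]
      apply Finset.sum_congr rfl; intro v _
      by_cases h : u i ≠ v i <;> by_cases h' : u j ≠ v j <;> simp [hf, h, h']
    rw [h1]
    exact OA_pair_ne_count hn D hOA i j hij u
  have hsum_d : ∑ i : Fin n, g i i = ∑ v ∈ D, hammingDist u v := by
    rw [Finset.sum_congr rfl (fun i _ => hdiag i), Finset.sum_comm]
    apply Finset.sum_congr rfl; intro v _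
    exact (hamming_eq_sum hn D hOA u v).symm
  have hrow : ∀ i : Fin n, 4 * ∑ j : Fin n, g i j = 4 * g i i + (n-1) * D.card := by
    intro i
    rw [← Finset.add_sum_erase Finset.univ (g i) (Finset.mem_univ i)]
    rw [Nat.mul_add]
    congr 1
    rw [Finset.mul_sum]
    rw [Finset.sum_congr rfl (fun j hj => hoff i j (Finset.ne_of_mem_erase hj).symm)]
    rw [Finset.sum_const, smul_eq_mul, Finset.card_erase_of_mem (Finset.mem_univ i),
      Finset.card_univ, Fintype.card_fin]
  rw [hexp, Finset.mul_sum, Finset.sum_congr rfl (fun i _ => hrow i)]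
  rw [Finset.sum_add_distrib, ← Finset.mul_sum, hsum_d, Finset.sum_const,
    Finset.card_univ, Fintype.card_fin, smul_eq_mul]
  ring

lemma OA_moment1 :
    2 * ∑ p ∈ D ×ˢ D, hammingDist p.1 p.2 = n * (D.card * D.card) := by
  classical
  rw [Finset.sum_product, Finset.mul_sum]
  rw [Finset.sum_congr rfl (fun u _ => OA_sum_d hn D hOA u)]
  rw [Finset.sum_const, smul_eq_mul]
  ring

lemma OA_moment2 :
    4 * ∑ p ∈ D ×ˢ D, (hammingDist p.1 p.2)^2 = n * (n+1) * (D.card * D.card) := by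
  classical
  have h1 : ∑ p ∈ D ×ˢ D, (hammingDist p.1 p.2)^2 = ∑ u ∈ D, ∑ v ∈ D, (hammingDist u v)^2 := by
    rw [Finset.sum_product]
  have h2 : ∑ p ∈ D ×ˢ D, hammingDist p.1 p.2 = ∑ u ∈ D, ∑ v ∈ D, hammingDist u v := by
    rw [Finset.sum_product]
  have h3 : 4 * ∑ u ∈ D, ∑ v ∈ D, (hammingDist u v)^2
      = 4 * (∑ u ∈ D, ∑ v ∈ D, hammingDist u v) + D.card * (n * (n-1) * D.card) := by
    rw [Finset.mul_sum, Finset.sum_congr rfl (fun u _ => OA_sum_d_sq hn D hOA u),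
      Finset.sum_add_distrib, ← Finset.mul_sum, Finset.sum_const, smul_eq_mul]
  have hm1 := OA_moment1 hn D hOA
  rw [h2] at hm1
  rw [h1, h3]
  obtain ⟨m, rfl⟩ : ∃ m, n = m + 1 := ⟨n - 1, by omega⟩
  simp only [Nat.add_sub_cancel]
  nlinarith [hm1]

end OA


section Cheb
variable {n : ℕ} (D : Finset (Fin n → Fin 2))
  (hM1 : 2 * ∑ p ∈ D ×ˢ D, hammingDist p.1 p.2 = n * (D.card * D.card))
  (hM2 : 4 * ∑ p ∈ D ×ˢ D, (hammingDist p.1 p.2)^2 = n * (n+1) * (D.card * D.card))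

include hM1 hM2

lemma sq_dev_identity (c : ℝ) :
    ∑ p ∈ D ×ˢ D, (c - (hammingDist p.1 p.2 : ℝ))^2
      = (D.card : ℝ)^2 * ((c - n/2)^2 + n/4) := by
  have c1 : ∑ p ∈ D ×ˢ D, (hammingDist p.1 p.2 : ℝ)
      = (n : ℝ) * (D.card : ℝ)^2 / 2 := by
    have h := congrArg (fun k : ℕ => (k : ℝ)) hM1
    push_cast at h
    nlinarith [h]
  have c2 : ∑ p ∈ D ×ˢ D, ((hammingDist p.1 p.2 : ℝ))^2
      = (n : ℝ) * ((n : ℝ)+1) * (D.card : ℝ)^2 / 4 := by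
    have h := congrArg (fun k : ℕ => (k : ℝ)) hM2
    push_cast at h
    nlinarith [h]
  have hterm : ∀ p ∈ D ×ˢ D, (c - (hammingDist p.1 p.2 : ℝ))^2
      = c^2 - 2 * c * (hammingDist p.1 p.2 : ℝ) + (hammingDist p.1 p.2 : ℝ)^2 := by
    intro p _; ring
  rw [Finset.sum_congr rfl hterm, Finset.sum_add_distrib, Finset.sum_sub_distrib,
    Finset.sum_const, ← Finset.mul_sum, Finset.card_product, c1, c2]
  push_cast
  ring

lemma cantelli_low (k : ℕ) (hk : (k : ℝ) < n/2) :
    (((D ×ˢ D).filter fun p => hammingDist p.1 p.2 ≤ k).card : ℝ)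
      * ((n : ℝ)/4 + ((n : ℝ)/2 - k)^2) ≤ (D.card : ℝ)^2 * ((n : ℝ)/4) := by
  classical
  set A : ℝ := (((D ×ˢ D).filter fun p => hammingDist p.1 p.2 ≤ k).card : ℝ) with hA
  have hA0 : 0 ≤ A := by rw [hA]; positivity
  set t : ℝ := (n : ℝ)/2 - k with htdef
  have ht : 0 < t := by rw [htdef]; linarith
  set q : ℝ := (n : ℝ)/4 with hqdef
  have hq : 0 < q := by
    rw [hqdef]
    have : (0:ℝ) ≤ k := Nat.cast_nonneg k
    linarith
  set c : ℝ := (n : ℝ)/2 + q/t with hcdef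
  have hid := sq_dev_identity D hM1 hM2 c
  have hck : c - k = t + q/t := by rw [hcdef, htdef]; ring
  have hcn : c - (n : ℝ)/2 = q/t := by rw [hcdef]; ring
  have hsub : ∑ p ∈ (D ×ˢ D).filter (fun p => hammingDist p.1 p.2 ≤ k),
      (c - (hammingDist p.1 p.2 : ℝ))^2 ≤ ∑ p ∈ D ×ˢ D, (c - (hammingDist p.1 p.2 : ℝ))^2 :=
    Finset.sum_le_sum_of_subset_of_nonneg (Finset.filter_subset _ _)
      (fun p _ _ => sq_nonneg _)
  have hterm : ∀ p ∈ (D ×ˢ D).filter (fun p => hammingDist p.1 p.2 ≤ k),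
      (t + q/t)^2 ≤ (c - (hammingDist p.1 p.2 : ℝ))^2 := by
    intro p hp
    rw [Finset.mem_filter] at hp
    have hd : (hammingDist p.1 p.2 : ℝ) ≤ k := Nat.cast_le.2 hp.2
    have h1 : 0 ≤ c - k := by rw [hck]; positivity
    have h2 : c - k ≤ c - (hammingDist p.1 p.2 : ℝ) := by linarith
    rw [← hck]
    exact pow_le_pow_left₀ h1 h2 2
  have hlow : A * (t + q/t)^2
      ≤ ∑ p ∈ (D ×ˢ D).filter (fun p => hammingDist p.1 p.2 ≤ k),
        (c - (hammingDist p.1 p.2 : ℝ))^2 := by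
    calc A * (t + q/t)^2
        = ∑ _p ∈ (D ×ˢ D).filter (fun p => hammingDist p.1 p.2 ≤ k), (t + q/t)^2 := by
          rw [Finset.sum_const, nsmul_eq_mul]
      _ ≤ _ := Finset.sum_le_sum hterm
  have h3 : (D.card : ℝ)^2 * ((c - (n:ℝ)/2)^2 + (n:ℝ)/4) = (D.card : ℝ)^2 * ((q/t)^2 + q) := by
    rw [hcn, ← hqdef]
  have H : A * (t + q/t)^2 ≤ (D.card : ℝ)^2 * ((q/t)^2 + q) :=
    le_trans (le_trans hlow hsub) (le_of_eq (hid.trans h3))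
  have H2 : A * (q + t^2)^2 ≤ (D.card : ℝ)^2 * (q * (q + t^2)) := by
    have hmul := mul_le_mul_of_nonneg_right H (le_of_lt (mul_pos ht ht))
    have e1 : (t + q/t)^2 * (t * t) = (q + t^2)^2 := by field_simp; ring
    have e2 : ((q/t)^2 + q) * (t * t) = q * (q + t^2) := by field_simp
    calc A * (q + t^2)^2 = A * (t + q/t)^2 * (t*t) := by rw [← e1]; ring
      _ ≤ (D.card : ℝ)^2 * ((q/t)^2 + q) * (t*t) := hmul
      _ = (D.card : ℝ)^2 * (q * (q + t^2)) := by rw [mul_assoc, e2]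
  have hpos : 0 < q + t^2 := by positivity
  have goal2 : A * (q + t^2) * (q + t^2) ≤ (D.card : ℝ)^2 * q * (q + t^2) := by
    calc A * (q + t^2) * (q + t^2) = A * (q + t^2)^2 := by ring
      _ ≤ (D.card : ℝ)^2 * (q * (q + t^2)) := H2
      _ = (D.card : ℝ)^2 * q * (q + t^2) := by ring
  have := le_of_mul_le_mul_right goal2 hpos
  calc A * ((n : ℝ)/4 + ((n : ℝ)/2 - k)^2) = A * (q + t^2) := by rw [← hqdef, ← htdef]
    _ ≤ (D.card : ℝ)^2 * q := this
    _ = (D.card : ℝ)^2 * ((n : ℝ)/4) := by rw [hqdef]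

lemma cantelli_high (k : ℕ) (hk : (n : ℝ)/2 < (k : ℝ) + 1) :
    (((D ×ˢ D).filter fun p => ¬ hammingDist p.1 p.2 ≤ k).card : ℝ)
      * ((n : ℝ)/4 + ((k : ℝ) + 1 - (n : ℝ)/2)^2) ≤ (D.card : ℝ)^2 * ((n : ℝ)/4) := by
  classical
  set A : ℝ := (((D ×ˢ D).filter fun p => ¬ hammingDist p.1 p.2 ≤ k).card : ℝ) with hA
  have hA0 : 0 ≤ A := by rw [hA]; positivity
  set t : ℝ := (k : ℝ) + 1 - (n : ℝ)/2 with htdef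
  have ht : 0 < t := by rw [htdef]; linarith
  set q : ℝ := (n : ℝ)/4 with hqdef
  have hq : 0 ≤ q := by rw [hqdef]; positivity
  set c : ℝ := (n : ℝ)/2 - q/t with hcdef
  have hid := sq_dev_identity D hM1 hM2 c
  have hck : (k : ℝ) + 1 - c = t + q/t := by rw [hcdef, htdef]; ring
  have hcn : c - (n : ℝ)/2 = -(q/t) := by rw [hcdef]; ring
  have hsub : ∑ p ∈ (D ×ˢ D).filter (fun p => ¬ hammingDist p.1 p.2 ≤ k),
      (c - (hammingDist p.1 p.2 : ℝ))^2 ≤ ∑ p ∈ D ×ˢ D, (c - (hammingDist p.1 p.2 : ℝ))^2 :=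
    Finset.sum_le_sum_of_subset_of_nonneg (Finset.filter_subset _ _)
      (fun p _ _ => sq_nonneg _)
  have hterm : ∀ p ∈ (D ×ˢ D).filter (fun p => ¬ hammingDist p.1 p.2 ≤ k),
      (t + q/t)^2 ≤ (c - (hammingDist p.1 p.2 : ℝ))^2 := by
    intro p hp
    rw [Finset.mem_filter] at hp
    have hd : (k : ℝ) + 1 ≤ (hammingDist p.1 p.2 : ℝ) := by
      have : k + 1 ≤ hammingDist p.1 p.2 := Nat.not_le.1 hp.2
      exact_mod_cast this
    have h1 : 0 ≤ (k : ℝ) + 1 - c := by rw [hck]; positivity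
    have h2 : (k : ℝ) + 1 - c ≤ (hammingDist p.1 p.2 : ℝ) - c := by linarith
    rw [← hck, show (c - (hammingDist p.1 p.2 : ℝ))^2 = ((hammingDist p.1 p.2 : ℝ) - c)^2 by ring]
    exact pow_le_pow_left₀ h1 h2 2
  have hlow : A * (t + q/t)^2
      ≤ ∑ p ∈ (D ×ˢ D).filter (fun p => ¬ hammingDist p.1 p.2 ≤ k),
        (c - (hammingDist p.1 p.2 : ℝ))^2 := by
    calc A * (t + q/t)^2
        = ∑ _p ∈ (D ×ˢ D).filter (fun p => ¬ hammingDist p.1 p.2 ≤ k), (t + q/t)^2 := by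
          rw [Finset.sum_const, nsmul_eq_mul]
      _ ≤ _ := Finset.sum_le_sum hterm
  have h3 : (D.card : ℝ)^2 * ((c - (n:ℝ)/2)^2 + (n:ℝ)/4) = (D.card : ℝ)^2 * ((q/t)^2 + q) := by
    rw [hcn, ← hqdef]
    ring
  have H : A * (t + q/t)^2 ≤ (D.card : ℝ)^2 * ((q/t)^2 + q) :=
    le_trans (le_trans hlow hsub) (le_of_eq (hid.trans h3))
  have H2 : A * (q + t^2)^2 ≤ (D.card : ℝ)^2 * (q * (q + t^2)) := by
    have hmul := mul_le_mul_of_nonneg_right H (le_of_lt (mul_pos ht ht))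
    have e1 : (t + q/t)^2 * (t * t) = (q + t^2)^2 := by field_simp; ring
    have e2 : ((q/t)^2 + q) * (t * t) = q * (q + t^2) := by field_simp
    calc A * (q + t^2)^2 = A * (t + q/t)^2 * (t*t) := by rw [← e1]; ring
      _ ≤ (D.card : ℝ)^2 * ((q/t)^2 + q) * (t*t) := hmul
      _ = (D.card : ℝ)^2 * (q * (q + t^2)) := by rw [mul_assoc, e2]
  have hpos : 0 < q + t^2 := by positivity
  have goal2 : A * (q + t^2) * (q + t^2) ≤ (D.card : ℝ)^2 * q * (q + t^2) := by
    calc A * (q + t^2) * (q + t^2) = A * (q + t^2)^2 := by ring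
      _ ≤ (D.card : ℝ)^2 * (q * (q + t^2)) := H2
      _ = (D.card : ℝ)^2 * q * (q + t^2) := by ring
  have := le_of_mul_le_mul_right goal2 hpos
  calc A * ((n : ℝ)/4 + ((k : ℝ) + 1 - (n : ℝ)/2)^2) = A * (q + t^2) := by rw [← hqdef, ← htdef]
    _ ≤ (D.card : ℝ)^2 * q := this
    _ = (D.card : ℝ)^2 * ((n : ℝ)/4) := by rw [hqdef]

end Cheb

set_option maxHeartbeats 1000000 in
/-- If `D` is a binary orthogonal array of strength at least 5 with `n` columns, then its
Hamming-distance c.d.f. is uniformly within `2(n−1)/(3n−2)` of the binomial c.d.f. -/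
theorem binary_OA_strength5_cdf_bound (n : ℕ) (hn : 5 ≤ n)
    (D : Finset (Fin n → Fin 2)) (hD : D.Nonempty)
    (hOA : ∀ s : Finset (Fin n), s.card = 5 → ∀ u w : Fin n → Fin 2,
      (D.filter fun x => ∀ i ∈ s, x i = u i).card
        = (D.filter fun x => ∀ i ∈ s, x i = w i).card)
    (FD FX : ℝ → ℝ)
    (hFD : ∀ x : ℝ, FD x =
      ((D ×ˢ D).filter fun p => (hammingDist p.1 p.2 : ℝ) ≤ x).card / (D.card : ℝ) ^ 2)
    (hFX : ∀ x : ℝ, FX x =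
      (∑ i ∈ (Finset.range (n + 1)).filter (fun i : ℕ => (i : ℝ) ≤ x), (n.choose i : ℝ)) / 2 ^ n) :
    ∀ x : ℝ, |FD x - FX x| < 2 * ((n : ℝ) - 1) / (3 * n - 2) := by
  have hM1 := OA_moment1 hn D hOA
  have hM2 := OA_moment2 hn D hOA
  have hN : 0 < D.card := Finset.card_pos.2 hD
  have hNR : (0:ℝ) < (D.card : ℝ)^2 := by
    have : (0:ℝ) < (D.card : ℝ) := by exact_mod_cast hN
    positivity
  have hnR : (5:ℝ) ≤ (n:ℝ) := by exact_mod_cast hn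
  have hden : (0:ℝ) < 3*(n:ℝ) - 2 := by linarith
  have hBpos : (0:ℝ) < 2*((n:ℝ)-1)/(3*(n:ℝ)-2) := div_pos (by linarith) hden
  have h2n : (0:ℝ) < (2:ℝ)^n := by positivity
  set M : ℕ := n.choose (n/2) with hMdef
  set cR : ℝ := (M:ℝ)/2^n with hcRdef
  have hc0 : (0:ℝ) ≤ cR := by positivity
  have hcc : 3*(n:ℝ)*cR^2 ≤ 2 := by
    have h := middle_binom_bound n
    have hcast : 3*(n:ℝ)*(M:ℝ)^2 ≤ 2*(4:ℝ)^n := by exact_mod_cast h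
    have h4 : ((2:ℝ)^n)^2 = 4^n := by
      rw [← pow_mul, mul_comm, pow_mul]; norm_num
    have h4p : (0:ℝ) < (4:ℝ)^n := by positivity
    have heq : 3*(n:ℝ)*cR^2 = (3*(n:ℝ)*(M:ℝ)^2)/4^n := by
      rw [hcRdef, div_pow, h4]; ring
    rw [heq, div_le_iff₀ h4p]
    linarith
  intro x
  rcases lt_or_ge x 0 with hxneg | hx0
  · -- x < 0 : both cdfs are 0
    have hfd : FD x = 0 := by
      rw [hFD x]
      have : (D ×ˢ D).filter (fun p => (hammingDist p.1 p.2 : ℝ) ≤ x) = ∅ := by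
        apply Finset.filter_false_of_mem
        intro p _
        have : (0:ℝ) ≤ (hammingDist p.1 p.2 : ℝ) := Nat.cast_nonneg _
        linarith
      rw [this]; simp
    have hfx : FX x = 0 := by
      rw [hFX x]
      have : (Finset.range (n+1)).filter (fun i : ℕ => (i:ℝ) ≤ x) = ∅ := by
        apply Finset.filter_false_of_mem
        intro i _
        have : (0:ℝ) ≤ (i : ℝ) := Nat.cast_nonneg _
        linarith
      rw [this]; simp
    rw [hfd, hfx]
    simpa using hBpos
  rcases le_or_gt (n:ℝ) x with hxbig | hxn
  · -- x ≥ n : both cdfs are 1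
    have hfd : FD x = 1 := by
      rw [hFD x]
      have : (D ×ˢ D).filter (fun p => (hammingDist p.1 p.2 : ℝ) ≤ x) = D ×ˢ D := by
        apply Finset.filter_true_of_mem
        intro p _
        have h1 : hammingDist p.1 p.2 ≤ n := by
          have := hammingDist_le_card_fintype (x := p.1) (y := p.2)
          simpa using this
        have : (hammingDist p.1 p.2 : ℝ) ≤ (n : ℝ) := by exact_mod_cast h1
        linarith
      rw [this, Finset.card_product]
      have hDpos : (0:ℝ) < (D.card : ℝ) := by exact_mod_cast hN
      push_cast
      rw [sq]
      exact div_self (ne_of_gt (mul_pos hDpos hDpos))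
    have hfx : FX x = 1 := by
      rw [hFX x]
      have : (Finset.range (n+1)).filter (fun i : ℕ => (i:ℝ) ≤ x) = Finset.range (n+1) := by
        apply Finset.filter_true_of_mem
        intro i hi
        rw [Finset.mem_range] at hi
        have : (i:ℝ) ≤ (n:ℝ) := by exact_mod_cast Nat.lt_succ_iff.1 hi
        linarith
      rw [this]
      have hsum : ∑ i ∈ Finset.range (n+1), (n.choose i : ℝ) = (2:ℝ)^n := by
        have := Nat.sum_range_choose n
        exact_mod_cast congrArg (fun v : ℕ => (v:ℝ)) this
      rw [hsum, div_self (ne_of_gt h2n)]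
    rw [hfd, hfx]
    simpa using hBpos
  -- main case : 0 ≤ x < n
  set k : ℕ := ⌊x⌋₊ with hkdef
  have hkx : (k:ℝ) ≤ x := Nat.floor_le hx0
  have hkn : k < n := (Nat.floor_lt hx0).2 hxn
  have hfd : FD x = (((D ×ˢ D).filter fun p => hammingDist p.1 p.2 ≤ k).card : ℝ)
      / (D.card : ℝ)^2 := by
    rw [hFD x]
    have hseteq : (D ×ˢ D).filter (fun p => (hammingDist p.1 p.2 : ℝ) ≤ x)
        = (D ×ˢ D).filter (fun p => hammingDist p.1 p.2 ≤ k) := by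
      apply Finset.filter_congr
      intro p _
      constructor
      · intro h
        exact_mod_cast Nat.le_floor h
      · intro h
        have : (hammingDist p.1 p.2 : ℝ) ≤ (k : ℝ) := by exact_mod_cast h
        linarith
    rw [hseteq]
  have hfx : FX x = ((∑ i ∈ Finset.range (k+1), n.choose i : ℕ) : ℝ) / 2^n := by
    rw [hFX x]
    congr 1
    have hset : (Finset.range (n+1)).filter (fun i : ℕ => (i:ℝ) ≤ x) = Finset.range (k+1) := by
      ext i
      simp only [Finset.mem_filter, Finset.mem_range]
      constructor
      · rintro ⟨-, h2⟩
        have : i ≤ k := Nat.le_floor h2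
        omega
      · intro h
        have hik : i ≤ k := by omega
        have : (i:ℝ) ≤ (k:ℝ) := by exact_mod_cast hik
        exact ⟨by omega, by linarith⟩
    rw [hset]
    push_cast
    rfl
  rw [hfd, hfx]
  by_cases hmid : 2*k < n
  · -- low case
    set S : ℕ := ∑ i ∈ Finset.range (k+1), n.choose i with hSdef
    have hkR : 2*(k:ℝ) + 1 ≤ (n:ℝ) := by exact_mod_cast hmid
    apply key_arith (n:ℝ) ((n:ℝ)/2 - k) _ _ cR hnR (by linarith)
      (by positivity)
    · -- Cantelli
      have hcan := cantelli_low D hM1 hM2 k (by linarith : (k:ℝ) < (n:ℝ)/2)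
      rw [div_mul_eq_mul_div, div_le_iff₀ hNR]
      calc (((D ×ˢ D).filter fun p => hammingDist p.1 p.2 ≤ k).card : ℝ)
            * ((n:ℝ)/4 + ((n:ℝ)/2 - k)^2)
          ≤ (D.card : ℝ)^2 * ((n:ℝ)/4) := hcan
        _ = (n:ℝ)/4 * (D.card : ℝ)^2 := by ring
    · -- FX ≤ 1/2
      have h := choose_head_le n k hmid
      have hcast : 2*(S:ℝ) ≤ (2:ℝ)^n := by exact_mod_cast h
      rw [div_le_iff₀ h2n]
      linarith
    · positivity
    · -- FX lower bound
      have h := choose_head_ge n k hmid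
      have hcast1 : ((n - 1 - 2*k : ℕ) : ℝ) = (n:ℝ) - 1 - 2*(k:ℝ) := by
        have h1 : (2*k ≤ n - 1) := by omega
        rw [Nat.cast_sub h1, Nat.cast_sub (by omega : 1 ≤ n)]
        push_cast
        ring
      have hgnR : (2:ℝ)^n ≤ 2*(S:ℝ) + ((n:ℝ) - 1 - 2*(k:ℝ))*(M:ℝ) := by
        have : ((2:ℕ)^n : ℝ) ≤ ((2 * S + (n - 1 - 2*k) * M : ℕ) : ℝ) := by exact_mod_cast h
        push_cast at this
        rw [hcast1] at this
        linarith
      have hMc : cR * 2^n = (M:ℝ) := by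
        rw [hcRdef]; field_simp
      have hkey : (1:ℝ)/2 - (((n:ℝ)/2 - k) - 1/2) * cR
          = ((2:ℝ)^n - ((n:ℝ) - 1 - 2*(k:ℝ))*(M:ℝ))/(2*2^n) := by
        rw [eq_div_iff (by positivity : (2*(2:ℝ)^n) ≠ 0)]
        linear_combination (-(n:ℝ) + 2*(k:ℝ) + 1) * hMc
      rw [hkey, div_le_div_iff₀ (by positivity) h2n]
      calc ((2:ℝ)^n - ((n:ℝ) - 1 - 2*(k:ℝ))*(M:ℝ)) * 2^n
          ≤ (2*(S:ℝ)) * 2^n := mul_le_mul_of_nonneg_right (by linarith) h2n.le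
        _ = (S:ℝ) * (2*2^n) := by ring
    · exact hc0
    · exact hcc
  · -- high case
    push_neg at hmid
    set k' : ℕ := n - k - 1 with hk'def
    set S : ℕ := ∑ i ∈ Finset.range (k+1), n.choose i with hSdef
    set S' : ℕ := ∑ i ∈ Finset.range (k'+1), n.choose i with hS'def
    set cnt : ℕ := ((D ×ˢ D).filter fun p => hammingDist p.1 p.2 ≤ k).card with hcntdef
    set cnt' : ℕ := ((D ×ˢ D).filter fun p => ¬ hammingDist p.1 p.2 ≤ k).card with hcnt'def
    have hcntsplit : cnt + cnt' = D.card * D.card := by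
      rw [hcntdef, hcnt'def, Finset.card_filter_add_card_filter_not,
        Finset.card_product]
    have hSsplit : S + S' = 2^n := by
      have h := choose_head_tail n k hkn
      rw [hSdef, hS'def, hk'def]
      rw [show n - k - 1 + 1 = n - k by omega]
      exact h
    have habs : |(cnt:ℝ)/(D.card:ℝ)^2 - (S:ℝ)/2^n|
        = |(cnt':ℝ)/(D.card:ℝ)^2 - (S':ℝ)/2^n| := by
      have e1 : (cnt':ℝ)/(D.card:ℝ)^2 = 1 - (cnt:ℝ)/(D.card:ℝ)^2 := by
        have : (cnt:ℝ) + (cnt':ℝ) = (D.card:ℝ)^2 := by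
          have := congrArg (fun v : ℕ => (v:ℝ)) hcntsplit
          push_cast at this
          nlinarith [this]
        field_simp
        linarith
      have e2 : (S':ℝ)/2^n = 1 - (S:ℝ)/2^n := by
        have : (S:ℝ) + (S':ℝ) = (2:ℝ)^n := by
          have := congrArg (fun v : ℕ => (v:ℝ)) hSsplit
          push_cast at this
          linarith [this]
        field_simp
        linarith
      rw [e1, e2, show (1 - (cnt:ℝ)/(D.card:ℝ)^2) - (1 - (S:ℝ)/2^n)
        = (S:ℝ)/2^n - (cnt:ℝ)/(D.card:ℝ)^2 by ring, abs_sub_comm]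
    rw [habs]
    have hk'mid : 2*k' < n := by omega
    have hkR : (n:ℝ) ≤ 2*(k:ℝ) := by exact_mod_cast hmid
    apply key_arith (n:ℝ) ((k:ℝ) + 1 - (n:ℝ)/2) _ _ cR hnR (by linarith)
      (by positivity)
    · -- Cantelli high
      have hcan := cantelli_high D hM1 hM2 k (by linarith : (n:ℝ)/2 < (k:ℝ)+1)
      rw [div_mul_eq_mul_div, div_le_iff₀ hNR]
      calc (cnt' : ℝ) * ((n:ℝ)/4 + ((k:ℝ) + 1 - (n:ℝ)/2)^2)
          ≤ (D.card : ℝ)^2 * ((n:ℝ)/4) := hcan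
        _ = (n:ℝ)/4 * (D.card : ℝ)^2 := by ring
    · -- FX' ≤ 1/2
      have h := choose_head_le n k' hk'mid
      have hcast : 2*(S':ℝ) ≤ (2:ℝ)^n := by exact_mod_cast h
      rw [div_le_iff₀ h2n]
      linarith
    · positivity
    · -- FX' lower bound
      have h := choose_head_ge n k' hk'mid
      have hk'R : (k' : ℝ) = (n:ℝ) - (k:ℝ) - 1 := by
        rw [hk'def, Nat.cast_sub (by omega : 1 ≤ n - k), Nat.cast_sub (le_of_lt hkn)]
        ring
      have hcast1 : ((n - 1 - 2*k' : ℕ) : ℝ) = (n:ℝ) - 1 - 2*(k':ℝ) := by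
        have h1 : (2*k' ≤ n - 1) := by omega
        rw [Nat.cast_sub h1, Nat.cast_sub (by omega : 1 ≤ n)]
        push_cast
        ring
      have hgnR : (2:ℝ)^n ≤ 2*(S':ℝ) + ((n:ℝ) - 1 - 2*(k':ℝ))*(M:ℝ) := by
        have : ((2:ℕ)^n : ℝ) ≤ ((2 * S' + (n - 1 - 2*k') * M : ℕ) : ℝ) := by exact_mod_cast h
        push_cast at this
        rw [hcast1] at this
        linarith
      have hMc : cR * 2^n = (M:ℝ) := by
        rw [hcRdef]; field_simp
      have hkey : (1:ℝ)/2 - (((k:ℝ) + 1 - (n:ℝ)/2) - 1/2) * cR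
          = ((2:ℝ)^n - ((n:ℝ) - 1 - 2*(k':ℝ))*(M:ℝ))/(2*2^n) := by
        rw [hk'R, eq_div_iff (by positivity : (2*(2:ℝ)^n) ≠ 0)]
        linear_combination ((n:ℝ) - 2*(k:ℝ) - 1) * hMc
      rw [hkey, div_le_div_iff₀ (by positivity) h2n]
      calc ((2:ℝ)^n - ((n:ℝ) - 1 - 2*(k':ℝ))*(M:ℝ)) * 2^n
          ≤ (2*(S':ℝ)) * 2^n := mul_le_mul_of_nonneg_right (by linarith) h2n.le
        _ = (S':ℝ) * (2*2^n) := by ring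
    · exact hc0
    · exact hcc
end

section
/- If D is a 2-transitive permutation group on n letters, then the c.d.f. G_D(x) of the number of fixed points of a uniformly random element of D satisfies |G_D(x) − P(x)| < n/(n + (1−x)²) for all x, where P is the c.d.f. of the Poisson distribution with parameter 1. -/
def numFixedPoints {n : ℕ} (ν : Equiv.Perm (Fin n)) : ℕ :=
  (Finset.univ.filter fun i => ν i = i).card

open Finset

section aux

def pairEmb {n : ℕ} (i j : Fin n) (h : i ≠ j) : Fin 2 ↪ Fin n :=
  ⟨![i, j], by intro a b hab; fin_cases a <;> fin_cases b <;> simp_all⟩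

@[simp] lemma pairEmb_zero {n : ℕ} (i j : Fin n) (h : i ≠ j) : pairEmb i j h 0 = i := rfl
@[simp] lemma pairEmb_one {n : ℕ} (i j : Fin n) (h : i ≠ j) : pairEmb i j h 1 = j := rfl

variable {n : ℕ} (D : Subgroup (Equiv.Perm (Fin n))) [DecidablePred (· ∈ D)]

lemma fiber_card_eq (τ : Equiv.Perm (Fin n)) (hτ : τ ∈ D) (p q : Equiv.Perm (Fin n) → Prop)
    [DecidablePred p] [DecidablePred q] (hpq : ∀ σ ∈ D, (p σ ↔ q (τ * σ))) :
    (univ.filter fun σ => σ ∈ D ∧ p σ).card = (univ.filter fun σ => σ ∈ D ∧ q σ).card := by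
  apply Finset.card_bij' (fun σ _ => τ * σ) (fun σ _ => τ⁻¹ * σ)
  · intro σ hσ
    simp only [mem_filter, mem_univ, true_and] at hσ ⊢
    exact ⟨D.mul_mem hτ hσ.1, (hpq σ hσ.1).1 hσ.2⟩
  · intro σ hσ
    simp only [mem_filter, mem_univ, true_and] at hσ ⊢
    have h1 : τ⁻¹ * σ ∈ D := D.mul_mem (D.inv_mem hτ) hσ.1
    refine ⟨h1, (hpq _ h1).2 ?_⟩
    simpa [mul_assoc] using hσ.2
  · intro σ _; group
  · intro σ _; group

variable (htrans : ∀ a b : Fin 2 ↪ Fin n, ∃ σ ∈ D, ∀ j : Fin 2, σ (a j) = b j)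

include htrans in
lemma two_pt (i j a b : Fin n) (hij : i ≠ j) (hab : a ≠ b) :
    ∃ σ ∈ D, σ i = a ∧ σ j = b := by
  obtain ⟨σ, hσD, hσ⟩ := htrans (pairEmb i j hij) (pairEmb a b hab)
  exact ⟨σ, hσD, hσ 0, hσ 1⟩

include htrans in
lemma one_pt (hn : 2 ≤ n) (i a : Fin n) : ∃ σ ∈ D, σ i = a := by
  haveI : Nontrivial (Fin n) := Fin.nontrivial_iff_two_le.mpr hn
  obtain ⟨j, hj⟩ := exists_ne i
  obtain ⟨b, hb⟩ := exists_ne a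
  obtain ⟨σ, h1, h2, _⟩ := two_pt D htrans i j a b hj.symm hb.symm
  exact ⟨σ, h1, h2⟩

include htrans in
lemma one_pt_count (hn : 2 ≤ n) (i : Fin n) :
    n * (univ.filter fun σ => σ ∈ D ∧ σ i = i).card = (univ.filter (· ∈ D)).card := by
  have h : (univ.filter (· ∈ D)).card
      = ∑ a : Fin n, ((univ.filter (· ∈ D)).filter fun σ => σ i = a).card :=
    Finset.card_eq_sum_card_fiberwise (fun σ _ => mem_univ _)
  rw [h]
  have key : ∀ a : Fin n,
      ((univ.filter (· ∈ D)).filter fun σ => σ i = a).card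
        = (univ.filter fun σ => σ ∈ D ∧ σ i = i).card := by
    intro a
    obtain ⟨τ, hτD, hτ⟩ := one_pt D htrans hn a i
    rw [filter_filter]
    exact fiber_card_eq D τ hτD _ _ (fun σ hσ => by
      constructor
      · intro h'; simp [Equiv.Perm.mul_apply, h', hτ]
      · intro h'; simp only [Equiv.Perm.mul_apply] at h'
        have := congrArg τ.symm h'
        simpa [hτ] using (τ.injective (by rw [h', hτ])))
  rw [Finset.sum_congr rfl (fun a _ => key a)]
  simp [mul_comm]

include htrans in
lemma two_pt_count (hn : 2 ≤ n) (i j : Fin n) (hij : i ≠ j) :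
    (n * (n-1)) * (univ.filter fun σ => σ ∈ D ∧ (σ i = i ∧ σ j = j)).card
      = (univ.filter (· ∈ D)).card := by
  have h : (univ.filter (· ∈ D)).card
      = ∑ p : Fin n × Fin n, ((univ.filter (· ∈ D)).filter fun σ => (σ i, σ j) = p).card :=
    Finset.card_eq_sum_card_fiberwise (fun σ _ => mem_univ _)
  rw [h]
  have key : ∀ p : Fin n × Fin n,
      ((univ.filter (· ∈ D)).filter fun σ => (σ i, σ j) = p).card
        = if p.1 = p.2 then 0
          else (univ.filter fun σ => σ ∈ D ∧ (σ i = i ∧ σ j = j)).card := by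
    rintro ⟨a, b⟩
    by_cases hab : a = b
    · subst hab
      rw [if_pos rfl, Finset.card_eq_zero, Finset.eq_empty_iff_forall_notMem]
      rintro σ hσ
      simp only [mem_filter, Prod.mk.injEq] at hσ
      exact hij (σ.injective (by rw [hσ.2.1, hσ.2.2]))
    · rw [if_neg hab, filter_filter]
      obtain ⟨τ, hτD, hτ1, hτ2⟩ := two_pt D htrans a b i j hab hij
      apply fiber_card_eq D τ hτD
      intro σ hσ
      simp only [Equiv.Perm.mul_apply, Prod.mk.injEq]
      constructor
      · rintro ⟨h1, h2⟩; rw [h1, h2, hτ1, hτ2]; exact ⟨rfl, rfl⟩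
      · rintro ⟨h1, h2⟩
        constructor
        · apply τ.injective; rw [h1, hτ1]
        · apply τ.injective; rw [h2, hτ2]
  rw [Finset.sum_congr rfl fun p _ => key p, Finset.sum_ite, Finset.sum_const,
    Finset.sum_const, smul_eq_mul, smul_eq_mul, mul_zero, zero_add]
  congr 1
  have : (univ.filter fun p : Fin n × Fin n => ¬p.1 = p.2) = (univ : Finset (Fin n)).offDiag := by
    ext q; simp [Finset.mem_offDiag]
  rw [this, Finset.offDiag_card]
  simp [Nat.mul_sub, Finset.card_univ]

include htrans in
lemma moment_one (hn : 2 ≤ n) :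
    ∑ σ ∈ univ.filter (· ∈ D), numFixedPoints σ = (univ.filter (· ∈ D)).card := by
  apply Nat.eq_of_mul_eq_mul_left (show 0 < n by omega)
  have h1 : ∑ σ ∈ univ.filter (· ∈ D), numFixedPoints σ
      = ∑ i : Fin n, ((univ.filter (· ∈ D)).filter fun σ => σ i = i).card := by
    simp only [numFixedPoints, Finset.card_filter]
    exact Finset.sum_comm
  rw [h1, Finset.mul_sum]
  have h2 : ∀ i : Fin n, n * ((univ.filter (· ∈ D)).filter fun σ => σ i = i).card
      = (univ.filter (· ∈ D)).card := by
    intro i; rw [filter_filter]; exact one_pt_count D htrans hn i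
  rw [Finset.sum_congr rfl fun i _ => h2 i]
  simp [mul_comm]

include htrans in
lemma moment_two (hn : 2 ≤ n) :
    ∑ σ ∈ univ.filter (· ∈ D), (numFixedPoints σ)^2 = 2 * (univ.filter (· ∈ D)).card := by
  have hn1 : 0 < n * (n-1) := by
    have : 1 ≤ n - 1 := by omega
    exact Nat.mul_pos (by omega) this
  apply Nat.eq_of_mul_eq_mul_left hn1
  have h1 : ∑ σ ∈ univ.filter (· ∈ D), (numFixedPoints σ)^2
      = ∑ p : Fin n × Fin n,
          ((univ.filter (· ∈ D)).filter fun σ => σ p.1 = p.1 ∧ σ p.2 = p.2).card := by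
    have : ∀ σ : Equiv.Perm (Fin n), (numFixedPoints σ)^2
        = ∑ p : Fin n × Fin n, if σ p.1 = p.1 ∧ σ p.2 = p.2 then 1 else 0 := by
      intro σ
      rw [sq, numFixedPoints, Finset.card_filter, Finset.sum_mul_sum, Fintype.sum_prod_type]
      apply Finset.sum_congr rfl; intro i _
      apply Finset.sum_congr rfl; intro j _
      by_cases h1 : σ i = i <;> by_cases h2 : σ j = j <;> simp [h1, h2]
    simp only [this, Finset.card_filter]
    exact Finset.sum_comm
  rw [h1, ← Finset.sum_filter_add_sum_filter_not univ (fun p : Fin n × Fin n => p.1 = p.2)]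
  rw [Nat.mul_add]
  have hdiag : ∀ p : Fin n × Fin n, p.1 = p.2 →
      ((univ.filter (· ∈ D)).filter fun σ => σ p.1 = p.1 ∧ σ p.2 = p.2).card
        = ((univ.filter (· ∈ D)).filter fun σ => σ p.1 = p.1).card := by
    rintro ⟨a, b⟩ h; simp only at h; subst h; simp
  have hA : (n * (n-1)) * ∑ p ∈ univ.filter (fun p : Fin n × Fin n => p.1 = p.2),
      ((univ.filter (· ∈ D)).filter fun σ => σ p.1 = p.1 ∧ σ p.2 = p.2).card
        = (n * (n-1)) * (univ.filter (· ∈ D)).card := by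
    rw [Finset.sum_congr rfl fun p hp => hdiag p (by simpa using (mem_filter.mp hp).2)]
    rw [mul_comm n (n-1), mul_assoc, mul_assoc]
    congr 1
    rw [Finset.mul_sum]
    have : ∀ p ∈ univ.filter (fun p : Fin n × Fin n => p.1 = p.2),
        n * ((univ.filter (· ∈ D)).filter fun σ => σ p.1 = p.1).card
          = (univ.filter (· ∈ D)).card := by
      intro p _; rw [filter_filter]; exact one_pt_count D htrans hn p.1
    rw [Finset.sum_congr rfl this, Finset.sum_const, smul_eq_mul]
    congr 1
    have : (univ.filter fun p : Fin n × Fin n => p.1 = p.2) = (univ : Finset (Fin n)).diag := by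
      ext q; simp [Finset.mem_diag]
    rw [this, Finset.diag_card, Finset.card_univ, Fintype.card_fin]
  have hB : (n * (n-1)) * ∑ p ∈ univ.filter (fun p : Fin n × Fin n => ¬p.1 = p.2),
      ((univ.filter (· ∈ D)).filter fun σ => σ p.1 = p.1 ∧ σ p.2 = p.2).card
        = (n * (n-1)) * (univ.filter (· ∈ D)).card := by
    rw [Finset.mul_sum]
    have : ∀ p ∈ univ.filter (fun p : Fin n × Fin n => ¬p.1 = p.2),
        (n * (n-1)) * ((univ.filter (· ∈ D)).filter fun σ => σ p.1 = p.1 ∧ σ p.2 = p.2).card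
          = (univ.filter (· ∈ D)).card := by
      intro p hp
      rw [filter_filter]
      exact two_pt_count D htrans hn p.1 p.2 (by simpa using (mem_filter.mp hp).2)
    rw [Finset.sum_congr rfl this, Finset.sum_const, smul_eq_mul]
    have : (univ.filter fun p : Fin n × Fin n => ¬p.1 = p.2)
        = (univ : Finset (Fin n)).offDiag := by
      ext q; simp [Finset.mem_offDiag]
    rw [this, Finset.offDiag_card, Finset.card_univ, Fintype.card_fin, Nat.mul_sub, mul_comm]
    simp [mul_comm]
  rw [hA, hB]
  ring

end aux

lemma cantelli_finset {α : Type*} (s : Finset α) (f : α → ℕ) (p : α → Prop)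
    [DecidablePred p]
    (h1 : ∑ a ∈ s, (f a : ℝ) = s.card) (h2 : ∑ a ∈ s, ((f a : ℝ))^2 = 2*s.card)
    (t : ℝ) (ht : 0 < t) (c : ℝ) (hc : (1 - c)^2 = (1/t)^2)
    (hp : ∀ a ∈ s, p a → (t + 1/t)^2 ≤ ((f a : ℝ) - c)^2) :
    ((s.filter p).card : ℝ) ≤ s.card / (1 + t^2) := by
  set u := 1/t with hu'
  have hu : 0 < u := by positivity
  have hsum : ∑ a ∈ s, ((f a : ℝ) - c)^2 = s.card * (1 + u^2) := by
    have e0 : ∀ a ∈ s, ((f a:ℝ)-c)^2 = ((f a:ℝ)^2 - 2*c*(f a:ℝ)) + c^2 := fun a _ => by ring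
    rw [Finset.sum_congr rfl e0, Finset.sum_add_distrib, Finset.sum_sub_distrib,
      ← Finset.mul_sum, h1, h2, Finset.sum_const, nsmul_eq_mul]
    linear_combination (s.card : ℝ) * hc
  have hcard : ((s.filter p).card : ℝ) * (t+u)^2 ≤ s.card * (1 + u^2) := by
    rw [← hsum]
    calc ((s.filter p).card : ℝ) * (t+u)^2
        = ∑ _a ∈ s.filter p, (t+u)^2 := by rw [Finset.sum_const, nsmul_eq_mul]
      _ ≤ ∑ a ∈ s.filter p, ((f a:ℝ) - c)^2 :=
          Finset.sum_le_sum (fun a ha =>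
            hp a (Finset.mem_filter.mp ha).1 (Finset.mem_filter.mp ha).2)
      _ ≤ ∑ a ∈ s, ((f a:ℝ)-c)^2 :=
          Finset.sum_le_sum_of_subset_of_nonneg (Finset.filter_subset _ _)
            (fun a _ _ => sq_nonneg _)
  have hut : u * t = 1 := by rw [hu']; exact one_div_mul_cancel ht.ne'
  have hexp : (t+u)^2 = (1+u^2)*(1+t^2) := by nlinarith [hut]
  rw [hexp] at hcard
  rw [le_div_iff₀ (by positivity : (0:ℝ) < 1+t^2)]
  nlinarith [hcard, sq_nonneg u]

lemma summable_inv_fact : Summable fun i : ℕ => (1:ℝ)/ i.factorial := by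
  simpa using Real.summable_pow_div_factorial 1

lemma tsum_inv_fact : ∑' i : ℕ, (1:ℝ)/ i.factorial = Real.exp 1 := by
  rw [Real.exp_eq_exp_ℝ, NormedSpace.exp_eq_tsum_div]
  simp

lemma fact_two_pow_le (m j : ℕ) : (m+1).factorial * 2^j ≤ (j+m+1).factorial := by
  induction j with
  | zero => simp
  | succ k ih =>
    have : (k+1+m+1).factorial = (k+m+2) * (k+m+1).factorial := by
      rw [show k+1+m+1 = (k+m+1)+1 by ring, Nat.factorial_succ]
    rw [this, pow_succ]
    calc (m+1).factorial * (2^k * 2) = 2 * ((m+1).factorial * 2^k) := by ring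
      _ ≤ 2 * (k+m+1).factorial := by omega
      _ ≤ (k+m+2) * (k+m+1).factorial := Nat.mul_le_mul_right _ (by omega)

lemma one_add_sq_le_fact (m : ℕ) : 1 + m^2 ≤ (m+1).factorial := by
  induction m with
  | zero => simp
  | succ k ih =>
    rw [Nat.factorial_succ]
    nlinarith [Nat.one_le_iff_ne_zero.mpr (Nat.factorial_ne_zero (k+1))]

lemma poisson_tail (x : ℝ) (hx : 1 < x) :
    Real.exp 1 - (∑' i : ℕ, if (i:ℝ) ≤ x then (1:ℝ)/ i.factorial else 0)
      ≤ 2 / ((⌊x⌋₊ + 1).factorial : ℝ) := by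
  set m := ⌊x⌋₊ with hm
  have hx0 : 0 ≤ x := by linarith
  have hmx : (m:ℝ) ≤ x := Nat.floor_le hx0
  have hxm : x < m + 1 := Nat.lt_floor_add_one x
  set f : ℕ → ℝ := fun i => if (i:ℝ) ≤ x then (1:ℝ)/ i.factorial else 0 with hf
  set g : ℕ → ℝ := fun i => if (i:ℝ) ≤ x then 0 else (1:ℝ)/ i.factorial with hg
  have hfg : ∀ i, f i + g i = 1 / i.factorial := by
    intro i; by_cases h : (i:ℝ) ≤ x <;> simp [hf, hg, h]
  have hsf : Summable f := by
    apply Summable.of_nonneg_of_le _ _ summable_inv_fact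
    · intro i; by_cases h : (i:ℝ) ≤ x <;> simp [hf, h] <;> positivity
    · intro i; by_cases h : (i:ℝ) ≤ x <;> simp [hf, h] <;> positivity
  have hsg : Summable g := by
    apply Summable.of_nonneg_of_le _ _ summable_inv_fact
    · intro i; by_cases h : (i:ℝ) ≤ x <;> simp [hg, h] <;> positivity
    · intro i; by_cases h : (i:ℝ) ≤ x <;> simp [hg, h] <;> positivity
  have key : Real.exp 1 - ∑' i, f i = ∑' i, g i := by
    have h' : ∑' i : ℕ, (1:ℝ)/ i.factorial = (∑' i, f i) + ∑' i, g i := by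
      rw [← Summable.tsum_add hsf hsg]; exact tsum_congr (fun i => (hfg i).symm)
    rw [← tsum_inv_fact, h']; ring
  rw [key]
  have hg0 : ∀ i ∈ Finset.range (m+1), g i = 0 := by
    intro i hi
    have : (i:ℝ) ≤ m := by exact_mod_cast Nat.le_of_lt_succ (Finset.mem_range.mp hi)
    simp [hg, this.trans hmx]
  have hshift : ∑' i, g i = ∑' j, g (j + (m+1)) := by
    rw [← Summable.sum_add_tsum_nat_add (m+1) hsg, Finset.sum_eq_zero hg0, zero_add]
  have hgs : ∀ j : ℕ, g (j + (m+1)) = 1 / ((j + (m+1)).factorial : ℝ) := by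
    intro j
    have hlt : ¬ ((j + (m+1) : ℕ) : ℝ) ≤ x := by
      push_neg
      calc x < m + 1 := hxm
        _ ≤ ((j + (m+1) : ℕ) : ℝ) := by push_cast; linarith [Nat.cast_nonneg (α := ℝ) j]
    simp only [hg]; rw [if_neg hlt]
  have hbound : ∀ j : ℕ, g (j + (m+1)) ≤ (1/((m+1).factorial : ℝ)) * (1/2)^j := by
    intro j
    rw [hgs j]
    have h2 : ((m+1).factorial * 2^j : ℕ) ≤ (j+(m+1)).factorial := fact_two_pow_le m j
    calc (1:ℝ)/((j+(m+1)).factorial : ℝ) ≤ 1/(((m+1).factorial * 2^j : ℕ):ℝ) :=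
          one_div_le_one_div_of_le (by positivity) (by exact_mod_cast h2)
      _ = (1/((m+1).factorial : ℝ)) * (1/2)^j := by push_cast; rw [one_div_pow]; ring
  have hsgeo : Summable fun j : ℕ => (1/((m+1).factorial : ℝ)) * (1/2)^j :=
    (summable_geometric_of_lt_one (by norm_num) (by norm_num)).mul_left _
  calc ∑' i, g i = ∑' j, g (j + (m+1)) := hshift
    _ ≤ ∑' j, (1/((m+1).factorial : ℝ)) * (1/2)^j := by
        apply Summable.tsum_le_tsum hbound _ hsgeo
        exact (summable_nat_add_iff (m+1)).mpr hsg
    _ = 2 / ((m+1).factorial : ℝ) := by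
        rw [tsum_mul_left, tsum_geometric_of_lt_one (by norm_num) (by norm_num)]
        norm_num
        ring

set_option maxHeartbeats 2000000 in
/-- For a 2-transitive permutation group `D` on `n` letters, the c.d.f. of the number of
fixed points of a uniform random element of `D` is within `n/(n + (1−x)²)` of the c.d.f.
of the Poisson distribution with parameter 1. -/
theorem two_transitive_fixed_points_cdf_bound (n : ℕ) (hn : 2 ≤ n)
    (D : Subgroup (Equiv.Perm (Fin n))) [DecidablePred (· ∈ D)]
    (htrans : ∀ a b : Fin 2 ↪ Fin n, ∃ σ ∈ D, ∀ j : Fin 2, σ (a j) = b j)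
    (GD P : ℝ → ℝ)
    (hGD : ∀ x : ℝ, GD x =
      ((Finset.univ.filter fun σ : Equiv.Perm (Fin n) =>
          σ ∈ D ∧ (numFixedPoints σ : ℝ) ≤ x).card : ℝ) / (Nat.card D : ℝ))
    (hP : ∀ x : ℝ, P x =
      Real.exp (-1) * ∑' i : ℕ, if (i : ℝ) ≤ x then (1 : ℝ) / i.factorial else 0) :
    ∀ x : ℝ, |GD x - P x| < (n : ℝ) / (n + (1 - x) ^ 2) := by
  intro x
  set DF := (univ.filter (· ∈ D)) with hDF
  have hND : (Nat.card D : ℝ) = (DF.card : ℝ) := by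
    norm_cast
    rw [Nat.card_eq_fintype_card, Fintype.card_subtype]
  have hN0 : 0 < DF.card := Finset.card_pos.mpr ⟨1, by simp [hDF, D.one_mem]⟩
  have hN0' : (0:ℝ) < DF.card := by exact_mod_cast hN0
  have hm1 : ∑ σ ∈ DF, (numFixedPoints σ : ℝ) = DF.card := by
    exact_mod_cast congrArg (Nat.cast (R := ℝ)) (moment_one D htrans hn)
  have hm2 : ∑ σ ∈ DF, ((numFixedPoints σ : ℝ))^2 = 2 * DF.card := by
    exact_mod_cast congrArg (Nat.cast (R := ℝ)) (moment_two D htrans hn)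
  have hGDx : GD x
      = ((DF.filter fun σ => (numFixedPoints σ : ℝ) ≤ x).card : ℝ) / DF.card := by
    rw [hGD x, hND, hDF, Finset.filter_filter]
  have hn2 : (2:ℝ) ≤ n := by exact_mod_cast hn
  have hG0 : 0 ≤ GD x := by rw [hGDx]; positivity
  have hG1 : GD x ≤ 1 := by
    rw [hGDx, div_le_one hN0']
    exact_mod_cast Finset.card_filter_le _ _
  have hPf0 : ∀ i : ℕ, 0 ≤ (if (i:ℝ) ≤ x then (1:ℝ)/ i.factorial else 0) := by
    intro i; by_cases h : (i:ℝ) ≤ x <;> simp [h] <;> positivity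
  have hPfle : ∀ i : ℕ, (if (i:ℝ) ≤ x then (1:ℝ)/ i.factorial else 0) ≤ 1/ i.factorial := by
    intro i; by_cases h : (i:ℝ) ≤ x <;> simp [h] <;> positivity
  have hPsum : Summable (fun i : ℕ => if (i:ℝ) ≤ x then (1:ℝ)/ i.factorial else 0) :=
    Summable.of_nonneg_of_le hPf0 hPfle summable_inv_fact
  have hP0 : 0 ≤ P x := by
    rw [hP x]
    exact mul_nonneg (Real.exp_nonneg _) (tsum_nonneg hPf0)
  have hP1 : P x ≤ 1 := by
    rw [hP x]
    have h' : (∑' i : ℕ, if (i:ℝ) ≤ x then (1:ℝ)/ i.factorial else 0) ≤ Real.exp 1 := by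
      rw [← tsum_inv_fact]; exact Summable.tsum_le_tsum hPfle hPsum summable_inv_fact
    calc Real.exp (-1) * (∑' i : ℕ, if (i:ℝ) ≤ x then (1:ℝ)/ i.factorial else 0)
        ≤ Real.exp (-1) * Real.exp 1 := by
          exact mul_le_mul_of_nonneg_left h' (Real.exp_nonneg _)
      _ = 1 := by rw [← Real.exp_add]; norm_num
  have hexp2 : (2:ℝ) < Real.exp 1 :=
    lt_trans (by norm_num) Real.exp_one_gt_d9
  have final : ∀ t : ℝ, 0 < t → (1-x)^2 = t^2 → |GD x - P x| ≤ 1/(1+t^2) →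
      |GD x - P x| < (n:ℝ)/((n:ℝ) + (1-x)^2) := by
    intro t ht hsq habs
    rw [hsq]
    refine lt_of_le_of_lt habs ?_
    rw [div_lt_div_iff₀ (by positivity) (by positivity)]
    nlinarith [mul_pos (mul_pos ht ht) (by linarith : (0:ℝ) < (n:ℝ) - 1)]
  rcases lt_trichotomy x 1 with hx | hx | hx
  · -- x < 1
    set t := 1 - x with hts
    have ht : 0 < t := by linarith
    have hu : 0 < 1/t := by positivity
    apply final t ht (by ring)
    have hGb : GD x ≤ 1/(1+t^2) := by
      rw [hGDx]
      have hcant := cantelli_finset DF numFixedPoints (fun σ => (numFixedPoints σ : ℝ) ≤ x)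
        hm1 hm2 t ht (1 + 1/t) (by ring)
        (by
          intro a _ ha
          nlinarith [mul_nonneg (by linarith : (0:ℝ) ≤ x - (numFixedPoints a : ℝ))
            (by linarith : (0:ℝ) ≤ (1 + 1/t - (numFixedPoints a : ℝ)) + (t + 1/t))])
      calc ((DF.filter fun σ => (numFixedPoints σ : ℝ) ≤ x).card : ℝ) / DF.card
          ≤ ((DF.card : ℝ) / (1+t^2)) / DF.card := by gcongr
        _ = 1/(1+t^2) := by
            rw [div_div, mul_comm, ← div_div, div_self hN0'.ne']
    have hPb : P x ≤ 1/(1+t^2) := by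
      rcases lt_or_ge x 0 with hx0 | hx0
      · have hz : P x = 0 := by
          rw [hP x]
          have h0 : ∀ i : ℕ, (if (i:ℝ) ≤ x then (1:ℝ)/ i.factorial else 0) = 0 := by
            intro i
            rw [if_neg]
            push_neg
            exact lt_of_lt_of_le hx0 (Nat.cast_nonneg i)
          rw [tsum_congr h0, tsum_zero, mul_zero]
        rw [hz]; positivity
      · have htle : t ≤ 1 := by rw [hts]; linarith
        have hc : P x = Real.exp (-1) := by
          rw [hP x]
          have h0 : (∑' i : ℕ, if (i:ℝ) ≤ x then (1:ℝ)/ i.factorial else 0) = 1 := by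
            rw [tsum_eq_single 0]
            · simp [hx0]
            · intro i hi
              rw [if_neg]
              push_neg
              have h1i : (1:ℝ) ≤ i := by exact_mod_cast Nat.one_le_iff_ne_zero.mpr hi
              linarith
          rw [h0, mul_one]
        rw [hc, Real.exp_neg, inv_eq_one_div, div_le_div_iff₀ (Real.exp_pos 1) (by positivity)]
        nlinarith
    rw [abs_sub_le_iff]
    constructor <;> linarith
  · -- x = 1
    subst hx
    have hPv : P 1 = Real.exp (-1) * 2 := by
      rw [hP 1]
      congr 1
      rw [tsum_eq_sum (s := ({0, 1} : Finset ℕ)) ?_]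
      · rw [Finset.sum_pair (by norm_num)]
        norm_num
      · intro i hi
        rw [if_neg]
        push_neg
        have h2i : (2:ℕ) ≤ i := by
          simp only [Finset.mem_insert, Finset.mem_singleton] at hi
          omega
        have : (2:ℝ) ≤ i := by exact_mod_cast h2i
        linarith
    have hlt1 : Real.exp (-1) * 2 < 1 := by
      rw [Real.exp_neg]
      have := Real.exp_pos 1
      rw [inv_mul_eq_div, div_lt_one this]
      linarith
    have hgt0 : 0 < Real.exp (-1) * 2 := by positivity
    have hrhs : ((n:ℝ))/((n:ℝ) + (1-1)^2) = 1 := by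
      rw [show ((1:ℝ)-1)^2 = 0 by norm_num, add_zero, div_self (by linarith : ((n:ℝ)) ≠ 0)]
    rw [hrhs, hPv, abs_lt]
    constructor <;> linarith
  · -- 1 < x
    set t := x - 1 with hts
    have ht : 0 < t := by linarith
    have hu : 0 < 1/t := by positivity
    apply final t ht (by ring)
    have hGb : 1 - GD x ≤ 1/(1+t^2) := by
      have hcompl := Finset.card_filter_add_card_filter_not
        (s := DF) (p := fun σ => (numFixedPoints σ : ℝ) ≤ x)
      have hcomplR : ((DF.filter fun σ => (numFixedPoints σ : ℝ) ≤ x).card : ℝ)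
          + ((DF.filter fun σ => ¬((numFixedPoints σ : ℝ) ≤ x)).card : ℝ) = DF.card := by
        exact_mod_cast hcompl
      have hcant := cantelli_finset DF numFixedPoints (fun σ => ¬((numFixedPoints σ : ℝ) ≤ x))
        hm1 hm2 t ht (1 - 1/t) (by ring)
        (by
          intro a _ ha
          push_neg at ha
          nlinarith [mul_nonneg (by linarith : (0:ℝ) ≤ (numFixedPoints a : ℝ) - x)
            (by linarith : (0:ℝ) ≤ ((numFixedPoints a : ℝ) - (1 - 1/t)) + (t + 1/t))])
      have h1G : 1 - GD x
          = ((DF.filter fun σ => ¬((numFixedPoints σ : ℝ) ≤ x)).card : ℝ) / DF.card := by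
        rw [hGDx, eq_div_iff hN0'.ne', sub_mul, one_mul, div_mul_cancel₀ _ hN0'.ne']
        linarith
      rw [h1G]
      calc ((DF.filter fun σ => ¬((numFixedPoints σ : ℝ) ≤ x)).card : ℝ) / DF.card
          ≤ ((DF.card : ℝ) / (1+t^2)) / DF.card := by gcongr
        _ = 1/(1+t^2) := by
            rw [div_div, mul_comm, ← div_div, div_self hN0'.ne']
    have hPb : 1 - P x ≤ 1/(1+t^2) := by
      set m := ⌊x⌋₊ with hm
      have hm1' : 1 ≤ m := Nat.le_floor (by exact_mod_cast hx.le)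
      have hxm : x < m + 1 := Nat.lt_floor_add_one x
      have htm : t < m := by
        rw [hts]
        have : (1:ℝ) ≤ m := by exact_mod_cast hm1'
        linarith
      have htail := poisson_tail x hx
      have hK0 : (0:ℝ) < ((m+1).factorial : ℝ) := by
        exact_mod_cast Nat.factorial_pos (m+1)
      have hfac : (1 + (m:ℝ)^2) ≤ ((m+1).factorial : ℝ) := by
        exact_mod_cast one_add_sq_le_fact m
      have hstep : 1 - P x ≤ Real.exp (-1) * (2 / ((m+1).factorial : ℝ)) := by
        rw [hP x]
        have hee : Real.exp (-1) * Real.exp 1 = 1 := by rw [← Real.exp_add]; norm_num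
        calc 1 - Real.exp (-1) * (∑' i : ℕ, if (i:ℝ) ≤ x then (1:ℝ)/ i.factorial else 0)
            = Real.exp (-1) * (Real.exp 1
                - (∑' i : ℕ, if (i:ℝ) ≤ x then (1:ℝ)/ i.factorial else 0)) := by
              rw [mul_sub, hee]
          _ ≤ Real.exp (-1) * (2 / ((m+1).factorial : ℝ)) :=
              mul_le_mul_of_nonneg_left htail (Real.exp_nonneg _)
      refine hstep.trans ?_
      rw [Real.exp_neg]
      have heq : (Real.exp 1)⁻¹ * (2 / ((m+1).factorial : ℝ))
          = 2 / (Real.exp 1 * ((m+1).factorial : ℝ)) := by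
        field_simp
      rw [heq, div_le_div_iff₀ (by positivity) (by positivity)]
      nlinarith [mul_nonneg (by linarith : (0:ℝ) ≤ (m:ℝ) - t) (by linarith : (0:ℝ) ≤ (m:ℝ) + t),
        mul_nonneg (by linarith : (0:ℝ) ≤ Real.exp 1 - 2) hK0.le]
    rw [abs_sub_le_iff]
    constructor <;> linarith
end
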